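/- arXiv:1604.03400 — 9 statements merged into one kernel-verified Lean document; each statement's English description precedes it below -/
import Mathlib

section
/- Finite-difference consistency estimate for the first difference quotient: Let a < b be real numbers and let v : ℝ → ℝ be twice continuously differentiable on [a,b]. Then for every x ∈ [a,b], |(v(b) − v(a))/(b − a) − v'(x)| ≤ √(2/3) · (b − a)^{1/2} · (∫_a^b v''(y)² dy)^{1/2}. -/
open MeasureTheory

/-- Elementary Cauchy-Schwarz for interval integrals of continuous functions. -/
lemma cs_aux {c d : ℝ} (hcd : c ≤ d) {f : ℝ → ℝ} (hf : ContinuousOn f (Set.Icc c d)) :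
    |∫ t in c..d, f t| ≤ Real.sqrt (d - c) * Real.sqrt (∫ t in c..d, f t ^ 2) := by
  have hfi : IntervalIntegrable f volume c d := hf.intervalIntegrable_of_Icc hcd
  have habsi : IntervalIntegrable (fun t => |f t|) volume c d :=
    hf.abs.intervalIntegrable_of_Icc hcd
  have hf2i : IntervalIntegrable (fun t => f t ^ 2) volume c d :=
    (hf.pow 2).intervalIntegrable_of_Icc hcd
  set A := ∫ t in c..d, |f t| with hA
  set B := ∫ t in c..d, f t ^ 2 with hB
  have h1 : |∫ t in c..d, f t| ≤ A :=
    intervalIntegral.abs_integral_le_integral_abs hcd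
  have hAnn : 0 ≤ A := intervalIntegral.integral_nonneg hcd fun t _ => abs_nonneg _
  have hBnn : 0 ≤ B := intervalIntegral.integral_nonneg hcd fun t _ => sq_nonneg _
  have hquad : ∀ l : ℝ, 0 ≤ (d - c) * (l * l) + (-2 * A) * l + B := by
    intro l
    have h0 : 0 ≤ ∫ t in c..d, (|f t| - l) ^ 2 :=
      intervalIntegral.integral_nonneg hcd fun t _ => sq_nonneg _
    have hexp : (∫ t in c..d, (|f t| - l) ^ 2)
        = B - 2 * l * A + l ^ 2 * (d - c) := by
      have hcongr : (∫ t in c..d, (|f t| - l) ^ 2)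
          = ∫ t in c..d, (f t ^ 2 - 2 * l * |f t| + l ^ 2) := by
        apply intervalIntegral.integral_congr
        intro t _
        show (|f t| - l) ^ 2 = f t ^ 2 - 2 * l * |f t| + l ^ 2
        rw [sub_sq, sq_abs]; ring
      rw [hcongr,
        intervalIntegral.integral_add (hf2i.sub (habsi.const_mul (2 * l)))
          intervalIntegrable_const,
        intervalIntegral.integral_sub hf2i (habsi.const_mul (2 * l)),
        intervalIntegral.integral_const_mul, intervalIntegral.integral_const]
      simp only [smul_eq_mul]
      ring
    nlinarith
  have hdisc : discrim (d - c) (-2 * A) B ≤ 0 := discrim_le_zero hquad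
  rw [discrim] at hdisc
  have hA2 : A ^ 2 ≤ (d - c) * B := by nlinarith
  have h2 : A ≤ Real.sqrt ((d - c) * B) := Real.le_sqrt_of_sq_le hA2
  calc |∫ t in c..d, f t| ≤ A := h1
    _ ≤ Real.sqrt ((d - c) * B) := h2
    _ = Real.sqrt (d - c) * Real.sqrt B := Real.sqrt_mul (by linarith) _

/-- Finite-difference consistency estimate for the first difference quotient. -/
theorem stmt2 (a b : ℝ) (hab : a < b) (v : ℝ → ℝ)
    (hv : ContDiffOn ℝ 2 v (Set.Icc a b)) (x : ℝ) (hx : x ∈ Set.Icc a b) :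
    |(v b - v a) / (b - a) - derivWithin v (Set.Icc a b) x| ≤
      Real.sqrt (2 / 3) * (b - a) ^ ((1 : ℝ) / 2) *
        (∫ y in a..b, derivWithin (derivWithin v (Set.Icc a b)) (Set.Icc a b) y ^ 2) ^
          ((1 : ℝ) / 2) := by
  have hd : UniqueDiffOn ℝ (Set.Icc a b) := uniqueDiffOn_Icc hab
  set w := derivWithin v (Set.Icc a b) with hw
  set u := derivWithin w (Set.Icc a b) with hu
  have hw1 : ContDiffOn ℝ 1 w (Set.Icc a b) := hv.derivWithin hd (by norm_num)
  have hw_cont : ContinuousOn w (Set.Icc a b) := hw1.continuousOn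
  have hu_cont : ContinuousOn u (Set.Icc a b) := hw1.continuousOn_derivWithin hd le_rfl
  have hv_cont : ContinuousOn v (Set.Icc a b) := hv.continuousOn
  -- derivatives at interior points
  have hderiv_v : ∀ y ∈ Set.Ioo a b, HasDerivAt v (w y) y := by
    intro y hy
    have h1 : DifferentiableWithinAt ℝ v (Set.Icc a b) y :=
      hv.differentiableOn (by norm_num) y (Set.Ioo_subset_Icc_self hy)
    exact h1.hasDerivWithinAt.hasDerivAt (Icc_mem_nhds hy.1 hy.2)
  have hderiv_w : ∀ y ∈ Set.Ioo a b, HasDerivAt w (u y) y := by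
    intro y hy
    have h1 : DifferentiableWithinAt ℝ w (Set.Icc a b) y :=
      hw1.differentiableOn one_ne_zero y (Set.Ioo_subset_Icc_self hy)
    exact h1.hasDerivWithinAt.hasDerivAt (Icc_mem_nhds hy.1 hy.2)
  have hu_int : ∀ c ∈ Set.Icc a b, ∀ d ∈ Set.Icc a b, IntervalIntegrable u volume c d := by
    intro c hc d hd'
    exact (hu_cont.mono (Set.uIcc_subset_Icc hc hd')).intervalIntegrable
  -- FTC for w between points in [a,b]
  have hftcw : ∀ c ∈ Set.Icc a b, ∀ d ∈ Set.Icc a b, c ≤ d →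
      (∫ t in c..d, u t) = w d - w c := by
    intro c hc d hd' hcd
    apply intervalIntegral.integral_eq_sub_of_hasDeriv_right_of_le hcd
      (hw_cont.mono (Set.Icc_subset_Icc hc.1 hd'.2))
      (fun t ht => (hderiv_w t ⟨lt_of_le_of_lt hc.1 ht.1, lt_of_lt_of_le ht.2 hd'.2⟩).hasDerivWithinAt)
      (hu_int c hc d hd')
  have hwdiff : ∀ y ∈ Set.Icc a b, w y - w x = ∫ t in x..y, u t := by
    intro y hy
    rcases le_total x y with h | h
    · rw [hftcw x hx y hy h]
    · rw [intervalIntegral.integral_symm, hftcw y hy x hx h]; ring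
  -- FTC for v over [a,b]
  have hftcv : (∫ y in a..b, w y) = v b - v a := by
    apply intervalIntegral.integral_eq_sub_of_hasDeriv_right_of_le hab.le hv_cont
      (fun t ht => (hderiv_v t ht).hasDerivWithinAt)
      (hw_cont.intervalIntegrable_of_Icc hab.le)
  set S2 := ∫ t in a..b, u t ^ 2 with hS2def
  have hS2nn : 0 ≤ S2 :=
    intervalIntegral.integral_nonneg hab.le fun t _ => sq_nonneg _
  -- pointwise: (w y - w x)^2 ≤ |y - x| * S2
  have hpoint : ∀ y ∈ Set.Icc a b, (w y - w x) ^ 2 ≤ |y - x| * S2 := by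
    intro y hy
    have hsub : ∀ c ∈ Set.Icc a b, ∀ d ∈ Set.Icc a b, c ≤ d →
        (∫ t in c..d, u t ^ 2) ≤ S2 := by
      intro c hc d hd' hcd
      apply intervalIntegral.integral_mono_interval hc.1 hcd hd'.2
      · filter_upwards with t using sq_nonneg _
      · exact ((hu_cont.pow 2).mono (by rw [Set.uIcc_of_le hab.le])).intervalIntegrable
    rcases le_total x y with h | h
    · have hcs := cs_aux h (hu_cont.mono (Set.Icc_subset_Icc hx.1 hy.2))
      rw [hwdiff y hy]
      have h2nn : 0 ≤ ∫ t in x..y, u t ^ 2 :=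
        intervalIntegral.integral_nonneg h fun t _ => sq_nonneg _
      have hsq : (∫ t in x..y, u t) ^ 2 ≤ (y - x) * (∫ t in x..y, u t ^ 2) := by
        have := hcs
        nlinarith [Real.sq_sqrt (by linarith : (0:ℝ) ≤ y - x), Real.sq_sqrt h2nn,
          Real.sqrt_nonneg (y - x), Real.sqrt_nonneg (∫ t in x..y, u t ^ 2),
          abs_nonneg (∫ t in x..y, u t), sq_abs (∫ t in x..y, u t)]
      calc (∫ t in x..y, u t) ^ 2 ≤ (y - x) * (∫ t in x..y, u t ^ 2) := hsq
        _ ≤ |y - x| * S2 := by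
            rw [abs_of_nonneg (by linarith : (0:ℝ) ≤ y - x)]
            exact mul_le_mul_of_nonneg_left (hsub x hx y hy h) (by linarith)
    · have hcs := cs_aux h (hu_cont.mono (Set.Icc_subset_Icc hy.1 hx.2))
      have hrw : w y - w x = -∫ t in y..x, u t := by
        rw [hwdiff y hy, intervalIntegral.integral_symm]
      rw [hrw]
      have h2nn : 0 ≤ ∫ t in y..x, u t ^ 2 :=
        intervalIntegral.integral_nonneg h fun t _ => sq_nonneg _
      have hsq : (∫ t in y..x, u t) ^ 2 ≤ (x - y) * (∫ t in y..x, u t ^ 2) := by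
        nlinarith [Real.sq_sqrt (by linarith : (0:ℝ) ≤ x - y), Real.sq_sqrt h2nn,
          Real.sqrt_nonneg (x - y), Real.sqrt_nonneg (∫ t in y..x, u t ^ 2),
          abs_nonneg (∫ t in y..x, u t), sq_abs (∫ t in y..x, u t)]
      calc (-∫ t in y..x, u t) ^ 2 = (∫ t in y..x, u t) ^ 2 := by ring
        _ ≤ (x - y) * (∫ t in y..x, u t ^ 2) := hsq
        _ ≤ |y - x| * S2 := by
            rw [abs_sub_comm, abs_of_nonneg (by linarith : (0:ℝ) ≤ x - y)]
            exact mul_le_mul_of_nonneg_left (hsub y hy x hx h) (by linarith)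
  -- compute ∫ |y - x| ≤ (b-a)^2/2
  have habs_int : (∫ y in a..b, |y - x|) ≤ (b - a) ^ 2 / 2 := by
    have h1 : (∫ y in a..x, |y - x|) = (x - a) ^ 2 / 2 := by
      rw [intervalIntegral.integral_congr (g := fun y => x - y)
        (fun y hy => by
          rw [Set.uIcc_of_le hx.1] at hy
          rw [abs_of_nonpos (by linarith [hy.2])]; ring)]
      rw [intervalIntegral.integral_sub intervalIntegrable_const
        (intervalIntegral.intervalIntegrable_id), intervalIntegral.integral_const,
        integral_id]
      simp only [smul_eq_mul]
      ring
    have h2 : (∫ y in x..b, |y - x|) = (b - x) ^ 2 / 2 := by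
      rw [intervalIntegral.integral_congr (g := fun y => y - x)
        (fun y hy => by
          rw [Set.uIcc_of_le hx.2] at hy
          rw [abs_of_nonneg (by linarith [hy.1])])]
      rw [intervalIntegral.integral_sub intervalIntegral.intervalIntegrable_id
        intervalIntegrable_const, intervalIntegral.integral_const, integral_id]
      simp only [smul_eq_mul]
      ring
    have hadj : (∫ y in a..x, |y - x|) + (∫ y in x..b, |y - x|) = ∫ y in a..b, |y - x| := by
      apply intervalIntegral.integral_add_adjacent_intervals
      · exact ((continuous_id.sub continuous_const).abs).intervalIntegrable _ _
      · exact ((continuous_id.sub continuous_const).abs).intervalIntegrable _ _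
    rw [← hadj, h1, h2]
    nlinarith [hx.1, hx.2]
  -- integral of squared difference bound
  have hsq_int : (∫ y in a..b, (w y - w x) ^ 2) ≤ (b - a) ^ 2 / 2 * S2 := by
    have hmono : (∫ y in a..b, (w y - w x) ^ 2) ≤ ∫ y in a..b, |y - x| * S2 := by
      apply intervalIntegral.integral_mono_on hab.le
      · exact (((hw_cont.sub continuousOn_const).pow 2).intervalIntegrable_of_Icc hab.le)
      · exact (((continuous_id.sub continuous_const).abs.mul continuous_const).intervalIntegrable _ _)
      · exact hpoint
    calc (∫ y in a..b, (w y - w x) ^ 2) ≤ ∫ y in a..b, |y - x| * S2 := hmono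
      _ = (∫ y in a..b, |y - x|) * S2 := by
          rw [← intervalIntegral.integral_mul_const]
      _ ≤ (b - a) ^ 2 / 2 * S2 := mul_le_mul_of_nonneg_right habs_int hS2nn
  -- Cauchy-Schwarz on the outer integral
  have houter := cs_aux hab.le (f := fun y => w y - w x) (hw_cont.sub continuousOn_const)
  -- main identity
  have hI : (∫ y in a..b, (w y - w x)) = (v b - v a) - (b - a) * w x := by
    rw [intervalIntegral.integral_sub (hw_cont.intervalIntegrable_of_Icc hab.le)
      intervalIntegrable_const, hftcv, intervalIntegral.integral_const]
    simp only [smul_eq_mul]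
  have hba : (0:ℝ) < b - a := by linarith
  -- rewrite LHS
  have hlhs : (v b - v a) / (b - a) - w x
      = (∫ y in a..b, (w y - w x)) / (b - a) := by
    rw [hI]; field_simp
  rw [hlhs, abs_div, abs_of_pos hba, div_le_iff₀ hba]
  -- chain of bounds
  have hsqrt2 : Real.sqrt (∫ y in a..b, (w y - w x) ^ 2)
      ≤ Real.sqrt ((b - a) ^ 2 / 2 * S2) := Real.sqrt_le_sqrt hsq_int
  have hbound : |∫ y in a..b, (w y - w x)|
      ≤ Real.sqrt (b - a) * Real.sqrt ((b - a) ^ 2 / 2 * S2) :=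
    houter.trans (mul_le_mul_of_nonneg_left hsqrt2 (Real.sqrt_nonneg _))
  have hfinal : Real.sqrt (b - a) * Real.sqrt ((b - a) ^ 2 / 2 * S2)
      ≤ Real.sqrt (2 / 3) * (b - a) ^ ((1:ℝ)/2) * S2 ^ ((1:ℝ)/2) * (b - a) := by
    rw [← Real.sqrt_eq_rpow, ← Real.sqrt_eq_rpow]
    have h1 : Real.sqrt ((b - a) ^ 2 / 2 * S2)
        = (b - a) * (Real.sqrt (1 / 2) * Real.sqrt S2) := by
      rw [← Real.sqrt_mul (by norm_num : (0:ℝ) ≤ 1/2) S2,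
        show (b - a) ^ 2 / 2 * S2 = (b - a) ^ 2 * (1 / 2 * S2) by ring,
        Real.sqrt_mul (sq_nonneg _), Real.sqrt_sq hba.le]
    rw [h1]
    have h2 : Real.sqrt (1 / 2) ≤ Real.sqrt (2 / 3) :=
      Real.sqrt_le_sqrt (by norm_num)
    calc Real.sqrt (b - a) * ((b - a) * (Real.sqrt (1/2) * Real.sqrt S2))
        = Real.sqrt (1/2) * Real.sqrt (b - a) * Real.sqrt S2 * (b - a) := by ring
      _ ≤ Real.sqrt (2/3) * Real.sqrt (b - a) * Real.sqrt S2 * (b - a) :=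
          mul_le_mul_of_nonneg_right (mul_le_mul_of_nonneg_right
            (mul_le_mul_of_nonneg_right h2 (Real.sqrt_nonneg _)) (Real.sqrt_nonneg _)) hba.le
  exact hbound.trans hfinal
end

section
/- ℓ²-stability of the second difference quotient: Let N ≥ 1 be an integer, h = 1/N, x_j = j·h, and let v : ℝ → ℝ be twice continuously differentiable and 1-periodic. Then Σ_{j=1}^N |(v(x_{j+1}) − 2v(x_j) + v(x_{j−1}))/h²|² · h ≤ (4/3) · ∫₀¹ v''(y)² dy. -/
open MeasureTheory intervalIntegral

private lemma kernel_sq_integral (x h : ℝ) (hh : 0 ≤ h) :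
    ∫ t in (x - h)..(x + h), (h - |t - x|) ^ 2 = 2 * h ^ 3 / 3 := by
  have hK : Continuous fun t : ℝ => (h - |t - x|) ^ 2 := by fun_prop
  rw [← integral_add_adjacent_intervals (b := x)
    (hK.intervalIntegrable _ _) (hK.intervalIntegrable _ _)]
  have e1 : ∫ t in (x - h)..x, (h - |t - x|) ^ 2
      = ∫ t in (x - h)..x, (t - (x - h)) ^ 2 := by
    apply integral_congr
    intro t ht
    rw [Set.uIcc_of_le (by linarith)] at ht
    show (h - |t - x|) ^ 2 = (t - (x - h)) ^ 2
    rw [abs_of_nonpos (by linarith [ht.2])]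
    ring
  have e2 : ∫ t in x..(x + h), (h - |t - x|) ^ 2
      = ∫ t in x..(x + h), ((x + h) - t) ^ 2 := by
    apply integral_congr
    intro t ht
    rw [Set.uIcc_of_le (by linarith)] at ht
    show (h - |t - x|) ^ 2 = ((x + h) - t) ^ 2
    rw [abs_of_nonneg (by linarith [ht.1])]
    ring
  rw [e1, e2]
  have s1 : ∫ t in (x - h)..x, (t - (x - h)) ^ 2 = ∫ s in (0:ℝ)..h, s ^ 2 := by
    have := intervalIntegral.integral_comp_sub_right (a := x - h) (b := x)
      (fun s : ℝ => s ^ 2) (x - h)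
    simpa using this
  have s2 : ∫ t in x..(x + h), ((x + h) - t) ^ 2 = ∫ s in (0:ℝ)..h, s ^ 2 := by
    have := intervalIntegral.integral_comp_sub_left (a := x) (b := x + h)
      (fun s : ℝ => s ^ 2) (x + h)
    simpa using this
  rw [s1, s2, integral_pow]
  ring

private lemma cs_ineq (K g : ℝ → ℝ) (a b : ℝ) (hab : a ≤ b) (hK : Continuous K)
    (hg : Continuous g) (hA : 0 < ∫ t in a..b, K t ^ 2) :
    (∫ t in a..b, K t * g t) ^ 2 ≤ (∫ t in a..b, K t ^ 2) * ∫ t in a..b, g t ^ 2 := by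
  set A := ∫ t in a..b, K t ^ 2 with hAdef
  set B := ∫ t in a..b, K t * g t with hBdef
  set C := ∫ t in a..b, g t ^ 2 with hCdef
  have h0 : 0 ≤ ∫ t in a..b, (A * g t - B * K t) ^ 2 :=
    integral_nonneg hab (fun t _ => sq_nonneg _)
  have hexp : ∫ t in a..b, (A * g t - B * K t) ^ 2
      = A ^ 2 * C - 2 * A * B * B + B ^ 2 * A := by
    have e : ∀ t, (A * g t - B * K t) ^ 2
        = A ^ 2 * g t ^ 2 - 2 * A * B * (K t * g t) + B ^ 2 * K t ^ 2 := fun t => by ring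
    simp_rw [e]
    rw [intervalIntegral.integral_add, intervalIntegral.integral_sub,
      intervalIntegral.integral_const_mul, intervalIntegral.integral_const_mul,
      intervalIntegral.integral_const_mul]
    · exact ((continuous_const.mul (hg.pow 2)).intervalIntegrable _ _)
    · exact ((continuous_const.mul (hK.mul hg)).intervalIntegrable _ _)
    · exact (((continuous_const.mul (hg.pow 2)).sub
        (continuous_const.mul (hK.mul hg))).intervalIntegrable _ _)
    · exact ((continuous_const.mul (hK.pow 2)).intervalIntegrable _ _)
  nlinarith [h0, hexp, hA]

private lemma key_id (v : ℝ → ℝ) (hd1 : Differentiable ℝ v)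
    (hd2 : Differentiable ℝ (deriv v)) (hc : Continuous (deriv (deriv v)))
    (x h : ℝ) (hh : 0 ≤ h) :
    v (x + h) - 2 * v x + v (x - h)
      = ∫ t in (x - h)..(x + h), (h - |t - x|) * deriv (deriv v) t := by
  have hKc : Continuous fun t : ℝ => (h - |t - x|) * deriv (deriv v) t := by fun_prop
  have hfc : Continuous (deriv v) := hd2.continuous
  have h2 : ∫ t in x..(x + h), (h - |t - x|) * deriv (deriv v) t
      = v (x + h) - v x - h * deriv v x := by
    have e : ∫ t in x..(x + h), (h - |t - x|) * deriv (deriv v) t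
        = ∫ t in x..(x + h), ((x + h) - t) * deriv (deriv v) t := by
      apply integral_congr
      intro t ht
      rw [Set.uIcc_of_le (by linarith)] at ht
      show (h - |t - x|) * deriv (deriv v) t = ((x + h) - t) * deriv (deriv v) t
      rw [abs_of_nonneg (by linarith [ht.1])]
      ring_nf
    rw [e, integral_mul_deriv_eq_deriv_mul (u := fun t => (x + h) - t)
      (u' := fun _ => (-1 : ℝ)) (v := deriv v) (v' := deriv (deriv v))
      (fun t _ => (hasDerivAt_id t).const_sub (x + h))
      (fun t _ => (hd2 t).hasDerivAt)
      (continuous_const.intervalIntegrable _ _) (hc.intervalIntegrable _ _)]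
    rw [intervalIntegral.integral_const_mul, integral_deriv_eq_sub (fun t _ => hd1 t)
      (hfc.intervalIntegrable _ _)]
    ring
  have h1 : ∫ t in (x - h)..x, (h - |t - x|) * deriv (deriv v) t
      = h * deriv v x - (v x - v (x - h)) := by
    have e : ∫ t in (x - h)..x, (h - |t - x|) * deriv (deriv v) t
        = ∫ t in (x - h)..x, (t - (x - h)) * deriv (deriv v) t := by
      apply integral_congr
      intro t ht
      rw [Set.uIcc_of_le (by linarith)] at ht
      show (h - |t - x|) * deriv (deriv v) t = (t - (x - h)) * deriv (deriv v) t
      rw [abs_of_nonpos (by linarith [ht.2])]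
      ring_nf
    rw [e, integral_mul_deriv_eq_deriv_mul (u := fun t => t - (x - h))
      (u' := fun _ => (1 : ℝ)) (v := deriv v) (v' := deriv (deriv v))
      (fun t _ => (hasDerivAt_id t).sub_const (x - h))
      (fun t _ => (hd2 t).hasDerivAt)
      (continuous_const.intervalIntegrable _ _) (hc.intervalIntegrable _ _)]
    rw [intervalIntegral.integral_const_mul, integral_deriv_eq_sub (fun t _ => hd1 t)
      (hfc.intervalIntegrable _ _)]
    ring
  rw [← integral_add_adjacent_intervals (b := x)
    (hKc.intervalIntegrable _ _) (hKc.intervalIntegrable _ _), h1, h2]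
  ring

/-- ℓ²-stability of the second difference quotient for 1-periodic C² functions. -/
theorem stmt3 (N : ℕ) (hN : 1 ≤ N) (v : ℝ → ℝ) (hv : ContDiff ℝ 2 v)
    (hper : ∀ x, v (x + 1) = v x) :
    ∑ j ∈ Finset.Icc (1 : ℤ) (N : ℤ),
        ((v (((j : ℝ) + 1) / N) - 2 * v ((j : ℝ) / N) + v (((j : ℝ) - 1) / N)) /
            ((1 : ℝ) / N) ^ 2) ^ 2 * ((1 : ℝ) / N)
      ≤ 4 / 3 * ∫ y in Set.Ioo (0 : ℝ) 1, deriv (deriv v) y ^ 2 := by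
  have hNpos : (0:ℝ) < N := by exact_mod_cast hN
  have hN0 : (N:ℝ) ≠ 0 := ne_of_gt hNpos
  set h : ℝ := 1 / N with hdef
  have hh : 0 < h := by positivity
  -- regularity
  have h2 : ContDiff ℝ (1 + 1) v := by norm_num [hv]
  have h1 := (contDiff_succ_iff_deriv.mp h2).2.2
  have h0 : ContDiff ℝ (0 + 1) (deriv v) := by norm_num [h1]
  have hd1 : Differentiable ℝ v := hv.differentiable (by norm_num)
  have hd2 : Differentiable ℝ (deriv v) := h1.differentiable (by norm_num)
  have hc : Continuous (deriv (deriv v)) :=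
    ((contDiff_succ_iff_deriv.mp h0).2.2).continuous
  set g : ℝ → ℝ := fun t => deriv (deriv v) t ^ 2 with hgdef
  have hgc : Continuous g := by fun_prop
  have hgi : ∀ a b : ℝ, IntervalIntegrable g volume a b :=
    fun a b => hgc.intervalIntegrable a b
  -- periodicity of g
  have hperd : ∀ (w : ℝ → ℝ), (∀ x, w (x + 1) = w x) → ∀ x, deriv w (x + 1) = deriv w x := by
    intro w hw x
    have e : deriv (fun y => w (y + 1)) x = deriv w (x + 1) := deriv_comp_add_const w 1 x
    rw [← e]
    congr 1
    exact funext hw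
  have hgper : Function.Periodic g 1 := by
    intro x
    simp only [hgdef]
    rw [hperd _ (hperd _ hper) x]
  -- reindex the sum over ℕ
  have hIcc : Finset.Icc (1:ℤ) (N:ℤ)
      = Finset.image (fun i : ℕ => (i:ℤ) + 1) (Finset.range N) := by
    ext j
    simp only [Finset.mem_Icc, Finset.mem_image, Finset.mem_range]
    constructor
    · rintro ⟨ha, hb⟩; exact ⟨(j - 1).toNat, by omega, by omega⟩
    · rintro ⟨i, hi, rfl⟩; omega
  rw [hIcc, Finset.sum_image (by intro a _ b _ hab; have hab' : (a:ℤ) + 1 = (b:ℤ) + 1 := hab; omega)]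
  -- termwise bound
  have hterm : ∀ i ∈ Finset.range N,
      ((v (((((i:ℤ) + 1 : ℤ) : ℝ) + 1) / (N:ℝ)) - 2 * v ((((i:ℤ) + 1 : ℤ) : ℝ) / (N:ℝ))
          + v (((((i:ℤ) + 1 : ℤ) : ℝ) - 1) / (N:ℝ))) / h ^ 2) ^ 2 * h
      ≤ 2 / 3 * ((∫ t in ((i:ℝ) * h)..(((i + 1 : ℕ):ℝ) * h), g t)
          + ∫ t in (((i + 1 : ℕ):ℝ) * h)..(((i + 1 + 1 : ℕ):ℝ) * h), g t) := by
    intro i hi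
    simp only [hgdef]
    have hx1 : ((((i:ℤ) + 1 : ℤ) : ℝ) + 1) / (N:ℝ) = ((i:ℝ) + 1) * h + h := by
      rw [hdef]
      push_cast
      field_simp
    have hx2 : ((((i:ℤ) + 1 : ℤ) : ℝ)) / (N:ℝ) = ((i:ℝ) + 1) * h := by
      rw [hdef]
      push_cast
      field_simp
    have hx3 : ((((i:ℤ) + 1 : ℤ) : ℝ) - 1) / (N:ℝ) = ((i:ℝ) + 1) * h - h := by
      rw [hdef]
      push_cast
      field_simp
    rw [hx1, hx2, hx3]
    set x := ((i:ℝ) + 1) * h with hxdef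
    have e1 : ((i:ℝ)) * h = x - h := by rw [hxdef]; ring
    have e2 : (((i + 1 : ℕ)):ℝ) * h = x := by rw [hxdef]; push_cast; ring
    have e3 : (((i + 1 + 1 : ℕ)):ℝ) * h = x + h := by rw [hxdef]; push_cast; ring
    rw [e1, e2, e3, integral_add_adjacent_intervals
      ((show Continuous (fun t => deriv (deriv v) t ^ 2) from hc.pow 2).intervalIntegrable _ _)
      ((show Continuous (fun t => deriv (deriv v) t ^ 2) from hc.pow 2).intervalIntegrable _ _)]
    have hkey := key_id v hd1 hd2 hc x h hh.le
    have hA : ∫ t in (x - h)..(x + h), (h - |t - x|) ^ 2 = 2 * h ^ 3 / 3 :=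
      kernel_sq_integral x h hh.le
    have hcs := cs_ineq (fun t => h - |t - x|) (deriv (deriv v)) (x - h) (x + h)
      (by linarith) (by fun_prop) hc (by rw [hA]; positivity)
    rw [hA] at hcs
    have hcs' : (v (x + h) - 2 * v x + v (x - h)) ^ 2
        ≤ 2 * h ^ 3 / 3 * ∫ t in (x - h)..(x + h), deriv (deriv v) t ^ 2 := by
      rw [hkey]; exact hcs
    have he : ((v (x + h) - 2 * v x + v (x - h)) / h ^ 2) ^ 2 * h
        = (v (x + h) - 2 * v x + v (x - h)) ^ 2 / h ^ 3 := by
      field_simp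
    rw [he, div_le_iff₀ (by positivity)]
    nlinarith [hcs']
  refine le_trans (Finset.sum_le_sum hterm) ?_
  have S1 := intervalIntegral.sum_integral_adjacent_intervals (μ := volume) (f := g)
    (a := fun k : ℕ => (k:ℝ) * h) (n := N) (fun k _ => hgi _ _)
  have S2 := intervalIntegral.sum_integral_adjacent_intervals (μ := volume) (f := g)
    (a := fun k : ℕ => ((k + 1 : ℕ):ℝ) * h) (n := N) (fun k _ => hgi _ _)
  rw [← Finset.mul_sum, Finset.sum_add_distrib, S1, S2]
  have hNh : (N:ℝ) * h = 1 := by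
    rw [hdef]
    field_simp
  have p1 : ∫ t in (((0:ℕ):ℝ) * h)..(((N:ℕ):ℝ) * h), g t = ∫ t in (0:ℝ)..1, g t := by
    rw [show (((0:ℕ):ℝ) * h) = (0:ℝ) by norm_num, show ((N:ℕ):ℝ) * h = 1 from hNh]
  have p2 : ∫ t in (((0 + 1 : ℕ):ℝ) * h)..(((N + 1 : ℕ):ℝ) * h), g t
      = ∫ t in (0:ℝ)..1, g t := by
    rw [show (((0 + 1 : ℕ):ℝ) * h) = h by norm_num,
      show (((N + 1 : ℕ):ℝ) * h) = h + 1 by push_cast; rw [add_mul, hNh]; ring]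
    have := hgper.intervalIntegral_add_eq h 0
    simpa using this
  rw [p1, p2]
  have hIoo : ∫ t in (0:ℝ)..1, g t = ∫ y in Set.Ioo (0:ℝ) 1, g y := by
    rw [integral_of_le zero_le_one, integral_Ioc_eq_integral_Ioo]
  rw [hIoo]
  linarith
end

section
/- Upper semicontinuity of the discrete adhesion energy: Let ψ : ℝ → ℝ be continuous and 1-periodic, let v : ℝ → ℝ be continuously differentiable and 1-periodic with v(x) ≥ ψ(x) for all x, let γ > 0, and let ζ be a regularizer. Let Nₙ → ∞ be integers, hₙ = 1/Nₙ, δₙ > 0 with δₙ → 0, and for each n let vₙ be (the piecewise-affine function of) a discrete curve on the mesh of size hₙ such that sup_{x∈[0,1]} |vₙ(x) − v(x)| → 0 and ∫₀¹ |vₙ'(x) − v'(x)| dx → 0. Then limsup_{n→∞} A_{hₙ,δₙ}[vₙ] ≤ γ · ∫_{{x ∈ (0,1) : v(x) = ψ(x)}} √(1 + v'(x)²) dx. -/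
open Filter MeasureTheory

noncomputable section

/-- mesh point `x_j = j·h` with `h = 1/N`. -/
def xj (N : ℕ) (j : ℤ) : ℝ := j * ((1 : ℝ) / N)

/-- first difference quotient `d_j = (v_j − v_{j−1})/h`. -/
def dq (N : ℕ) (v : ℤ → ℝ) (j : ℤ) : ℝ := (v j - v (j - 1)) / ((1 : ℝ) / N)

/-- second difference quotient `D_j = (v_{j+1} − 2v_j + v_{j−1})/h²`. -/
def Dq (N : ℕ) (v : ℤ → ℝ) (j : ℤ) : ℝ :=
  (v (j + 1) - 2 * v j + v (j - 1)) / ((1 : ℝ) / N) ^ 2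

/-- half segment length `l_j = (h/2)·√(1 + d_j²)`. -/
def lq (N : ℕ) (v : ℤ → ℝ) (j : ℤ) : ℝ :=
  ((1 : ℝ) / N) / 2 * Real.sqrt (1 + dq N v j ^ 2)

/-- angle `θ_j` between consecutive segments. -/
def θq (N : ℕ) (v : ℤ → ℝ) (j : ℤ) : ℝ :=
  Real.arccos ((1 + dq N v j * dq N v (j + 1)) /
    (Real.sqrt (1 + dq N v j ^ 2) * Real.sqrt (1 + dq N v (j + 1) ^ 2)))

/-- discrete bending energy `B_h`. -/
def Bh (C : ℝ) (N : ℕ) (v : ℤ → ℝ) : ℝ :=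
  C / 2 * ∑ j ∈ Finset.Icc (1 : ℤ) N, θq N v j ^ 2 *
    ((lq N v j ^ 3 + lq N v (j + 1) ^ 3) /
      (lq N v j * lq N v (j + 1) * (lq N v j + lq N v (j + 1)) ^ 2))

/-- discrete tension `T_h`. -/
def Th (σ : ℝ) (N : ℕ) (v : ℤ → ℝ) : ℝ :=
  σ * ∑ j ∈ Finset.Icc (1 : ℤ) N, 2 * lq N v j

/-- a regularizer `ζ`. -/
def IsRegularizer (ζ : ℝ → ℝ) : Prop :=
  ContDiff ℝ 1 ζ ∧ (∀ t, 0 ≤ ζ t ∧ ζ t ≤ 1) ∧ (∀ t, ζ (-t) = ζ t) ∧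
    (∀ t, 1 < t → ζ t = 0) ∧ AntitoneOn ζ (Set.Icc 0 1) ∧ ζ 0 = 1

/-- discrete adhesion energy `A_{h,δ}` (with `ζ_δ(t) = ζ(t/δ)`). -/
def Ah (γ : ℝ) (ζ : ℝ → ℝ) (δ : ℝ) (ψ : ℝ → ℝ) (N : ℕ) (v : ℤ → ℝ) : ℝ :=
  γ * ∑ j ∈ Finset.Icc (1 : ℤ) N,
    ζ ((v (j - 1) - ψ (xj N (j - 1))) / δ) * ζ ((v j - ψ (xj N j)) / δ) * (2 * lq N v j)

/-- discrete penalty `P_{h,ρ}`. -/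
def Ph (ρ : ℝ) (ψ : ℝ → ℝ) (N : ℕ) (v : ℤ → ℝ) : ℝ :=
  1 / ρ * ∑ j ∈ Finset.Icc (1 : ℤ) N, max (ψ (xj N j) - v j) 0 ^ 2 * ((1 : ℝ) / N)

/-- total discrete energy `E_{h,δ,ρ}`. -/
def Eh (C σ γ : ℝ) (ζ ψ : ℝ → ℝ) (N : ℕ) (δ ρ : ℝ) (v : ℤ → ℝ) : ℝ :=
  Bh C N v + Th σ N v - Ah γ ζ δ ψ N v + Ph ρ ψ N v

/-- piecewise-affine interpolant of a discrete curve: on `[x_{j−1}, x_j]` it is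
`v_{j−1} + d_j·(x − x_{j−1})`. -/
def interp (N : ℕ) (v : ℤ → ℝ) (x : ℝ) : ℝ :=
  v (⌈x * N⌉ - 1) + dq N v ⌈x * N⌉ * (x - xj N (⌈x * N⌉ - 1))

/-- slope step function of a discrete curve: equal to `d_j` on `(x_{j−1}, x_j)`. -/
def slopeFn (N : ℕ) (v : ℤ → ℝ) (x : ℝ) : ℝ := dq N v ⌈x * N⌉


open Set in
private lemma sqrt_lip (d a : ℝ) : Real.sqrt (1 + d ^ 2) ≤ Real.sqrt (1 + a ^ 2) + |d - a| := by
  have h1 : |a| ≤ Real.sqrt (1 + a ^ 2) := by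
    rw [← Real.sqrt_sq_eq_abs]
    exact Real.sqrt_le_sqrt (by nlinarith)
  have h2 : Real.sqrt (1 + d ^ 2) ≤ Real.sqrt ((Real.sqrt (1 + a ^ 2) + |d - a|) ^ 2) := by
    apply Real.sqrt_le_sqrt
    have hs := Real.sq_sqrt (by positivity : (0:ℝ) ≤ 1 + a ^ 2)
    have habs : |a| * |d - a| ≤ Real.sqrt (1 + a ^ 2) * |d - a| :=
      mul_le_mul_of_nonneg_right h1 (abs_nonneg _)
    have h3 : a * (d - a) ≤ |a| * |d - a| := by
      calc a * (d - a) ≤ |a * (d - a)| := le_abs_self _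
      _ = |a| * |d - a| := abs_mul _ _
    nlinarith [sq_abs (d - a)]
  rwa [Real.sqrt_sq (by positivity)] at h2

open Set in
private lemma ceil_xj (N : ℕ) (hN : 0 < N) (j : ℤ) : ⌈xj N j * N⌉ = j := by
  have hN' : (N : ℝ) ≠ 0 := Nat.cast_ne_zero.mpr hN.ne'
  have : xj N j * N = j := by simp only [xj]; field_simp
  rw [this, Int.ceil_intCast]

open Set in
private lemma interp_mesh (N : ℕ) (hN : 0 < N) (w : ℤ → ℝ) (j : ℤ) :
    interp N w (xj N j) = w j := by
  have hN' : (N : ℝ) ≠ 0 := Nat.cast_ne_zero.mpr hN.ne'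
  rw [interp, ceil_xj N hN j, dq, xj, xj]
  field_simp
  push_cast; ring

open Set in
private lemma ceil_seg (N : ℕ) (hN : 0 < N) (j : ℤ) {x : ℝ}
    (hx : x ∈ Ioc (xj N (j - 1)) (xj N j)) : ⌈x * N⌉ = j := by
  have hNpos : (0:ℝ) < N := Nat.cast_pos.mpr hN
  rw [Int.ceil_eq_iff]
  constructor
  · have := hx.1
    rw [xj] at this
    calc (j:ℝ) - 1 = ((j:ℝ) - 1) * (1/N) * N := by field_simp
    _ < x * N := by
      apply mul_lt_mul_of_pos_right _ hNpos
      push_cast at this ⊢; linarith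
  · have := hx.2
    rw [xj] at this
    calc x * N ≤ (j:ℝ) * (1/N) * N := mul_le_mul_of_nonneg_right this hNpos.le
    _ = j := by field_simp

open Set in
private lemma slope_on_seg (N : ℕ) (hN : 0 < N) (w : ℤ → ℝ) (j : ℤ) {x : ℝ}
    (hx : x ∈ Ioc (xj N (j - 1)) (xj N j)) : slopeFn N w x = dq N w j := by
  rw [slopeFn, ceil_seg N hN j hx]

open Set in
private lemma contact_lim (ψ v f : ℝ → ℝ) (hψ : Continuous ψ) (hv : Continuous v)
    (hvψ : ∀ x, ψ x ≤ v x) (hf : Continuous f) (hfpos : ∀ x, 0 ≤ f x)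
    (ε : ℝ) (hε : 0 < ε) :
    ∃ η > (0:ℝ), ∫ x in {x ∈ Icc (0:ℝ) 1 | v x - ψ x ≤ η}, f x ≤
      (∫ x in {x | x ∈ Ioo (0:ℝ) 1 ∧ v x = ψ x}, f x) + ε := by
  set K : ℕ → Set ℝ := fun m => {x ∈ Icc (0:ℝ) 1 | v x - ψ x ≤ 1 / (m + 1)} with hK
  set Kinf : Set ℝ := {x ∈ Icc (0:ℝ) 1 | v x = ψ x} with hKi
  have hcont : Continuous (fun x => v x - ψ x) := hv.sub hψ
  have hKm : ∀ m, MeasurableSet (K m) := fun m =>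
    measurableSet_Icc.inter (hcont.measurable measurableSet_Iic)
  have hKim : MeasurableSet Kinf := by
    have : Kinf = Icc 0 1 ∩ (fun x => v x - ψ x) ⁻¹' {0} := by
      ext x; simp [hKi, sub_eq_zero]
    rw [this]
    exact measurableSet_Icc.inter (hcont.measurable (measurableSet_singleton 0))
  have hfint : IntegrableOn f (Icc (0:ℝ) 1) := hf.integrableOn_Icc
  have hbound : Integrable ((Icc (0:ℝ) 1).indicator f) :=
    (integrable_indicator_iff measurableSet_Icc).mpr hfint
  have hT : Tendsto (fun m => ∫ x, (K m).indicator f x) atTop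
      (nhds (∫ x, Kinf.indicator f x)) := by
    apply tendsto_integral_of_dominated_convergence ((Icc (0:ℝ) 1).indicator f)
    · exact fun m => (hf.aestronglyMeasurable).indicator (hKm m)
    · exact hbound
    · intro m
      filter_upwards with x
      by_cases hx : x ∈ K m
      · rw [indicator_of_mem hx, Real.norm_eq_abs, abs_of_nonneg (hfpos x),
          indicator_of_mem hx.1]
      · rw [indicator_of_notMem hx, norm_zero]
        exact indicator_nonneg (fun y _ => hfpos y) x
    · filter_upwards with x
      by_cases hx : x ∈ Kinf
      · rw [indicator_of_mem hx]
        have : ∀ m, (K m).indicator f x = f x := by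
          intro m
          apply indicator_of_mem
          refine ⟨hx.1, ?_⟩
          simp only [hx.2, sub_self]
          positivity
        simp only [this]
        exact tendsto_const_nhds
      · rw [indicator_of_notMem hx]
        by_cases hxI : x ∈ Icc (0:ℝ) 1
        · have hpos : 0 < v x - ψ x := by
            rcases lt_or_eq_of_le (hvψ x) with h | h
            · linarith
            · exact absurd ⟨hxI, h.symm⟩ hx
          obtain ⟨m₀, hm₀⟩ := exists_nat_one_div_lt hpos
          apply Tendsto.congr' _ tendsto_const_nhds
          filter_upwards [eventually_ge_atTop m₀] with m hm
          symm
          apply indicator_of_notMem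
          intro hmem
          have h1 : (1:ℝ) / (m + 1) ≤ 1 / (m₀ + 1) := by
            apply one_div_le_one_div_of_le (by positivity)
            linarith [(Nat.cast_le (α := ℝ)).mpr hm]
          have := hmem.2
          linarith
        · apply Tendsto.congr' _ tendsto_const_nhds
          filter_upwards with m
          symm
          exact indicator_of_notMem (fun hmem => hxI hmem.1) _
  have hKeq : ∫ x, Kinf.indicator f x = ∫ x in {x | x ∈ Ioo (0:ℝ) 1 ∧ v x = ψ x}, f x := by
    rw [integral_indicator hKim]
    apply setIntegral_congr_set
    rw [Filter.eventuallyEq_set]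
    have hnull : (volume : Measure ℝ) {(0:ℝ), 1} = 0 :=
      (Set.Finite.countable (by simp)).measure_zero _
    rw [← compl_mem_ae_iff] at hnull
    filter_upwards [hnull] with x hx
    simp only [mem_compl_iff, mem_insert_iff, mem_singleton_iff, not_or] at hx
    simp only [hKi, mem_setOf_eq, mem_Icc, mem_Ioo]
    constructor
    · rintro ⟨hxI, hxe⟩
      exact ⟨⟨lt_of_le_of_ne hxI.1 (Ne.symm hx.1), lt_of_le_of_ne hxI.2 hx.2⟩, hxe⟩
    · rintro ⟨hxI, hxe⟩
      exact ⟨⟨hxI.1.le, hxI.2.le⟩, hxe⟩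
  rw [hKeq] at hT
  have h2 := hT.eventually_lt_const (lt_add_of_pos_right
    (∫ (x : ℝ) in {x | x ∈ Ioo (0:ℝ) 1 ∧ v x = ψ x}, f x) hε)
  obtain ⟨m, hm⟩ := h2.exists
  rw [integral_indicator (hKm m)] at hm
  exact ⟨1 / ((m:ℝ) + 1), by positivity, hm.le⟩

private lemma zeta_abs (ζ : ℝ → ℝ) (hζ : IsRegularizer ζ) {t : ℝ} (ht : 1 < |t|) : ζ t = 0 := by
  rcases abs_cases t with ⟨h, _⟩ | ⟨h, _⟩
  · exact hζ.2.2.2.1 t (h ▸ ht)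
  · rw [← hζ.2.2.1 t]
    exact hζ.2.2.2.1 (-t) (h ▸ ht)

private lemma sum_Icc_eq_range (N : ℕ) (F : ℤ → ℝ) :
    ∑ j ∈ Finset.Icc (1:ℤ) (N:ℤ), F j = ∑ k ∈ Finset.range N, F ((k:ℤ)+1) := by
  apply Finset.sum_nbij' (i := fun (j:ℤ) => (j-1).toNat) (j := fun (k:ℕ) => (k:ℤ)+1)
  · intro a ha
    rw [Finset.mem_Icc] at ha
    rw [Finset.mem_range]
    omega
  · intro a ha
    rw [Finset.mem_range] at ha
    rw [Finset.mem_Icc]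
    omega
  · intro a ha; rw [Finset.mem_Icc] at ha; omega
  · intro a _; omega
  · intro a ha
    rw [Finset.mem_Icc] at ha
    congr 1
    omega

open Set in
private lemma Ah_bound (ψ v : ℝ → ℝ) (hfc : Continuous (deriv v))
    (γ : ℝ) (hγ : 0 < γ) (ζ : ℝ → ℝ) (hζ : IsRegularizer ζ)
    (N : ℕ) (hN : 0 < N) (w : ℤ → ℝ) (δ : ℝ) (hδ : 0 < δ)
    (K : Set ℝ) (hKmeas : MeasurableSet K)
    (hK : ∀ j : ℤ, 1 ≤ j → j ≤ N → |w j - ψ (xj N j)| ≤ δ →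
      Ioc (xj N (j - 1)) (xj N j) ⊆ K) :
    Ah γ ζ δ ψ N w ≤ γ * ∫ x in Ioc (0:ℝ) 1,
      (K.indicator (fun y => Real.sqrt (1 + deriv v y ^ 2)) x
        + |slopeFn N w x - deriv v x|) := by
  set f : ℝ → ℝ := fun y => Real.sqrt (1 + deriv v y ^ 2) with hf
  set g : ℝ → ℝ := fun x => K.indicator f x + |slopeFn N w x - deriv v x| with hg
  have hNR : (0:ℝ) < N := Nat.cast_pos.mpr hN
  have hcf : Continuous f := by
    apply Real.continuous_sqrt.comp
    exact continuous_const.add ((hfc.pow 2))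
  have hseg : ∀ j : ℤ, IntegrableOn g (Ioc (xj N (j - 1)) (xj N j)) := by
    intro j
    have h1 : IntegrableOn (K.indicator f) (Ioc (xj N (j - 1)) (xj N j)) :=
      (hcf.integrableOn_Ioc).indicator hKmeas
    have hbase : IntegrableOn (fun x => |dq N w j - deriv v x|)
        (Ioc (xj N (j - 1)) (xj N j)) :=
      (continuous_abs.comp (continuous_const.sub hfc)).integrableOn_Ioc
    have h2 : IntegrableOn (fun x => |slopeFn N w x - deriv v x|)
        (Ioc (xj N (j - 1)) (xj N j)) :=
      hbase.congr_fun (fun x hx => by rw [slope_on_seg N hN w j hx]) measurableSet_Ioc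
    exact h1.add h2
  have hlen : ∀ j : ℤ, xj N j - xj N (j - 1) = 1 / N := by
    intro j
    simp only [xj]
    push_cast
    ring
  have hle : ∀ j : ℤ, xj N (j - 1) ≤ xj N j := by
    intro j
    have := hlen j
    have : (0:ℝ) < 1 / N := by positivity
    linarith [hlen j]
  have hterm : ∀ j ∈ Finset.Icc (1:ℤ) N,
      ζ ((w (j - 1) - ψ (xj N (j - 1))) / δ) * ζ ((w j - ψ (xj N j)) / δ) * (2 * lq N w j)
        ≤ ∫ x in Ioc (xj N (j - 1)) (xj N j), g x := by
    intro j hj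
    rw [Finset.mem_Icc] at hj
    have hgnn : ∀ x ∈ Ioc (xj N (j - 1)) (xj N j), 0 ≤ g x := by
      intro x _
      apply add_nonneg
      · exact indicator_nonneg (fun y _ => Real.sqrt_nonneg _) x
      · exact abs_nonneg _
    by_cases hzb : |w j - ψ (xj N j)| ≤ δ
    · have h1 : ζ ((w (j - 1) - ψ (xj N (j - 1))) / δ) * ζ ((w j - ψ (xj N j)) / δ)
          * (2 * lq N w j) ≤ 2 * lq N w j := by
        have l0 : 0 ≤ 2 * lq N w j := by
          rw [lq]; positivity
        have ha := hζ.2.1 ((w (j - 1) - ψ (xj N (j - 1))) / δ)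
        have hb := hζ.2.1 ((w j - ψ (xj N j)) / δ)
        have hab : ζ ((w (j - 1) - ψ (xj N (j - 1))) / δ) * ζ ((w j - ψ (xj N j)) / δ) ≤ 1 :=
          mul_le_one₀ ha.2 hb.1 hb.2
        have hab0 : 0 ≤ ζ ((w (j - 1) - ψ (xj N (j - 1))) / δ) * ζ ((w j - ψ (xj N j)) / δ) :=
          mul_nonneg ha.1 hb.1
        nlinarith
      refine h1.trans ?_
      have hsub := hK j hj.1 hj.2 hzb
      have h2 : (2 : ℝ) * lq N w j = ∫ x in Ioc (xj N (j - 1)) (xj N j),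
          Real.sqrt (1 + dq N w j ^ 2) := by
        rw [setIntegral_const, Real.volume_real_Ioc, hlen j,
          max_eq_left (by positivity), smul_eq_mul, lq]
        ring
      rw [h2]
      apply setIntegral_mono_on ?_ (hseg j) measurableSet_Ioc ?_
      · exact integrableOn_const (by rw [Real.volume_Ioc]; exact ENNReal.ofReal_ne_top)
      · intro x hx
        have hgx : g x = f x + |dq N w j - deriv v x| := by
          rw [hg]
          simp only
          rw [indicator_of_mem (hsub hx), slope_on_seg N hN w j hx]
        rw [hgx, hf]
        exact sqrt_lip (dq N w j) (deriv v x)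
    · have : ζ ((w j - ψ (xj N j)) / δ) = 0 := by
        apply zeta_abs ζ hζ
        rw [abs_div, abs_of_pos hδ]
        rw [lt_div_iff₀ hδ]
        linarith [not_le.mp hzb]
      rw [this, mul_zero, zero_mul]
      exact setIntegral_nonneg measurableSet_Ioc hgnn
  have e1 : ∀ k : ℕ, ((k:ℤ) + 1 - 1) = ((k:ℕ):ℤ) := by intro k; push_cast; ring
  have e2 : ∀ k : ℕ, ((k:ℤ) + 1) = (((k+1:ℕ)):ℤ) := by intro k; push_cast; ring
  have hle' : ∀ k : ℕ, xj N ((k:ℕ):ℤ) ≤ xj N (((k+1:ℕ)):ℤ) := by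
    intro k
    have h := hle (((k+1:ℕ)):ℤ)
    have e3 : (((k+1:ℕ)):ℤ) - 1 = ((k:ℕ):ℤ) := by push_cast; ring
    rwa [e3] at h
  have h01 : xj N ((0:ℕ):ℤ) = 0 := by simp [xj]
  have h11 : xj N ((N:ℕ):ℤ) = 1 := by
    rw [xj, one_div]
    push_cast
    exact mul_inv_cancel₀ (ne_of_gt hNR)
  rw [Ah]
  apply mul_le_mul_of_nonneg_left _ hγ.le
  calc ∑ j ∈ Finset.Icc (1:ℤ) (N:ℤ),
      ζ ((w (j - 1) - ψ (xj N (j - 1))) / δ) * ζ ((w j - ψ (xj N j)) / δ) * (2 * lq N w j)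
      ≤ ∑ j ∈ Finset.Icc (1:ℤ) (N:ℤ), ∫ x in Ioc (xj N (j - 1)) (xj N j), g x :=
        Finset.sum_le_sum hterm
    _ = ∑ k ∈ Finset.range N, ∫ x in Ioc (xj N ((k:ℤ) + 1 - 1)) (xj N ((k:ℤ) + 1)), g x :=
        sum_Icc_eq_range N (fun j => ∫ x in Ioc (xj N (j - 1)) (xj N j), g x)
    _ = ∑ k ∈ Finset.range N, ∫ x in (xj N ((k:ℕ):ℤ))..(xj N (((k+1:ℕ)):ℤ)), g x := by
        apply Finset.sum_congr rfl
        intro k _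
        rw [e1 k, e2 k, intervalIntegral.integral_of_le (hle' k)]
    _ = ∫ x in (xj N ((0:ℕ):ℤ))..(xj N ((N:ℕ):ℤ)), g x := by
        apply intervalIntegral.sum_integral_adjacent_intervals
          (a := fun k : ℕ => xj N ((k:ℕ):ℤ))
        intro k _
        rw [intervalIntegrable_iff_integrableOn_Ioc_of_le (hle' k)]
        have h := hseg (((k+1:ℕ)):ℤ)
        have e3 : (((k+1:ℕ)):ℤ) - 1 = ((k:ℕ):ℤ) := by push_cast; ring
        rwa [e3] at h
    _ = ∫ x in Ioc (0:ℝ) 1, g x := by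
        rw [h01, h11, intervalIntegral.integral_of_le (by norm_num)]

open Set in
private lemma slope_integrable (v : ℝ → ℝ) (hfc : Continuous (deriv v))
    (N : ℕ) (hN : 0 < N) (w : ℤ → ℝ) :
    IntegrableOn (fun x => |slopeFn N w x - deriv v x|) (Ioc (0:ℝ) 1) := by
  have hNR : (0:ℝ) < N := Nat.cast_pos.mpr hN
  have hle : ∀ j : ℤ, xj N (j - 1) ≤ xj N j := by
    intro j
    rw [xj, xj]
    have h2 : ((j:ℝ) - 1) * (1/N) ≤ (j:ℝ) * (1/N) :=
      mul_le_mul_of_nonneg_right (by linarith) (by positivity)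
    push_cast
    linarith
  have hle' : ∀ k : ℕ, xj N ((k:ℕ):ℤ) ≤ xj N (((k+1:ℕ)):ℤ) := by
    intro k
    have h := hle (((k+1:ℕ)):ℤ)
    have e3 : (((k+1:ℕ)):ℤ) - 1 = ((k:ℕ):ℤ) := by push_cast; ring
    rwa [e3] at h
  have hsegint : ∀ j : ℤ, IntegrableOn (fun x => |slopeFn N w x - deriv v x|)
      (Ioc (xj N (j - 1)) (xj N j)) := by
    intro j
    have hbase : IntegrableOn (fun x => |dq N w j - deriv v x|)
        (Ioc (xj N (j - 1)) (xj N j)) :=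
      (continuous_abs.comp (continuous_const.sub hfc)).integrableOn_Ioc
    exact hbase.congr_fun (fun x hx => by rw [slope_on_seg N hN w j hx]) measurableSet_Ioc
  have h01 : xj N ((0:ℕ):ℤ) = 0 := by simp [xj]
  have h11 : xj N ((N:ℕ):ℤ) = 1 := by
    rw [xj, one_div]
    push_cast
    exact mul_inv_cancel₀ (ne_of_gt hNR)
  have key := IntervalIntegrable.trans_iterate (a := fun k : ℕ => xj N ((k:ℕ):ℤ))
    (n := N) (μ := volume) (f := fun x => |slopeFn N w x - deriv v x|) ?_
  · rw [h01, h11, intervalIntegrable_iff_integrableOn_Ioc_of_le (by norm_num : (0:ℝ) ≤ 1)]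
      at key
    exact key
  · intro k _
    rw [intervalIntegrable_iff_integrableOn_Ioc_of_le (hle' k)]
    have h := hsegint (((k+1:ℕ)):ℤ)
    have e3 : (((k+1:ℕ)):ℤ) - 1 = ((k:ℕ):ℤ) := by push_cast; ring
    rwa [e3] at h

private lemma Ah_nonneg (γ : ℝ) (hγ : 0 ≤ γ) (ζ : ℝ → ℝ) (hζ : IsRegularizer ζ)
    (δ : ℝ) (ψ : ℝ → ℝ) (N : ℕ) (w : ℤ → ℝ) : 0 ≤ Ah γ ζ δ ψ N w := by
  rw [Ah]
  apply mul_nonneg hγ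
  apply Finset.sum_nonneg
  intro j _
  have ha := hζ.2.1 ((w (j - 1) - ψ (xj N (j - 1))) / δ)
  have hb := hζ.2.1 ((w j - ψ (xj N j)) / δ)
  have hl : 0 ≤ lq N w j := by rw [lq]; positivity
  exact mul_nonneg (mul_nonneg ha.1 hb.1) (by linarith)

/-- Upper semicontinuity of the discrete adhesion energy. -/
theorem stmt5 (ψ : ℝ → ℝ) (hψ : Continuous ψ) (hψper : ∀ x, ψ (x + 1) = ψ x)
    (v : ℝ → ℝ) (hv : ContDiff ℝ 1 v) (hvper : ∀ x, v (x + 1) = v x)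
    (hvψ : ∀ x, ψ x ≤ v x)
    (γ : ℝ) (hγ : 0 < γ) (ζ : ℝ → ℝ) (hζ : IsRegularizer ζ)
    (Nn : ℕ → ℕ) (hNn : Tendsto Nn atTop atTop)
    (δn : ℕ → ℝ) (hδpos : ∀ n, 0 < δn n) (hδ : Tendsto δn atTop (nhds 0))
    (vn : ℕ → ℤ → ℝ) (hvnper : ∀ n j, vn n (j + Nn n) = vn n j)
    (hunif : TendstoUniformlyOn (fun n x => interp (Nn n) (vn n) x) v atTop
      (Set.Icc (0 : ℝ) 1))
    (hslope : Tendsto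
      (fun n => ∫ x in Set.Ioo (0 : ℝ) 1, |slopeFn (Nn n) (vn n) x - deriv v x|) atTop
      (nhds 0)) :
    limsup (fun n => Ah γ ζ (δn n) ψ (Nn n) (vn n)) atTop ≤
      γ * ∫ x in {x | x ∈ Set.Ioo (0 : ℝ) 1 ∧ v x = ψ x},
        Real.sqrt (1 + deriv v x ^ 2) := by
  classical
  have hfc : Continuous (deriv v) := hv.continuous_deriv le_rfl
  set f : ℝ → ℝ := fun y => Real.sqrt (1 + deriv v y ^ 2) with hfdef
  have hcf : Continuous f := Real.continuous_sqrt.comp (continuous_const.add (hfc.pow 2))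
  have hfpos : ∀ x, 0 ≤ f x := fun x => Real.sqrt_nonneg _
  set L : ℝ := ∫ x in {x | x ∈ Set.Ioo (0:ℝ) 1 ∧ v x = ψ x}, f x with hLdef
  apply le_of_forall_pos_le_add
  intro ε hε
  obtain ⟨η, hηpos, hηint⟩ :=
    contact_lim ψ v f hψ hv.continuous hvψ hcf hfpos (ε/γ) (by positivity)
  set K : Set ℝ := {x ∈ Set.Icc (0:ℝ) 1 | v x - ψ x ≤ η} with hKdef
  have hKmeas : MeasurableSet K :=
    measurableSet_Icc.inter ((hv.continuous.sub hψ).measurable measurableSet_Iic)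
  have hKsub : K ⊆ Set.Icc 0 1 := fun x hx => hx.1
  set IK : ℝ := ∫ x in Set.Ioc (0:ℝ) 1, K.indicator f x with hIKdef
  have hUC := (isCompact_Icc (a := (0:ℝ)) (b := 1)).uniformContinuousOn_of_continuous
      ((hv.continuous.sub hψ).continuousOn)
  rw [Metric.uniformContinuousOn_iff] at hUC
  obtain ⟨ρ, hρpos, hρ⟩ := hUC (η/3) (by positivity)
  have hN1 : ∀ᶠ n in atTop, 1 ≤ Nn n := hNn.eventually_ge_atTop 1
  have hδs : ∀ᶠ n in atTop, δn n < η/3 := hδ.eventually_lt_const (by positivity)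
  have hmesh : Tendsto (fun n => (1:ℝ)/(Nn n)) atTop (nhds 0) :=
    tendsto_one_div_atTop_nhds_zero_nat.comp hNn
  have hms : ∀ᶠ n in atTop, (1:ℝ)/(Nn n) < ρ := hmesh.eventually_lt_const hρpos
  have hus : ∀ᶠ n in atTop, ∀ x ∈ Set.Icc (0:ℝ) 1,
      dist (v x) (interp (Nn n) (vn n) x) < η/3 :=
    (Metric.tendstoUniformlyOn_iff.mp hunif) (η/3) (by positivity)
  set b : ℕ → ℝ :=
    fun n => ∫ x in Set.Ioo (0:ℝ) 1, |slopeFn (Nn n) (vn n) x - deriv v x| with hbdef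
  have hIoceq : ∀ n,
      (∫ x in Set.Ioc (0:ℝ) 1, |slopeFn (Nn n) (vn n) x - deriv v x|) = b n :=
    fun n => (setIntegral_congr_set (MeasureTheory.Ioo_ae_eq_Ioc (a := (0:ℝ)) (b := 1)).symm)
  set D : ℕ → ℝ := fun n => γ * (IK + b n) with hDdef
  have hDlim : Tendsto D atTop (nhds (γ * IK)) := by
    have h := (tendsto_const_nhds (x := IK) (f := atTop (α := ℕ))).add hslope
    rw [add_zero] at h
    exact h.const_mul γ
  have hbound : ∀ᶠ n in atTop, Ah γ ζ (δn n) ψ (Nn n) (vn n) ≤ D n := by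
    filter_upwards [hN1, hδs, hms, hus] with n hn1 hnδ hnm hnu
    have hNpos : 0 < Nn n := hn1
    have hNR : (0:ℝ) < (Nn n) := Nat.cast_pos.mpr hNpos
    have hKcond : ∀ j : ℤ, 1 ≤ j → j ≤ (Nn n : ℤ) →
        |vn n j - ψ (xj (Nn n) j)| ≤ δn n →
        Set.Ioc (xj (Nn n) (j - 1)) (xj (Nn n) j) ⊆ K := by
      intro j hj1 hj2 hjδ x hx
      have hj1R : (1:ℝ) ≤ (j:ℝ) := by exact_mod_cast hj1
      have hj2R : (j:ℝ) ≤ (Nn n : ℝ) := by exact_mod_cast hj2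
      have hxl := hx.1
      have hxr := hx.2
      have hlen : xj (Nn n) j - xj (Nn n) (j - 1) = 1/(Nn n) := by
        rw [xj, xj]
        push_cast
        ring
      have hxj1nn : (0:ℝ) ≤ xj (Nn n) (j - 1) := by
        rw [xj]
        push_cast
        apply mul_nonneg (by linarith) (by positivity)
      have hxjle : xj (Nn n) j ≤ 1 := by
        rw [xj]
        calc (j:ℝ) * (1/(Nn n)) ≤ (Nn n : ℝ) * (1/(Nn n)) :=
              mul_le_mul_of_nonneg_right hj2R (by positivity)
          _ = 1 := by field_simp
      have hxmem : x ∈ Set.Icc (0:ℝ) 1 := ⟨le_trans hxj1nn hxl.le, le_trans hxr hxjle⟩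
      have hxjmem : xj (Nn n) j ∈ Set.Icc (0:ℝ) 1 :=
        ⟨le_trans hxj1nn (by linarith), hxjle⟩
      have hdist : dist x (xj (Nn n) j) < ρ := by
        rw [Real.dist_eq, abs_of_nonpos (by linarith)]
        linarith
      have h1 := hρ x hxmem (xj (Nn n) j) hxjmem hdist
      rw [Real.dist_eq] at h1
      have h2 := hnu (xj (Nn n) j) hxjmem
      rw [interp_mesh (Nn n) hNpos (vn n) j, Real.dist_eq] at h2
      refine ⟨hxmem, ?_⟩
      have h1' := (abs_lt.mp h1).2
      have h2' := (abs_lt.mp h2).2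
      have h3' := (abs_le.mp hjδ).2
      simp only [Pi.sub_apply] at h1'
      linarith
    have hmain := Ah_bound ψ v hfc γ hγ ζ hζ (Nn n) hNpos (vn n) (δn n) (hδpos n)
      K hKmeas hKcond
    refine hmain.trans ?_
    have hint1 : IntegrableOn (K.indicator f) (Set.Ioc (0:ℝ) 1) :=
      (hcf.integrableOn_Ioc).indicator hKmeas
    have hint2 := slope_integrable v hfc (Nn n) hNpos (vn n)
    have hsplit : (∫ x in Set.Ioc (0:ℝ) 1,
        (K.indicator f x + |slopeFn (Nn n) (vn n) x - deriv v x|)) = IK + b n := by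
      rw [MeasureTheory.integral_add hint1 hint2, hIoceq n]
    rw [hDdef]
    simp only
    rw [← hsplit]
  have hcb : IsCoboundedUnder (· ≤ ·) atTop (fun n => Ah γ ζ (δn n) ψ (Nn n) (vn n)) :=
    isCoboundedUnder_le_of_le atTop
      (fun n => Ah_nonneg γ hγ.le ζ hζ (δn n) ψ (Nn n) (vn n))
  have h1 := limsup_le_limsup hbound hcb hDlim.isBoundedUnder_le
  rw [hDlim.limsup_eq] at h1
  refine h1.trans ?_
  have hIKle : IK ≤ L + ε/γ := by
    have e1 : IK = ∫ x in K ∩ Set.Ioc (0:ℝ) 1, f x := by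
      rw [hIKdef, integral_indicator hKmeas, Measure.restrict_restrict hKmeas]
    rw [e1]
    refine le_trans ?_ hηint
    apply setIntegral_mono_set (hcf.integrableOn_Icc.mono_set hKsub)
      (ae_of_all _ hfpos)
      (HasSubset.Subset.eventuallyLE Set.inter_subset_left)
  calc γ * IK ≤ γ * (L + ε/γ) := mul_le_mul_of_nonneg_left hIKle hγ.le
    _ = γ * L + ε := by
        field_simp


end
end

section
/- Convergence of the discrete adhesion energy of interpolants: Let ψ, v : ℝ → ℝ be twice continuously differentiable and 1-periodic with v(x) ≥ ψ(x) for all x, and let γ > 0 and let ζ be a regularizer. Let Nₙ → ∞ be integers, hₙ = 1/Nₙ, and δₙ > 0 with δₙ → 0 and hₙ²/δₙ → 0. Then A_{hₙ,δₙ}[Π_{hₙ} v] → γ · ∫_{{x ∈ (0,1) : v(x) = ψ(x)}} √(1 + v'(x)²) dx as n → ∞. -/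
open Filter MeasureTheory

noncomputable section

/-! ### Auxiliary material for the proof -/

/-- step function representing the adhesion-energy summand -/
def Fad (ζ ψ vv : ℝ → ℝ) (N : ℕ) (δ : ℝ) (x : ℝ) : ℝ :=
  ζ ((vv (xj N (⌈x * N⌉ - 1)) - ψ (xj N (⌈x * N⌉ - 1))) / δ) *
    ζ ((vv (xj N ⌈x * N⌉) - ψ (xj N ⌈x * N⌉)) / δ) *
    Real.sqrt (1 + dq N (fun j => vv (xj N j)) ⌈x * N⌉ ^ 2)

lemma xj_sub (N : ℕ) (j : ℤ) : xj N j - xj N (j - 1) = 1 / N := by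
  simp only [xj]; push_cast; ring

lemma sum_Icc_one_int (N : ℕ) (f : ℤ → ℝ) :
    ∑ j ∈ Finset.Icc (1:ℤ) (N:ℤ), f j = ∑ k ∈ Finset.range N, f ((k:ℤ)+1) := by
  induction N with
  | zero => simp
  | succ n ih =>
      rw [Finset.sum_range_succ, ← ih]
      have h1 : Finset.Icc (1:ℤ) ((n+1:ℕ):ℤ) = insert ((n:ℤ)+1) (Finset.Icc 1 (n:ℤ)) := by
        ext x; simp [Finset.mem_Icc]; omega
      rw [h1, Finset.sum_insert (by simp [Finset.mem_Icc])]
      ring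

lemma ceil_on_piece {N : ℕ} (hN : 0 < (N:ℝ)) {k : ℤ} {x : ℝ}
    (h1 : (k:ℝ)/N < x) (h2 : x ≤ ((k:ℝ)+1)/N) : ⌈x * N⌉ = k + 1 := by
  rw [Int.ceil_eq_iff]
  have hA : (k:ℝ) < x * N := (div_lt_iff₀ hN).mp h1
  have hB : x * N ≤ (k:ℝ) + 1 := by
    calc x * N ≤ (((k:ℝ)+1)/N) * N := mul_le_mul_of_nonneg_right h2 hN.le
    _ = (k:ℝ) + 1 := by field_simp
  constructor
  · push_cast; linarith
  · push_cast; linarith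

lemma measurable_Fad (ζ ψ vv : ℝ → ℝ) (N : ℕ) (δ : ℝ) : Measurable (Fad ζ ψ vv N δ) := by
  have h : Fad ζ ψ vv N δ = (fun j : ℤ =>
      ζ ((vv (xj N (j - 1)) - ψ (xj N (j - 1))) / δ) *
      ζ ((vv (xj N j) - ψ (xj N j)) / δ) *
      Real.sqrt (1 + dq N (fun i => vv (xj N i)) j ^ 2)) ∘ (fun x : ℝ => ⌈x * (N:ℝ)⌉) := rfl
  rw [h]
  exact (measurable_of_countable _).comp (Int.measurable_ceil.comp (measurable_id.mul_const _))

lemma ah_eq_integral (γ : ℝ) (ζ ψ vv : ℝ → ℝ) (δ : ℝ) (N : ℕ) (hN : 1 ≤ N) :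
    Ah γ ζ δ ψ N (fun j => vv (xj N j)) = γ * ∫ x in Set.Ioc (0:ℝ) 1, Fad ζ ψ vv N δ x := by
  have hNpos : (0:ℝ) < N := by exact_mod_cast hN
  set c : ℕ → ℝ := fun k =>
    ζ ((vv (xj N k) - ψ (xj N k)) / δ) *
    ζ ((vv (xj N ((k:ℤ)+1)) - ψ (xj N ((k:ℤ)+1))) / δ) *
    Real.sqrt (1 + dq N (fun j => vv (xj N j)) ((k:ℤ)+1) ^ 2) with hc
  have hle : ∀ k : ℕ, (k:ℝ)/N ≤ ((k:ℝ)+1)/N := fun k =>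
    (div_le_div_iff_of_pos_right hNpos).mpr (by linarith)
  have heqon : ∀ k : ℕ, Set.EqOn (Fad ζ ψ vv N δ) (fun _ => c k)
      (Set.Ioc ((k:ℝ)/N) (((k:ℝ)+1)/N)) := by
    intro k x hx
    have hc1 : ⌈x * N⌉ = (k:ℤ) + 1 :=
      ceil_on_piece (k := (k:ℤ)) hNpos (by push_cast; exact hx.1) (by push_cast; exact hx.2)
    simp only [Fad, hc1, add_sub_cancel_right, hc]
  have hIntOn : ∀ k : ℕ, IntegrableOn (Fad ζ ψ vv N δ) (Set.Ioc ((k:ℝ)/N) (((k:ℝ)+1)/N)) volume := by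
    intro k
    exact ((integrableOn_const measure_Ioc_lt_top.ne) :
      IntegrableOn (fun _ => c k) _ _).congr_fun (heqon k).symm measurableSet_Ioc
  have hpiece : ∀ k : ℕ, (∫ x in ((k:ℝ)/N)..(((k:ℝ)+1)/N), Fad ζ ψ vv N δ x) = c k * (1/N) := by
    intro k
    rw [intervalIntegral.integral_of_le (hle k),
      setIntegral_congr_fun measurableSet_Ioc (heqon k), setIntegral_const, measureReal_def, Real.volume_Ioc,
      smul_eq_mul, mul_comm]
    congr 1
    rw [ENNReal.toReal_ofReal (by linarith [hle k])]
    field_simp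
    ring
  -- adjacency
  set a : ℕ → ℝ := fun k => (k:ℝ)/N with ha
  have hadj : ∑ k ∈ Finset.range N, (∫ x in a k..a (k+1), Fad ζ ψ vv N δ x)
      = ∫ x in (a 0)..(a N), Fad ζ ψ vv N δ x := by
    apply intervalIntegral.sum_integral_adjacent_intervals
    intro k _
    have : a (k+1) = ((k:ℝ)+1)/N := by simp [ha]
    rw [this]
    rw [intervalIntegrable_iff_integrableOn_Ioc_of_le (hle k)]
    exact hIntOn k
  have ha0 : a 0 = 0 := by simp [ha]
  have haN : a N = 1 := by simp [ha]; omega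
  have hIoc : (∫ x in (a 0)..(a N), Fad ζ ψ vv N δ x) = ∫ x in Set.Ioc (0:ℝ) 1, Fad ζ ψ vv N δ x := by
    rw [ha0, haN, intervalIntegral.integral_of_le (by norm_num : (0:ℝ) ≤ 1)]
  have hInt01 : (∫ x in Set.Ioc (0:ℝ) 1, Fad ζ ψ vv N δ x)
      = ∑ k ∈ Finset.range N, c k * (1/N) := by
    rw [← hIoc, ← hadj]
    apply Finset.sum_congr rfl
    intro k _
    have : a (k+1) = ((k:ℝ)+1)/N := by simp [ha]
    rw [this, hpiece k]
  rw [hInt01, Ah]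
  congr 1
  rw [sum_Icc_one_int]
  apply Finset.sum_congr rfl
  intro k _
  have h1 : ((k:ℤ) + 1 - 1) = (k:ℤ) := by ring
  simp only [h1, lq, hc]
  ring

lemma regularizer_facts {ζ : ℝ → ℝ} (hζ : IsRegularizer ζ) :
    Continuous ζ ∧ (∀ t, 0 ≤ ζ t ∧ ζ t ≤ 1) ∧ (∀ t, 1 < t → ζ t = 0) ∧ ζ 0 = 1 :=
  ⟨hζ.1.continuous, hζ.2.1, hζ.2.2.2.1, hζ.2.2.2.2.2⟩

/-- Mean value theorem for the difference quotient. -/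
lemma dq_eq_deriv (v : ℝ → ℝ) (hv : ContDiff ℝ 2 v) (N : ℕ) (hN : 1 ≤ N) (j : ℤ) :
    ∃ ξ ∈ Set.Ioo (xj N (j-1)) (xj N j), dq N (fun i => v (xj N i)) j = deriv v ξ := by
  have hNpos : (0:ℝ) < N := by exact_mod_cast hN
  have hh : (0:ℝ) < 1/N := by positivity
  have hlt : xj N (j-1) < xj N j := by
    have := xj_sub N j; linarith
  obtain ⟨ξ, hξ, hEq⟩ := exists_hasDerivAt_eq_slope v (deriv v) hlt
    (hv.continuous.continuousOn)
    (fun y _ => ((hv.differentiable two_ne_zero) y).hasDerivAt)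
  refine ⟨ξ, hξ, ?_⟩
  rw [hEq]
  simp only [dq]
  rw [xj_sub]

/-- quadratic bound near a zero of a nonnegative `C²` function -/
lemma quad_bound (g : ℝ → ℝ) (hg : ContDiff ℝ 2 g) (hg0 : ∀ t, 0 ≤ g t) (K : ℝ)
    (hK : ∀ t ∈ Set.Icc (0:ℝ) 1, |deriv (deriv g) t| ≤ K)
    {x y : ℝ} (hx : x ∈ Set.Icc (0:ℝ) 1) (hy : y ∈ Set.Icc (0:ℝ) 1) (hgx : g x = 0) :
    g y ≤ K * (y - x)^2 := by
  have hdiff : Differentiable ℝ g := hg.differentiable two_ne_zero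
  have hg1 : ContDiff ℝ 1 (deriv g) := by
    have h2 : ContDiff ℝ ((1:WithTop ℕ∞) + 1) g := by exact hg
    exact (contDiff_succ_iff_deriv.mp h2).2.2
  have hdiff2 : Differentiable ℝ (deriv g) := hg1.differentiable one_ne_zero
  have hdx : deriv g x = 0 := by
    have hmin : IsLocalMin g x :=
      Filter.Eventually.of_forall (fun t => by rw [hgx]; exact hg0 t)
    exact hmin.deriv_eq_zero
  have hKnn : 0 ≤ K := le_trans (abs_nonneg _) (hK x hx)
  -- step 1 : |deriv g t| ≤ K * |t - x| on Icc 0 1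
  have h1 : ∀ t ∈ Set.Icc (0:ℝ) 1, |deriv g t| ≤ K * |t - x| := by
    intro t ht
    have := Convex.norm_image_sub_le_of_norm_deriv_le (f := deriv g)
      (fun z _ => hdiff2 z) (fun z hz => hK z hz) (convex_Icc 0 1) hx ht
    simpa [hdx, Real.norm_eq_abs] using this
  -- step 2 : bound on the segment
  have hsub : Set.uIcc x y ⊆ Set.Icc 0 1 := Set.uIcc_subset_Icc hx hy
  have h2 : ‖g y - g x‖ ≤ (K * |y - x|) * ‖y - x‖ := by
    apply Convex.norm_image_sub_le_of_norm_deriv_le (f := g)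
      (fun z _ => hdiff z) ?_ (convex_uIcc x y) Set.left_mem_uIcc Set.right_mem_uIcc
    intro z hz
    have hz' : |z - x| ≤ |y - x| := by
      rcases le_total x y with h | h
      · rw [Set.uIcc_of_le h] at hz
        rw [abs_of_nonneg (by linarith [hz.1]), abs_of_nonneg (by linarith)]
        linarith [hz.2]
      · rw [Set.uIcc_of_ge h] at hz
        rw [abs_of_nonpos (by linarith [hz.2]), abs_of_nonpos (by linarith)]
        linarith [hz.1]
    calc ‖deriv g z‖ = |deriv g z| := rfl
    _ ≤ K * |z - x| := h1 z (hsub hz)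
    _ ≤ K * |y - x| := by nlinarith
  have : g y - g x ≤ (K * |y - x|) * |y - x| := le_trans (le_abs_self _) h2
  have hsq : |y - x| * |y - x| = (y - x)^2 := by
    rw [← abs_mul, abs_of_nonneg (by nlinarith)]; ring
  nlinarith [this, hgx]


lemma bound_helper {ζ : ℝ → ℝ} (hζ01 : ∀ t, 0 ≤ ζ t ∧ ζ t ≤ 1) {a b d M : ℝ} (hd : |d| ≤ M) :
    |ζ a * ζ b * Real.sqrt (1 + d ^ 2)| ≤ Real.sqrt (1 + M ^ 2) := by
  have h1 := hζ01 a; have h2 := hζ01 b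
  have hs : Real.sqrt (1 + d^2) ≤ Real.sqrt (1 + M^2) :=
    Real.sqrt_le_sqrt (by nlinarith [abs_nonneg d, sq_abs d])
  have hsnn : 0 ≤ Real.sqrt (1 + d^2) := Real.sqrt_nonneg _
  rw [abs_of_nonneg (mul_nonneg (mul_nonneg h1.1 h2.1) hsnn)]
  calc ζ a * ζ b * Real.sqrt (1+d^2) ≤ 1 * 1 * Real.sqrt (1+d^2) := by
        apply mul_le_mul_of_nonneg_right ?_ hsnn
        calc ζ a * ζ b ≤ 1 * 1 := mul_le_mul h1.2 h2.2 h2.1 zero_le_one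
        _ = 1 * 1 := by ring
  _ = Real.sqrt (1+d^2) := by ring
  _ ≤ _ := hs

lemma mesh_facts (N : ℕ) (hN : 1 ≤ N) {x : ℝ} (hx1 : 0 < x) (hx2 : x ≤ 1) :
    (0 ≤ xj N (⌈x * N⌉ - 1) ∧ xj N ⌈x * N⌉ ≤ 1) ∧
    (x - 1/N ≤ xj N (⌈x * N⌉ - 1) ∧ xj N (⌈x * N⌉ - 1) < x) ∧
    (x ≤ xj N ⌈x * N⌉ ∧ xj N ⌈x * N⌉ < x + 1/N) := by
  have hNpos : (0:ℝ) < N := by exact_mod_cast hN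
  have hj1 : 1 ≤ ⌈x * N⌉ := Int.ceil_pos.mpr (by positivity)
  have hjN : ⌈x * N⌉ ≤ (N:ℤ) := Int.ceil_le.mpr (by push_cast; nlinarith)
  set J : ℝ := (⌈x * N⌉ : ℝ) with hJ
  have hceil_ge : x * N ≤ J := Int.le_ceil _
  have hceil_lt : J < x * N + 1 := Int.ceil_lt_add_one _
  have hJ1 : (1:ℝ) ≤ J := by rw [hJ]; exact_mod_cast hj1
  have hJN : J ≤ (N:ℝ) := by rw [hJ]; exact_mod_cast hjN
  have e1 : xj N ⌈x * N⌉ = J / N := by rw [xj, mul_one_div]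
  have e2 : xj N (⌈x * N⌉ - 1) = (J - 1) / N := by
    rw [xj, mul_one_div]; push_cast; rw [hJ]
  rw [e1, e2]
  refine ⟨⟨?_, ?_⟩, ⟨?_, ?_⟩, ?_, ?_⟩
  · exact div_nonneg (by linarith) hNpos.le
  · exact (div_le_one hNpos).mpr hJN
  · rw [le_div_iff₀ hNpos, sub_mul, div_mul_cancel₀ _ (ne_of_gt hNpos)]; nlinarith
  · rw [div_lt_iff₀ hNpos]; nlinarith
  · rw [le_div_iff₀ hNpos]; nlinarith
  · rw [div_lt_iff₀ hNpos, add_mul, div_mul_cancel₀ _ (ne_of_gt hNpos)]; nlinarith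

lemma dq_bound (v : ℝ → ℝ) (hv : ContDiff ℝ 2 v) (N : ℕ) (hN : 1 ≤ N) {x : ℝ}
    (hx1 : 0 < x) (hx2 : x ≤ 1) {M : ℝ} (hM : ∀ y ∈ Set.Icc (0:ℝ) 1, |deriv v y| ≤ M) :
    |dq N (fun i => v (xj N i)) ⌈x * N⌉| ≤ M := by
  obtain ⟨ξ, hξ, he⟩ := dq_eq_deriv v hv N hN ⌈x * N⌉
  obtain ⟨⟨hm1, hm2⟩, -, -⟩ := mesh_facts N hN hx1 hx2
  rw [he]
  exact hM ξ ⟨le_trans hm1 hξ.1.le, le_trans hξ.2.le hm2⟩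

/-- Convergence of the discrete adhesion energy of the interpolants `Π_{hₙ} v`. -/
theorem stmt6 (ψ : ℝ → ℝ) (hψ : ContDiff ℝ 2 ψ) (hψper : ∀ x, ψ (x + 1) = ψ x)
    (v : ℝ → ℝ) (hv : ContDiff ℝ 2 v) (hvper : ∀ x, v (x + 1) = v x)
    (hvψ : ∀ x, ψ x ≤ v x)
    (γ : ℝ) (hγ : 0 < γ) (ζ : ℝ → ℝ) (hζ : IsRegularizer ζ)
    (Nn : ℕ → ℕ) (hNn : Tendsto Nn atTop atTop)
    (δn : ℕ → ℝ) (hδpos : ∀ n, 0 < δn n) (hδ : Tendsto δn atTop (nhds 0))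
    (hratio : Tendsto (fun n => ((1 : ℝ) / Nn n) ^ 2 / δn n) atTop (nhds 0)) :
    Tendsto (fun n => Ah γ ζ (δn n) ψ (Nn n) (fun j : ℤ => v (xj (Nn n) j))) atTop
      (nhds (γ * ∫ x in {x | x ∈ Set.Ioo (0 : ℝ) 1 ∧ v x = ψ x},
        Real.sqrt (1 + deriv v x ^ 2))) := by
  have hζc : Continuous ζ := hζ.1.continuous
  have hζ01 : ∀ t, 0 ≤ ζ t ∧ ζ t ≤ 1 := hζ.2.1
  have hζzero : ∀ t, 1 < t → ζ t = 0 := hζ.2.2.2.1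
  have hζone : ζ 0 = 1 := hζ.2.2.2.2.2
  set g : ℝ → ℝ := fun x => v x - ψ x with hgdef
  have hgC : ContDiff ℝ 2 g := hv.sub hψ
  have hg0 : ∀ t, 0 ≤ g t := fun t => sub_nonneg.mpr (hvψ t)
  clear_value g
  -- bound on the derivative of v
  obtain ⟨zM, hzM, hM'⟩ := isCompact_Icc.exists_isMaxOn (Set.nonempty_Icc.mpr zero_le_one)
    ((hv.continuous_deriv one_le_two).abs.continuousOn :
      ContinuousOn (fun t => |deriv v t|) (Set.Icc (0:ℝ) 1))
  set M : ℝ := |deriv v zM| with hMdef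
  have hM : ∀ y ∈ Set.Icc (0:ℝ) 1, |deriv v y| ≤ M := fun y hy => hM' hy
  have hMnn : 0 ≤ M := abs_nonneg _
  clear_value M
  -- bound on the second derivative of g
  have hg1 : ContDiff ℝ 1 (deriv g) := by
    have h2 : ContDiff ℝ ((1:WithTop ℕ∞) + 1) g := by exact hgC
    exact (contDiff_succ_iff_deriv.mp h2).2.2
  obtain ⟨zK, hzK, hKb'⟩ := isCompact_Icc.exists_isMaxOn (Set.nonempty_Icc.mpr zero_le_one)
    ((hg1.continuous_deriv le_rfl).abs.continuousOn :
      ContinuousOn (fun t => |deriv (deriv g) t|) (Set.Icc (0:ℝ) 1))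
  set K : ℝ := |deriv (deriv g) zK| with hKdef
  have hKb : ∀ y ∈ Set.Icc (0:ℝ) 1, |deriv (deriv g) y| ≤ K := fun y hy => hKb' hy
  clear_value K
  -- the contact set
  set S : Set ℝ := {x | x ∈ Set.Ioo (0 : ℝ) 1 ∧ v x = ψ x} with hSdef
  have hSsub : S ⊆ Set.Ioo 0 1 := fun x hx => hx.1
  have hSmeas : MeasurableSet S := by
    have h : S = Set.Ioo (0:ℝ) 1 ∩ {x | v x = ψ x} := rfl
    rw [h]
    exact measurableSet_Ioo.inter (isClosed_eq hv.continuous hψ.continuous).measurableSet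
  clear_value S
  have hNge : ∀ᶠ n in atTop, 1 ≤ Nn n := hNn.eventually_ge_atTop 1
  have hhto : Tendsto (fun n => (1:ℝ)/(Nn n)) atTop (nhds 0) :=
    tendsto_one_div_atTop_nhds_zero_nat.comp hNn
  -- pointwise convergence
  have hlim : ∀ x ∈ Set.Ioo (0:ℝ) 1, Tendsto (fun n => Fad ζ ψ v (Nn n) (δn n) x) atTop
      (nhds (S.indicator (fun y => Real.sqrt (1 + deriv v y ^ 2)) x)) := by
    intro x hx
    have hx1 : 0 < x := hx.1
    have hx2 : x ≤ 1 := hx.2.le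
    have hmf := fun n (hn : 1 ≤ Nn n) => mesh_facts (Nn n) hn hx1 hx2
    have hxjto : Tendsto (fun n => xj (Nn n) ⌈x * (Nn n:ℝ)⌉) atTop (nhds x) := by
      apply tendsto_of_tendsto_of_tendsto_of_le_of_le' tendsto_const_nhds
        (by have h := (tendsto_const_nhds (x := x)).add hhto; rw [add_zero] at h; exact h)
      · exact hNge.mono fun n hn => (hmf n hn).2.2.1
      · exact hNge.mono fun n hn => (hmf n hn).2.2.2.le
    have hxjto' : Tendsto (fun n => xj (Nn n) (⌈x * (Nn n:ℝ)⌉ - 1)) atTop (nhds x) := by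
      apply tendsto_of_tendsto_of_tendsto_of_le_of_le'
        (by have h := (tendsto_const_nhds (x := x)).sub hhto; rw [sub_zero] at h; exact h) tendsto_const_nhds
      · exact hNge.mono fun n hn => (hmf n hn).2.1.1
      · exact hNge.mono fun n hn => (hmf n hn).2.1.2.le
    -- convergence of the difference quotients
    have hdqto : Tendsto (fun n => dq (Nn n) (fun i => v (xj (Nn n) i)) ⌈x * (Nn n:ℝ)⌉)
        atTop (nhds (deriv v x)) := by
      set ξ : ℕ → ℝ := fun n => if h : 1 ≤ Nn n then
        (dq_eq_deriv v hv (Nn n) h ⌈x * (Nn n:ℝ)⌉).choose else x with hξdef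
      have hspec : ∀ n, 1 ≤ Nn n →
          ξ n ∈ Set.Ioo (xj (Nn n) (⌈x * (Nn n:ℝ)⌉ - 1)) (xj (Nn n) ⌈x * (Nn n:ℝ)⌉) ∧
          dq (Nn n) (fun i => v (xj (Nn n) i)) ⌈x * (Nn n:ℝ)⌉ = deriv v (ξ n) := by
        intro n h
        have := (dq_eq_deriv v hv (Nn n) h ⌈x * (Nn n:ℝ)⌉).choose_spec
        simp only [hξdef, dif_pos h]
        exact this
      have hξto : Tendsto ξ atTop (nhds x) := by
        apply tendsto_of_tendsto_of_tendsto_of_le_of_le'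
          (by have h := (tendsto_const_nhds (x := x)).sub hhto; rw [sub_zero] at h; exact h)
          (by have h := (tendsto_const_nhds (x := x)).add hhto; rw [add_zero] at h; exact h)
        · exact hNge.mono fun n hn =>
            le_trans (hmf n hn).2.1.1 ((hspec n hn).1.1.le)
        · exact hNge.mono fun n hn =>
            le_trans ((hspec n hn).1.2.le) (hmf n hn).2.2.2.le
      have hc := ((hv.continuous_deriv one_le_two).tendsto x).comp hξto
      exact Tendsto.congr' (hNge.mono fun n hn => ((hspec n hn).2).symm) hc
    have hsq : Tendsto (fun n =>
        Real.sqrt (1 + dq (Nn n) (fun i => v (xj (Nn n) i)) ⌈x * (Nn n:ℝ)⌉ ^ 2)) atTop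
        (nhds (Real.sqrt (1 + deriv v x ^ 2))) :=
      (tendsto_const_nhds.add (hdqto.pow 2)).sqrt
    by_cases hcontact : v x = ψ x
    · -- contact point
      have hgx : g x = 0 := by rw [hgdef]; simp [hcontact]
      have hζto : ∀ b : ℕ → ℤ,
          (∀ n, 1 ≤ Nn n → xj (Nn n) (b n) ∈ Set.Icc (0:ℝ) 1) →
          (∀ n, 1 ≤ Nn n → |xj (Nn n) (b n) - x| ≤ 1/(Nn n)) →
          Tendsto (fun n => ζ ((v (xj (Nn n) (b n)) - ψ (xj (Nn n) (b n))) / δn n))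
            atTop (nhds 1) := by
        intro b hb1 hb2
        have harg : Tendsto (fun n => (v (xj (Nn n) (b n)) - ψ (xj (Nn n) (b n))) / δn n)
            atTop (nhds 0) := by
          apply tendsto_of_tendsto_of_tendsto_of_le_of_le' tendsto_const_nhds
            (by have h := hratio.const_mul K; rw [mul_zero] at h; exact h)
          · exact Eventually.of_forall fun n =>
              div_nonneg (sub_nonneg.mpr (hvψ _)) (hδpos n).le
          · apply hNge.mono
            intro n hn
            have hq : g (xj (Nn n) (b n)) ≤ K * (xj (Nn n) (b n) - x)^2 :=
              quad_bound g hgC hg0 K hKb ⟨hx1.le, hx2⟩ (hb1 n hn) hgx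
            have hq2 : g (xj (Nn n) (b n)) ≤ K * ((1:ℝ)/(Nn n))^2 := by
              have hKnn : 0 ≤ K := le_trans (abs_nonneg _) (hKb x ⟨hx1.le, hx2⟩)
              have h2 := hb2 n hn
              have : (xj (Nn n) (b n) - x)^2 ≤ ((1:ℝ)/(Nn n))^2 := by
                have h0 : (0:ℝ) ≤ 1/(Nn n) := le_trans (abs_nonneg _) h2
                nlinarith [abs_nonneg (xj (Nn n) (b n) - x), sq_abs (xj (Nn n) (b n) - x)]
              nlinarith [mul_le_mul_of_nonneg_left this hKnn]
            have hδp := hδpos n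
            calc (v (xj (Nn n) (b n)) - ψ (xj (Nn n) (b n))) / δn n
                = g (xj (Nn n) (b n)) / δn n := by rw [hgdef]
            _ ≤ (K * ((1:ℝ)/(Nn n))^2) / δn n := by
                exact (div_le_div_iff_of_pos_right hδp).mpr hq2
            _ = K * (((1:ℝ)/(Nn n))^2 / δn n) := by ring
        have hcζ := (hζc.tendsto 0).comp harg
        rw [hζone] at hcζ
        exact hcζ
      have ht1 : Tendsto (fun n => ζ ((v (xj (Nn n) (⌈x * (Nn n:ℝ)⌉ - 1)) -
          ψ (xj (Nn n) (⌈x * (Nn n:ℝ)⌉ - 1))) / δn n)) atTop (nhds 1) := by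
        apply hζto
        · intro n hn
          exact ⟨(hmf n hn).1.1, le_trans (hmf n hn).2.1.2.le hx2⟩
        · intro n hn
          have h1 := (hmf n hn).2.1.1
          have h2 := (hmf n hn).2.1.2
          rw [abs_le]
          constructor <;> linarith
      have ht2 : Tendsto (fun n => ζ ((v (xj (Nn n) ⌈x * (Nn n:ℝ)⌉) -
          ψ (xj (Nn n) ⌈x * (Nn n:ℝ)⌉)) / δn n)) atTop (nhds 1) := by
        apply hζto
        · intro n hn
          exact ⟨le_trans hx1.le (hmf n hn).2.2.1, (hmf n hn).1.2⟩
        · intro n hn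
          have h1 := (hmf n hn).2.2.1
          have h2 := (hmf n hn).2.2.2
          rw [abs_le]
          constructor <;> linarith
      have hmem : x ∈ S := by rw [hSdef]; exact ⟨hx, hcontact⟩
      rw [Set.indicator_of_mem hmem]
      have := (ht1.mul ht2).mul hsq
      rw [one_mul, one_mul] at this
      exact this
    · -- non-contact point
      have hgpos : 0 < g x := by
        rw [hgdef]
        exact sub_pos.mpr (lt_of_le_of_ne (hvψ x) (fun h => hcontact h.symm))
      have hgc : Tendsto (fun n => g (xj (Nn n) ⌈x * (Nn n:ℝ)⌉)) atTop (nhds (g x)) :=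
        (hgC.continuous.tendsto x).comp hxjto
      have hev1 : ∀ᶠ n in atTop, g x / 2 < g (xj (Nn n) ⌈x * (Nn n:ℝ)⌉) :=
        hgc.eventually (eventually_gt_nhds (show g x / 2 < g x by linarith))
      have hev2 : ∀ᶠ n in atTop, δn n < g x / 2 :=
        hδ.eventually (eventually_lt_nhds (show (0:ℝ) < g x / 2 by linarith))
      have hzero : ∀ᶠ n in atTop, Fad ζ ψ v (Nn n) (δn n) x = 0 := by
        filter_upwards [hev1, hev2] with n h1 h2
        have hδp := hδpos n
        have hgt : 1 < (v (xj (Nn n) ⌈x * (Nn n:ℝ)⌉) - ψ (xj (Nn n) ⌈x * (Nn n:ℝ)⌉)) / δn n := by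
          rw [lt_div_iff₀ hδp, one_mul]
          have : g x / 2 < g (xj (Nn n) ⌈x * (Nn n:ℝ)⌉) := h1
          calc δn n < g x / 2 := h2
          _ < g (xj (Nn n) ⌈x * (Nn n:ℝ)⌉) := h1
          _ = v (xj (Nn n) ⌈x * (Nn n:ℝ)⌉) - ψ (xj (Nn n) ⌈x * (Nn n:ℝ)⌉) := by rw [hgdef]
        rw [Fad, hζzero _ hgt]
        ring
      have hnotmem : x ∉ S := by rw [hSdef]; exact fun hS => hcontact hS.2
      rw [Set.indicator_of_notMem hnotmem]
      exact Tendsto.congr' (hzero.mono fun n h => h.symm) tendsto_const_nhds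
  -- dominated convergence
  have hkey : Tendsto (fun n => ∫ x in Set.Ioo (0:ℝ) 1, Fad ζ ψ v (Nn n) (δn n) x) atTop
      (nhds (∫ x in Set.Ioo (0:ℝ) 1, S.indicator (fun y => Real.sqrt (1 + deriv v y ^ 2)) x)) := by
    apply tendsto_integral_of_dominated_convergence (fun _ => Real.sqrt (1 + M^2))
    · intro n
      exact (measurable_Fad ζ ψ v (Nn n) (δn n)).aestronglyMeasurable
    · exact integrableOn_const measure_Ioo_lt_top.ne
    · intro n
      rw [ae_restrict_iff' measurableSet_Ioo]
      apply Eventually.of_forall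
      intro x hx
      have hd : |dq (Nn n) (fun i => v (xj (Nn n) i)) ⌈x * (Nn n:ℝ)⌉| ≤ M := by
        rcases Nat.eq_zero_or_pos (Nn n) with h0 | h1
        · simp only [h0]
          norm_num [dq]
          exact hMnn
        · exact dq_bound v hv (Nn n) h1 hx.1 hx.2.le hM
      rw [Real.norm_eq_abs]
      exact bound_helper hζ01 hd
    · rw [ae_restrict_iff' measurableSet_Ioo]
      exact Eventually.of_forall hlim
  have hGint : (∫ x in Set.Ioo (0:ℝ) 1, S.indicator (fun y => Real.sqrt (1 + deriv v y ^ 2)) x)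
      = ∫ x in S, Real.sqrt (1 + deriv v x ^ 2) := by
    rw [setIntegral_indicator hSmeas, Set.inter_eq_right.mpr hSsub]
  have hfin := hkey.const_mul γ
  rw [hGint] at hfin
  refine Tendsto.congr' ?_ hfin
  filter_upwards [hNge] with n hn
  rw [ah_eq_integral γ ζ ψ v (δn n) (Nn n) hn, integral_Ioc_eq_integral_Ioo]

end
end

section
/- Blow-up of the penalty term for inadmissible limits: Let ψ, v : ℝ → ℝ be continuous and 1-periodic, and assume there exists x₀ ∈ [0,1] with v(x₀) < ψ(x₀). Let Nₙ → ∞ be integers, hₙ = 1/Nₙ, x_j = j·hₙ, let ρₙ > 0 with ρₙ → 0, and let vₙ : ℝ → ℝ be continuous functions with sup_{x∈[0,1]} |vₙ(x) − v(x)| → 0. Then (1/ρₙ) · Σ_{j=1}^{Nₙ} (max(ψ(x_j) − vₙ(x_j), 0))² · hₙ → +∞ as n → ∞. -/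
open Filter

/-- Blow-up of the penalty term for inadmissible limits. -/
theorem stmt7 (ψ v : ℝ → ℝ) (hψ : Continuous ψ) (hψper : ∀ x, ψ (x + 1) = ψ x)
    (hv : Continuous v) (hvper : ∀ x, v (x + 1) = v x)
    (x₀ : ℝ) (hx₀ : x₀ ∈ Set.Icc (0 : ℝ) 1) (hlt : v x₀ < ψ x₀)
    (Nn : ℕ → ℕ) (hNn : Tendsto Nn atTop atTop)
    (ρn : ℕ → ℝ) (hρpos : ∀ n, 0 < ρn n) (hρ : Tendsto ρn atTop (nhds 0))
    (vn : ℕ → ℝ → ℝ) (hvnc : ∀ n, Continuous (vn n))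
    (hunif : TendstoUniformlyOn vn v atTop (Set.Icc (0 : ℝ) 1)) :
    Tendsto (fun n => 1 / ρn n *
        ∑ j ∈ Finset.Icc (1 : ℤ) (Nn n : ℤ),
          max (ψ ((j : ℝ) / Nn n) - vn n ((j : ℝ) / Nn n)) 0 ^ 2 * ((1 : ℝ) / Nn n))
      atTop atTop := by
  -- find a point y ∈ (0,1] where v y < ψ y
  obtain ⟨y, hy0, hy1, hyv⟩ : ∃ y : ℝ, 0 < y ∧ y ≤ 1 ∧ v y < ψ y := by
    rcases eq_or_lt_of_le hx₀.1 with h | h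
    · refine ⟨1, one_pos, le_refl 1, ?_⟩
      have h1 : (1 : ℝ) = 0 + 1 := by ring
      rw [h1, hψper, hvper, h]; exact hlt
    · exact ⟨x₀, h, hx₀.2, hlt⟩
  -- an interval [a, y] where ψ - v ≥ c
  obtain ⟨a, c, hcpos, ha0, hay, hbound⟩ :
      ∃ a c : ℝ, 0 < c ∧ 0 < a ∧ a < y ∧ ∀ x ∈ Set.Icc a y, c ≤ ψ x - v x := by
    have hg : Continuous fun x => ψ x - v x := hψ.sub hv
    set c : ℝ := (ψ y - v y) / 2 with hc
    have hcpos : 0 < c := by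
      have : 0 < ψ y - v y := sub_pos.mpr hyv
      positivity
    obtain ⟨δ, hδ, hb⟩ := Metric.continuous_iff.mp hg y c hcpos
    refine ⟨max (y - δ / 2) (y / 2), c, hcpos,
      lt_max_of_lt_right (by linarith), max_lt (by linarith) (by linarith), ?_⟩
    intro x hx
    have h1 : dist x y < δ := by
      rw [Real.dist_eq, abs_sub_lt_iff]
      have hd : y - δ / 2 ≤ max (y - δ / 2) (y / 2) := le_max_left _ _
      constructor <;> [linarith [hx.2]; linarith [le_trans hd hx.1]]
    have h2 := hb x h1
    rw [Real.dist_eq] at h2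
    have h3 := (abs_lt.mp h2).1
    have h4 : ψ y - v y = 2 * c := by rw [hc]; ring
    linarith
  have hya : 0 < y - a := sub_pos.mpr hay
  -- constant K
  set K : ℝ := (y - a) * c ^ 2 / 8 with hK
  have hKpos : 0 < K := by positivity
  -- eventual conditions
  have hNev : ∀ᶠ n in atTop, (2 / (y - a) : ℝ) ≤ (Nn n : ℝ) := by
    filter_upwards [hNn.eventually_ge_atTop (⌈(2 / (y - a) : ℝ)⌉₊)] with n hn
    calc (2 / (y - a) : ℝ) ≤ (⌈(2 / (y - a) : ℝ)⌉₊ : ℝ) := Nat.le_ceil _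
      _ ≤ (Nn n : ℝ) := by exact_mod_cast hn
  have hunifev : ∀ᶠ n in atTop, ∀ x ∈ Set.Icc (0 : ℝ) 1, dist (v x) (vn n x) < c / 2 :=
    Metric.tendstoUniformlyOn_iff.mp hunif (c / 2) (by positivity)
  -- main lower bound on the sum
  have hsum : ∀ᶠ n in atTop,
      K ≤ ∑ j ∈ Finset.Icc (1 : ℤ) (Nn n : ℤ),
          max (ψ ((j : ℝ) / Nn n) - vn n ((j : ℝ) / Nn n)) 0 ^ 2 * ((1 : ℝ) / Nn n) := by
    filter_upwards [hNev, hunifev] with n hN hu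
    set NR : ℝ := (Nn n : ℝ) with hNR
    have hNRpos : 0 < NR := lt_of_lt_of_le (by positivity) hN
    have hNR2 : 2 ≤ NR * (y - a) := by
      rw [div_le_iff₀ hya] at hN
      linarith
    set p : ℤ := ⌈NR * a⌉ with hp
    set q : ℤ := ⌊NR * y⌋ with hq
    have hp1 : 1 ≤ p := Int.ceil_pos.mpr (by positivity)
    have hqN : q ≤ (Nn n : ℤ) := by
      have h1 : NR * y ≤ NR := by nlinarith
      have := Int.floor_le_floor h1
      simpa [hNR, Int.floor_natCast] using this
    have hsub : Finset.Icc p q ⊆ Finset.Icc (1 : ℤ) (Nn n : ℤ) :=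
      Finset.Icc_subset_Icc hp1 hqN
    have hterm : ∀ j ∈ Finset.Icc p q,
        (c / 2) ^ 2 * (1 / NR) ≤
          max (ψ ((j : ℝ) / NR) - vn n ((j : ℝ) / NR)) 0 ^ 2 * ((1 : ℝ) / NR) := by
      intro j hj
      rw [Finset.mem_Icc] at hj
      have hjl : NR * a ≤ (j : ℝ) := le_trans (Int.le_ceil _) (by exact_mod_cast hj.1)
      have hjr : (j : ℝ) ≤ NR * y := le_trans (by exact_mod_cast hj.2) (Int.floor_le _)
      have hxa : a ≤ (j : ℝ) / NR := (le_div_iff₀ hNRpos).mpr (by linarith)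
      have hxy : (j : ℝ) / NR ≤ y := (div_le_iff₀ hNRpos).mpr (by linarith)
      have hx01 : (j : ℝ) / NR ∈ Set.Icc (0 : ℝ) 1 :=
        ⟨le_trans ha0.le hxa, le_trans hxy hy1⟩
      have h1 : c ≤ ψ ((j : ℝ) / NR) - v ((j : ℝ) / NR) := hbound _ ⟨hxa, hxy⟩
      have h2 : dist (v ((j : ℝ) / NR)) (vn n ((j : ℝ) / NR)) < c / 2 := hu _ hx01
      rw [Real.dist_eq] at h2
      have h2' := abs_lt.mp h2
      have h3 : c / 2 ≤ ψ ((j : ℝ) / NR) - vn n ((j : ℝ) / NR) := by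
        linarith [h2'.1, h2'.2]
      have h4 : c / 2 ≤ max (ψ ((j : ℝ) / NR) - vn n ((j : ℝ) / NR)) 0 :=
        le_trans h3 (le_max_left _ _)
      have h5 : (c / 2) ^ 2 ≤ max (ψ ((j : ℝ) / NR) - vn n ((j : ℝ) / NR)) 0 ^ 2 :=
        pow_le_pow_left₀ (by positivity) h4 2
      exact mul_le_mul_of_nonneg_right h5 (by positivity)
    have hcard : ((Finset.Icc p q).card : ℝ) * ((c / 2) ^ 2 * (1 / NR)) ≤
        ∑ j ∈ Finset.Icc p q,
          max (ψ ((j : ℝ) / NR) - vn n ((j : ℝ) / NR)) 0 ^ 2 * ((1 : ℝ) / NR) := by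
      have := Finset.card_nsmul_le_sum (Finset.Icc p q)
        (fun j => max (ψ ((j : ℝ) / NR) - vn n ((j : ℝ) / NR)) 0 ^ 2 * ((1 : ℝ) / NR))
        ((c / 2) ^ 2 * (1 / NR)) hterm
      simpa [nsmul_eq_mul] using this
    have h1 : NR * y - 1 < (q : ℝ) := Int.sub_one_lt_floor _
    have h2 : (p : ℝ) < NR * a + 1 := Int.ceil_lt_add_one _
    have hcardval : (NR * (y - a) - 1) ≤ ((Finset.Icc p q).card : ℝ) := by
      have hqp : (0 : ℤ) ≤ q + 1 - p := by
        have h0 : (0 : ℝ) ≤ (q : ℝ) + 1 - (p : ℝ) := by nlinarith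
        exact_mod_cast h0
      rw [Int.card_Icc]
      have h3 : ((q + 1 - p).toNat : ℝ) = ((q : ℝ) + 1 - (p : ℝ)) := by
        have := Int.toNat_of_nonneg hqp
        exact_mod_cast congrArg (fun z : ℤ => (z : ℝ)) this
      push_cast at h3 ⊢
      nlinarith
    have hstep : K ≤ (NR * (y - a) - 1) * ((c / 2) ^ 2 * (1 / NR)) := by
      rw [hK]
      have he : (NR * (y - a) - 1) * ((c / 2) ^ 2 * (1 / NR)) =
          (NR * (y - a) - 1) * c ^ 2 / (4 * NR) := by
        field_simp [hNRpos.ne']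
        norm_num
      rw [he, div_le_div_iff₀ (by norm_num) (by linarith : (0:ℝ) < 4 * NR)]
      nlinarith [mul_nonneg (sq_nonneg c) (by linarith : (0:ℝ) ≤ NR * (y - a) - 2)]
    calc K ≤ (NR * (y - a) - 1) * ((c / 2) ^ 2 * (1 / NR)) := hstep
      _ ≤ ((Finset.Icc p q).card : ℝ) * ((c / 2) ^ 2 * (1 / NR)) :=
          mul_le_mul_of_nonneg_right hcardval (mul_nonneg (sq_nonneg _) (one_div_nonneg.mpr hNRpos.le))
      _ ≤ ∑ j ∈ Finset.Icc p q,
            max (ψ ((j : ℝ) / NR) - vn n ((j : ℝ) / NR)) 0 ^ 2 * ((1 : ℝ) / NR) := hcard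
      _ ≤ ∑ j ∈ Finset.Icc (1 : ℤ) (Nn n : ℤ),
            max (ψ ((j : ℝ) / NR) - vn n ((j : ℝ) / NR)) 0 ^ 2 * ((1 : ℝ) / NR) := by
          refine Finset.sum_le_sum_of_subset_of_nonneg hsub fun j _ _ => mul_nonneg (sq_nonneg _) (one_div_nonneg.mpr hNRpos.le)
  -- K / ρn → ∞
  have hdiv : Tendsto (fun n => K / ρn n) atTop atTop := by
    have hρin : Tendsto ρn atTop (nhdsWithin 0 (Set.Ioi 0)) :=
      tendsto_nhdsWithin_iff.mpr ⟨hρ, Eventually.of_forall fun n => hρpos n⟩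
    have hinv : Tendsto (fun n => (ρn n)⁻¹) atTop atTop := hρin.inv_tendsto_nhdsGT_zero
    have := hinv.const_mul_atTop hKpos
    simpa [div_eq_mul_inv] using this
  refine tendsto_atTop_mono' atTop ?_ hdiv
  filter_upwards [hsum] with n hs
  have h1 : (0 : ℝ) ≤ 1 / ρn n := one_div_nonneg.mpr (hρpos n).le
  have h2 := mul_le_mul_of_nonneg_left hs h1
  calc K / ρn n = 1 / ρn n * K := by ring
    _ ≤ _ := h2
end

section
/- Consistency of the auxiliary discrete bending energy: Let v : ℝ → ℝ be twice continuously differentiable and 1-periodic. For an integer N ≥ 1 let h = 1/N, x_j = j·h, d_{h,j}v = (v(x_j) − v(x_{j−1}))/h and D_{h,j}v = (v(x_{j+1}) − 2v(x_j) + v(x_{j−1}))/h². Then Σ_{j=1}^N (D_{h,j}v)²/(1 + (d_{h,j}v)²)^{5/2} · h → ∫₀¹ v''(x)²/(1 + v'(x)²)^{5/2} dx as N → ∞. -/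
open MeasureTheory Filter intervalIntegral

lemma myftc {w : ℝ → ℝ} (hw : Differentiable ℝ w) (hc : Continuous (deriv w))
    (a b : ℝ) : w b - w a = ∫ t in a..b, deriv w t :=
  (integral_deriv_eq_sub (fun x _ => hw x) (hc.intervalIntegrable _ _)).symm

lemma est1 {f : ℝ → ℝ} (hf : Continuous f) {a x h ε : ℝ} (hh : 0 < h)
    (hbound : ∀ t ∈ Set.Icc a (a + h), |f t - f x| ≤ ε) :
    |(∫ t in a..(a + h), f t) / h - f x| ≤ ε := by
  have hkey : (∫ t in a..(a + h), f t) - h * f x = ∫ t in a..(a + h), (f t - f x) := by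
    rw [intervalIntegral.integral_sub (hf.intervalIntegrable _ _) intervalIntegrable_const,
      intervalIntegral.integral_const, smul_eq_mul]
    ring
  have hb : |∫ t in a..(a + h), (f t - f x)| ≤ ε * h := by
    have := intervalIntegral.norm_integral_le_of_norm_le_const
      (C := ε) (f := fun t => f t - f x) (a := a) (b := a + h) (fun t ht => by
        rw [Set.uIoc_of_le (by linarith)] at ht
        exact hbound t ⟨le_of_lt ht.1, ht.2⟩)
    simpa [abs_of_pos hh] using this
  have heq : (∫ t in a..(a + h), f t) / h - f x = ((∫ t in a..(a + h), (f t - f x))) / h := by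
    rw [← hkey]; field_simp
  rw [heq, abs_div, abs_of_pos hh, div_le_iff₀ hh]
  linarith [hb]

lemma est2 {v : ℝ → ℝ} (hv : Differentiable ℝ v) (hf : Continuous (deriv v))
    (hf1 : Differentiable ℝ (deriv v)) (hf2 : Continuous (deriv (deriv v)))
    {b x h ε : ℝ} (hh : 0 < h)
    (hbound : ∀ s ∈ Set.Icc (b - h) (b + h), |deriv (deriv v) s - deriv (deriv v) x| ≤ ε) :
    |(v (b + h) - 2 * v b + v (b - h)) / h ^ 2 - deriv (deriv v) x| ≤ ε := by
  set f := deriv v with hfdef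
  set f2 := deriv (deriv v) with hf2def
  have claimA : ∀ t ∈ Set.Icc (0:ℝ) h, |f (b + t) - f (b - h + t) - h * f2 x| ≤ h * ε := by
    intro t ht
    have e1 : f (b + t) - f (b - h + t) = ∫ s in (b - h + t)..(b + t), f2 s :=
      myftc hf1 hf2 _ _
    have e2 : h * f2 x = ∫ s in (b - h + t)..(b + t), f2 x := by
      rw [intervalIntegral.integral_const, smul_eq_mul]; ring_nf
    rw [e1, e2, ← intervalIntegral.integral_sub (hf2.intervalIntegrable _ _)
      intervalIntegrable_const]
    have := intervalIntegral.norm_integral_le_of_norm_le_const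
      (C := ε) (f := fun s => f2 s - f2 x) (a := b - h + t) (b := b + t) (fun s hs => by
        rw [Set.uIoc_of_le (by linarith)] at hs
        exact hbound s ⟨by linarith [hs.1, ht.1], by linarith [hs.2, ht.2]⟩)
    have habs : |b + t - (b - h + t)| = h := by rw [abs_of_pos (by linarith)]; ring
    rw [habs] at this
    simpa [mul_comm] using this
  have hcont1 : Continuous fun t => f (b + t) := hf.comp (continuous_const.add continuous_id)
  have hcont2 : Continuous fun t => f (b - h + t) := hf.comp (continuous_const.add continuous_id)
  have claimB : (∫ t in (0:ℝ)..h, (f (b + t) - f (b - h + t) - h * f2 x))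
      = v (b + h) - 2 * v b + v (b - h) - h ^ 2 * f2 x := by
    rw [intervalIntegral.integral_sub (f := fun t => f (b + t) - f (b - h + t)) (g := fun _ => h * f2 x)
      (((hcont1.sub hcont2)).intervalIntegrable _ _) intervalIntegrable_const,
      intervalIntegral.integral_sub (hcont1.intervalIntegrable _ _)
        (hcont2.intervalIntegrable _ _),
      intervalIntegral.integral_const, smul_eq_mul]
    have e1 : (∫ t in (0:ℝ)..h, f (b + t)) = v (b + h) - v b := by
      have e : (∫ t in (0:ℝ)..h, f (b + t)) = ∫ s in (0 + b)..(h + b), f s := by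
        simpa [add_comm] using intervalIntegral.integral_comp_add_right (a := (0:ℝ)) (b := h) f b
      rw [e, zero_add, add_comm h b, ← myftc hv hf]
    have e2 : (∫ t in (0:ℝ)..h, f (b - h + t)) = v b - v (b - h) := by
      have e : (∫ t in (0:ℝ)..h, f (b - h + t)) = ∫ s in (0 + (b - h))..(h + (b - h)), f s := by
        simpa [add_comm] using
          intervalIntegral.integral_comp_add_right (a := (0:ℝ)) (b := h) f (b - h)
      rw [e, zero_add, ← myftc hv hf]
      ring_nf
    rw [e1, e2]; ring
  have hInt : |v (b + h) - 2 * v b + v (b - h) - h ^ 2 * f2 x| ≤ ε * h ^ 2 := by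
    rw [← claimB]
    have := intervalIntegral.norm_integral_le_of_norm_le_const
      (C := h * ε) (f := fun t => f (b + t) - f (b - h + t) - h * f2 x) (a := 0) (b := h)
      (fun t ht => by
        rw [Set.uIoc_of_le (by linarith)] at ht
        exact claimA t ⟨le_of_lt ht.1, ht.2⟩)
    have habs : |h - 0| = h := by rw [abs_of_pos (by linarith)]; ring
    rw [habs] at this
    calc |∫ t in (0:ℝ)..h, (f (b + t) - f (b - h + t) - h * f2 x)| ≤ h * ε * h := this
      _ = ε * h ^ 2 := by ring
  have hh2 : (0:ℝ) < h ^ 2 := by positivity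
  have heq : (v (b + h) - 2 * v b + v (b - h)) / h ^ 2 - f2 x
      = (v (b + h) - 2 * v b + v (b - h) - h ^ 2 * f2 x) / h ^ 2 := by
    field_simp
  rw [heq, abs_div, abs_of_pos hh2, div_le_iff₀ hh2]
  linarith [hInt]

lemma reindex (N : ℕ) (F : ℤ → ℝ) :
    ∑ j ∈ Finset.Icc (1 : ℤ) (N : ℤ), F j = ∑ i ∈ Finset.range N, F (i + 1) := by
  induction N with
  | zero => simp
  | succ n ih =>
      rw [Finset.sum_range_succ, ← ih, show ((n+1 : ℕ) : ℤ) = (n : ℤ) + 1 by push_cast; ring,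
        show Finset.Icc (1:ℤ) ((n:ℤ)+1) = insert ((n:ℤ)+1) (Finset.Icc (1:ℤ) (n:ℤ)) from by
          ext m; simp; omega,
        Finset.sum_insert (by simp)]
      ring

/-- Consistency of the auxiliary discrete bending energy. -/
theorem stmt8 (v : ℝ → ℝ) (hv : ContDiff ℝ 2 v) (hper : ∀ x, v (x + 1) = v x) :
    Tendsto (fun N : ℕ =>
        ∑ j ∈ Finset.Icc (1 : ℤ) (N : ℤ),
          ((v (((j : ℝ) + 1) / N) - 2 * v ((j : ℝ) / N) + v (((j : ℝ) - 1) / N)) /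
              ((1 : ℝ) / N) ^ 2) ^ 2 /
            (1 + ((v ((j : ℝ) / N) - v (((j : ℝ) - 1) / N)) / ((1 : ℝ) / N)) ^ 2) ^
              ((5 : ℝ) / 2) * ((1 : ℝ) / N))
      atTop
      (nhds (∫ x in Set.Ioo (0 : ℝ) 1,
        deriv (deriv v) x ^ 2 / (1 + deriv v x ^ 2) ^ ((5 : ℝ) / 2))) := by
  clear hper
  -- regularity facts
  have hdv : Differentiable ℝ v := hv.differentiable (by norm_num)
  have hv' : ContDiff ℝ 1 (deriv v) := by
    rw [show (2 : WithTop ℕ∞) = 1 + 1 by norm_num] at hv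
    exact (contDiff_succ_iff_deriv.mp hv).2.2
  have hf1c : Continuous (deriv v) := hv'.continuous
  have hf1d : Differentiable ℝ (deriv v) := hv'.differentiable one_ne_zero
  have hf2c : Continuous (deriv (deriv v)) := hv'.continuous_deriv le_rfl
  -- the function Φ and the integrand G
  set Φ : ℝ × ℝ → ℝ := fun p => p.1 ^ 2 / (1 + p.2 ^ 2) ^ ((5:ℝ)/2) with hΦdef
  have hden : ∀ t : ℝ, (0:ℝ) < (1 + t ^ 2) ^ ((5:ℝ)/2) :=
    fun t => Real.rpow_pos_of_pos (by positivity) _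
  have hΦc : Continuous Φ := by
    apply Continuous.div (continuous_fst.pow 2)
      ((continuous_const.add (continuous_snd.pow 2)).rpow_const fun p => Or.inr (by norm_num))
      fun p => (hden p.2).ne'
  set G : ℝ → ℝ := fun x => deriv (deriv v) x ^ 2 / (1 + deriv v x ^ 2) ^ ((5:ℝ)/2) with hGdef
  have hGΦ : ∀ x, G x = Φ (deriv (deriv v) x, deriv v x) := fun _ => rfl
  have hGc : Continuous G := hΦc.comp (hf2c.prodMk hf1c)
  -- bounds on [0,2]
  obtain ⟨M1, hM1⟩ := (isCompact_Icc (a := (0:ℝ)) (b := 2)).exists_bound_of_continuousOn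
    hf1c.continuousOn
  obtain ⟨M2, hM2⟩ := (isCompact_Icc (a := (0:ℝ)) (b := 2)).exists_bound_of_continuousOn
    hf2c.continuousOn
  set M := max M1 M2 with hMdef
  have hMf : ∀ y ∈ Set.Icc (0:ℝ) 2, |deriv v y| ≤ M :=
    fun y hy => (hM1 y hy).trans (le_max_left _ _)
  have hMf2 : ∀ y ∈ Set.Icc (0:ℝ) 2, |deriv (deriv v) y| ≤ M :=
    fun y hy => (hM2 y hy).trans (le_max_right _ _)
  have hM0 : 0 ≤ M := (abs_nonneg _).trans (hMf 0 (by norm_num))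
  -- uniform continuity of Φ on the compact box K
  set K : Set (ℝ × ℝ) := Set.Icc (-(M+1)) (M+1) ×ˢ Set.Icc (-(M+1)) (M+1) with hKdef
  have hKc : IsCompact K := isCompact_Icc.prod isCompact_Icc
  have hUCΦ := Metric.uniformContinuousOn_iff.mp
    (hKc.uniformContinuousOn_of_continuous hΦc.continuousOn)
  have hUCf := Metric.uniformContinuousOn_iff.mp
    ((isCompact_Icc (a := (0:ℝ)) (b := 2)).uniformContinuousOn_of_continuous hf1c.continuousOn)
  have hUCf2 := Metric.uniformContinuousOn_iff.mp
    ((isCompact_Icc (a := (0:ℝ)) (b := 2)).uniformContinuousOn_of_continuous hf2c.continuousOn)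
  rw [Metric.tendsto_atTop]
  intro ε hε
  obtain ⟨δΦ, hδΦpos, hδΦ⟩ := hUCΦ (ε/2) (by linarith)
  set ε₁ := min 1 (δΦ/2) with hε₁def
  have hε₁pos : 0 < ε₁ := lt_min one_pos (by linarith)
  obtain ⟨δ₁, hδ₁pos, hδ₁⟩ := hUCf ε₁ hε₁pos
  obtain ⟨δ₂, hδ₂pos, hδ₂⟩ := hUCf2 ε₁ hε₁pos
  set δ := min δ₁ δ₂ with hδdef
  have hδpos : 0 < δ := lt_min hδ₁pos hδ₂pos
  obtain ⟨N₁, hN₁⟩ := exists_nat_gt (2/δ)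
  refine ⟨max N₁ 1, fun N hN => ?_⟩
  have hN1 : 1 ≤ N := le_trans (le_max_right _ _) hN
  have hNR : (1:ℝ) ≤ (N:ℝ) := by exact_mod_cast hN1
  have hNpos : (0:ℝ) < N := by linarith
  set h : ℝ := (1:ℝ)/N with hhdef
  have hhpos : 0 < h := by positivity
  have hh1 : h ≤ 1 := by rw [hhdef, div_le_one hNpos]; exact hNR
  have h2δ : 2 * h < δ := by
    have hNN1 : (N₁ : ℝ) ≤ N := by exact_mod_cast le_trans (le_max_left _ _) hN
    have h1 : 2/δ < (N:ℝ) := lt_of_lt_of_le hN₁ hNN1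
    have h2 : 2 < (N:ℝ) * δ := by
      rw [div_lt_iff₀ hδpos] at h1; linarith
    rw [hhdef]
    rw [mul_comm, div_mul_eq_mul_div, mul_comm, div_lt_iff₀ hNpos]
    linarith
  -- key per-interval estimate
  have hδδ₁ : δ ≤ δ₁ := min_le_left _ _
  have hδδ₂ : δ ≤ δ₂ := min_le_right _ _
  have hε₁1 : ε₁ ≤ 1 := min_le_left _ _
  have hε₁δ : ε₁ ≤ δΦ / 2 := min_le_right _ _
  have key : ∀ i ∈ Finset.range N,
      |(((v (((i:ℝ) + 1 + 1) / N) - 2 * v (((i:ℝ) + 1) / N) + v (((i:ℝ) + 1 - 1) / N)) /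
          ((1:ℝ)/N) ^ 2) ^ 2 /
          (1 + ((v (((i:ℝ) + 1) / N) - v (((i:ℝ) + 1 - 1) / N)) / ((1:ℝ)/N)) ^ 2) ^ ((5:ℝ)/2)
          * ((1:ℝ)/N))
        - ∫ x in ((i:ℝ)/N)..(((i:ℝ)+1)/N), G x| ≤ ε/2 * h := by
    intro i hi
    have hiN : i < N := Finset.mem_range.mp hi
    have hiN' : (i:ℝ) + 1 ≤ N := by exact_mod_cast hiN
    rw [← hhdef]
    set b : ℝ := ((i:ℝ) + 1) / N with hbdef
    have hbh_sub : b - h = (i:ℝ) / N := by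
      rw [hbdef, hhdef, div_sub_div_same]; norm_num
    have hbh_add : b + h = ((i:ℝ) + 1 + 1) / N := by
      rw [hbdef, hhdef, ← add_div]
    have hbm_eq : ((i:ℝ) + 1 - 1) / N = b - h := by
      rw [hbh_sub]; norm_num
    rw [show ((i:ℝ) + 1 + 1) / (N:ℝ) = b + h from hbh_add.symm, hbm_eq, hbh_sub.symm]
    set D : ℝ := (v (b + h) - 2 * v b + v (b - h)) / h ^ 2 with hD
    set d : ℝ := (v b - v (b - h)) / h with hd
    have hΦDd : D ^ 2 / (1 + d ^ 2) ^ ((5:ℝ)/2) = Φ (D, d) := rfl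
    rw [hΦDd]
    -- geometry of the interval
    have hb0 : 0 ≤ b - h := by rw [hbh_sub]; positivity
    have hb1 : b ≤ 1 := by rw [hbdef, div_le_one hNpos]; exact hiN'
    have hbh2 : b + h ≤ 2 := by linarith
    -- first difference estimate
    have hd_est : ∀ x ∈ Set.Icc (b - h) b, |d - deriv v x| ≤ ε₁ := by
      intro x hx
      have hxm : x ∈ Set.Icc (0:ℝ) 2 := ⟨le_trans hb0 hx.1, le_trans hx.2 (by linarith)⟩
      have hveq : d = (∫ t in (b - h)..((b - h) + h), deriv v t) / h := by
        rw [hd, myftc hdv hf1c (b - h) b, show (b - h) + h = b by ring]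
      rw [hveq]
      apply est1 hf1c hhpos
      intro t ht
      have htm : t ∈ Set.Icc (0:ℝ) 2 :=
        ⟨by linarith [ht.1], by linarith [ht.2]⟩
      have hdist : dist t x < δ₁ := by
        rw [Real.dist_eq, abs_sub_lt_iff]
        constructor <;> [linarith [ht.2, hx.1]; linarith [ht.1, hx.2]]
      have := hδ₁ t htm x hxm hdist
      rw [Real.dist_eq] at this
      exact this.le
    -- second difference estimate
    have hD_est : ∀ x ∈ Set.Icc (b - h) b, |D - deriv (deriv v) x| ≤ ε₁ := by
      intro x hx
      have hxm : x ∈ Set.Icc (0:ℝ) 2 := ⟨le_trans hb0 hx.1, le_trans hx.2 (by linarith)⟩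
      rw [hD]
      apply est2 hdv hf1c hf1d hf2c hhpos
      intro s hs
      have hsm : s ∈ Set.Icc (0:ℝ) 2 := ⟨by linarith [hs.1], by linarith [hs.2]⟩
      have hdist : dist s x < δ₂ := by
        rw [Real.dist_eq, abs_sub_lt_iff]
        constructor <;> [linarith [hs.2, hx.1]; linarith [hs.1, hx.2]]
      have := hδ₂ s hsm x hxm hdist
      rw [Real.dist_eq] at this
      exact this.le
    -- pointwise comparison of Φ (D, d) with G x
    have hpt : ∀ x ∈ Set.Icc (b - h) b, |Φ (D, d) - G x| ≤ ε / 2 := by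
      intro x hx
      have hxm : x ∈ Set.Icc (0:ℝ) 2 := ⟨le_trans hb0 hx.1, le_trans hx.2 (by linarith)⟩
      have hfx := hMf x hxm
      have hf2x := hMf2 x hxm
      have hd1 := hd_est x hx
      have hD1 := hD_est x hx
      have habsD : |D| ≤ M + 1 := by
        have h1 := abs_add_le (D - deriv (deriv v) x) (deriv (deriv v) x)
        rw [sub_add_cancel] at h1
        linarith
      have habsd : |d| ≤ M + 1 := by
        have h1 := abs_add_le (d - deriv v x) (deriv v x)
        rw [sub_add_cancel] at h1
        linarith
      have hp : ((D, d) : ℝ × ℝ) ∈ K := by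
        refine Set.mem_prod.mpr ⟨Set.mem_Icc.mpr ?_, Set.mem_Icc.mpr ?_⟩
        · exact ⟨neg_le_of_abs_le habsD, le_of_abs_le habsD⟩
        · exact ⟨neg_le_of_abs_le habsd, le_of_abs_le habsd⟩
      have hq : ((deriv (deriv v) x, deriv v x) : ℝ × ℝ) ∈ K := by
        refine Set.mem_prod.mpr ⟨Set.mem_Icc.mpr ?_, Set.mem_Icc.mpr ?_⟩
        · exact ⟨by linarith [neg_le_of_abs_le hf2x], by linarith [le_of_abs_le hf2x]⟩
        · exact ⟨by linarith [neg_le_of_abs_le hfx], by linarith [le_of_abs_le hfx]⟩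
      have hdistpq : dist ((D, d) : ℝ × ℝ) (deriv (deriv v) x, deriv v x) < δΦ := by
        rw [Prod.dist_eq]
        apply max_lt
        · rw [Real.dist_eq]; linarith [hD1]
        · rw [Real.dist_eq]; linarith [hd1]
      have hfin := hδΦ _ hp _ hq hdistpq
      rw [Real.dist_eq] at hfin
      have : G x = Φ (deriv (deriv v) x, deriv v x) := rfl
      rw [this]
      exact hfin.le
    -- integrate the pointwise comparison
    have hsub : Φ (D, d) * h - (∫ x in (b - h)..b, G x)
        = ∫ x in (b - h)..b, (Φ (D, d) - G x) := by
      rw [intervalIntegral.integral_sub intervalIntegrable_const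
        (hGc.intervalIntegrable _ _), intervalIntegral.integral_const, smul_eq_mul]
      ring
    rw [hsub]
    have hnorm := intervalIntegral.norm_integral_le_of_norm_le_const
      (C := ε / 2) (f := fun x => Φ (D, d) - G x) (a := b - h) (b := b) (fun x hx => by
        rw [Set.uIoc_of_le (by linarith)] at hx
        exact hpt x ⟨hx.1.le, hx.2⟩)
    have habs : |b - (b - h)| = h := by rw [abs_of_pos (by linarith)]; ring
    rw [habs] at hnorm
    exact hnorm
  -- assemble
  rw [Real.dist_eq, reindex]
  have hsplit : (∫ x in Set.Ioo (0:ℝ) 1, G x)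
      = ∑ i ∈ Finset.range N, ∫ x in ((i:ℝ)/N)..(((i:ℝ)+1)/N), G x := by
    have hadj := intervalIntegral.sum_integral_adjacent_intervals
      (a := fun k : ℕ => (k:ℝ)/N) (f := G) (μ := volume) (n := N)
      (fun k _ => hGc.intervalIntegrable _ _)
    beta_reduce at hadj
    rw [show ((0:ℕ):ℝ)/(N:ℝ) = 0 by simp,
      show ((N:ℕ):ℝ)/(N:ℝ) = 1 from div_self hNpos.ne'] at hadj
    rw [show (∫ x in Set.Ioo (0:ℝ) 1, G x) = ∫ x in (0:ℝ)..(1:ℝ), G x by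
      rw [intervalIntegral.integral_of_le (by norm_num), integral_Ioc_eq_integral_Ioo],
      ← hadj]
    apply Finset.sum_congr rfl
    intro k _
    push_cast
    rfl
  rw [hsplit, ← Finset.sum_sub_distrib]
  push_cast
  calc |∑ i ∈ Finset.range N,
        ((((v (((i:ℝ) + 1 + 1) / N) - 2 * v (((i:ℝ) + 1) / N) + v (((i:ℝ) + 1 - 1) / N)) /
          ((1:ℝ)/N) ^ 2) ^ 2 /
          (1 + ((v (((i:ℝ) + 1) / N) - v (((i:ℝ) + 1 - 1) / N)) / ((1:ℝ)/N)) ^ 2) ^ ((5:ℝ)/2)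
          * ((1:ℝ)/N))
        - ∫ x in ((i:ℝ)/N)..(((i:ℝ)+1)/N), G x)|
      ≤ ∑ i ∈ Finset.range N,
        |(((v (((i:ℝ) + 1 + 1) / N) - 2 * v (((i:ℝ) + 1) / N) + v (((i:ℝ) + 1 - 1) / N)) /
          ((1:ℝ)/N) ^ 2) ^ 2 /
          (1 + ((v (((i:ℝ) + 1) / N) - v (((i:ℝ) + 1 - 1) / N)) / ((1:ℝ)/N)) ^ 2) ^ ((5:ℝ)/2)
          * ((1:ℝ)/N))
        - ∫ x in ((i:ℝ)/N)..(((i:ℝ)+1)/N), G x| := Finset.abs_sum_le_sum_abs _ _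
    _ ≤ ∑ _i ∈ Finset.range N, ε/2 * h := Finset.sum_le_sum key
    _ = N * (ε/2 * h) := by rw [Finset.sum_const, Finset.card_range, nsmul_eq_mul]
    _ = ε/2 := by rw [hhdef]; field_simp
    _ < ε := by linarith
end

section
/- Consistency of the polygonal discrete bending energy: Let v : ℝ → ℝ be twice continuously differentiable and 1-periodic. For an integer N ≥ 1 let h = 1/N, x_j = j·h, and form the discrete curve Π_h v with vertex values v(x_j), with associated quantities d_j = (v(x_j) − v(x_{j−1}))/h, l_j = (h/2)·√(1 + d_j²) and θ_j = arccos[(1 + d_j·d_{j+1})/(√(1 + d_j²)·√(1 + d_{j+1}²))] (indices extended N-periodically). Then Σ_{j=1}^N θ_j²·(l_j³ + l_{j+1}³)/(l_j·l_{j+1}·(l_j + l_{j+1})²) → ∫₀¹ v''(x)²/(1 + v'(x)²)^{5/2} dx as N → ∞; in particular limsup_{N→∞} of the left-hand side is at most the right-hand side. -/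
open Filter MeasureTheory

noncomputable section

lemma contdiff_pieces (v : ℝ → ℝ) (hv : ContDiff ℝ 2 v) :
    Differentiable ℝ v ∧ Differentiable ℝ (deriv v) ∧ Continuous (deriv v) ∧
      Continuous (deriv (deriv v)) := by
  have h2 : ContDiff ℝ (1 + 1 : ℕ) v := by norm_num; exact hv
  rw [show ((1+1 : ℕ) : WithTop ℕ∞) = (1 : WithTop ℕ∞) + 1 by norm_cast] at h2
  have h1 := (contDiff_succ_iff_deriv.mp h2).2.2
  have h0 := contDiff_one_iff_deriv.mp h1
  exact ⟨(contDiff_succ_iff_deriv.mp h2).1, h0.1, h1.continuous, h0.2⟩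

lemma secondDiff_mvt (f : ℝ → ℝ) (hf : ContDiff ℝ 2 f) (x h : ℝ) (hh : 0 < h) :
    ∃ η ∈ Set.Ioo (x - h) (x + h),
      (f (x + h) - 2 * f x + f (x - h)) / h ^ 2 = deriv (deriv f) η := by
  obtain ⟨hfd, hd1, hdc, hd2c⟩ := contdiff_pieces f hf
  set Δ : ℝ := f (x + h) - 2 * f x + f (x - h) with hΔ
  set F : ℝ → ℝ := fun t => f (x + t) + f (x - t) - 2 * f x - (t / h) ^ 2 * Δ with hF
  have hFd : ∀ t : ℝ, HasDerivAt F (deriv f (x + t) - deriv f (x - t) - 2 * t / h ^ 2 * Δ) t := by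
    intro t
    have h1 : HasDerivAt (fun t : ℝ => f (x + t)) (deriv f (x + t)) t := by
      have := ((hfd (x + t)).hasDerivAt).comp t (((hasDerivAt_id t).const_add x))
      simp only [mul_one, id] at this
      exact this
    have h2 : HasDerivAt (fun t : ℝ => f (x - t)) (-deriv f (x - t)) t := by
      have := ((hfd (x - t)).hasDerivAt).comp t (((hasDerivAt_id t).neg.const_add x))
      simp only [mul_neg, mul_one, id, ← sub_eq_add_neg] at this
      exact this
    have h3 : HasDerivAt (fun t : ℝ => (t / h) ^ 2 * Δ) (2 * t / h ^ 2 * Δ) t := by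
      have hh' : (h:ℝ) ≠ 0 := ne_of_gt hh
      have := (((hasDerivAt_id t).div_const h).pow 2).mul_const Δ
      refine this.congr_deriv ?_
      simp only [id]
      push_cast
      ring
    have := ((h1.add h2).sub_const (2 * f x)).sub h3
    refine this.congr_deriv ?_
    ring
  have hF0 : F 0 = F h := by
    simp only [hF]
    field_simp
    rw [hΔ]
    ring
  obtain ⟨t₁, ht₁, hFt₁⟩ := exists_deriv_eq_zero hh (fun t _ => (hFd t).continuousAt.continuousWithinAt) hF0
  have key : deriv f (x + t₁) - deriv f (x - t₁) = 2 * t₁ / h ^ 2 * Δ := by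
    have := (hFd t₁).deriv
    rw [hFt₁] at this
    linarith
  have hlt : x - t₁ < x + t₁ := by linarith [ht₁.1]
  obtain ⟨η, hη, hηeq⟩ := exists_deriv_eq_slope (deriv f) hlt
    (hdc.continuousOn) (hd1.differentiableOn)
  refine ⟨η, ⟨by linarith [hη.1, ht₁.2], by linarith [hη.2, ht₁.2]⟩, ?_⟩
  rw [hηeq, key]
  have ht₁0 : (t₁ : ℝ) ≠ 0 := ne_of_gt ht₁.1
  have : x + t₁ - (x - t₁) = 2 * t₁ := by ring
  rw [this]
  field_simp


lemma one_le_sqrt_one_add_sq (a : ℝ) : 1 ≤ Real.sqrt (1 + a ^ 2) :=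
  Real.one_le_sqrt.mpr (by nlinarith)

lemma arccos_eq (a b : ℝ) :
    Real.arccos ((1 + a * b) / (Real.sqrt (1 + a ^ 2) * Real.sqrt (1 + b ^ 2))) =
      |Real.arctan b - Real.arctan a| := by
  have hpa : (0:ℝ) < Real.sqrt (1 + a ^ 2) := lt_of_lt_of_le one_pos (one_le_sqrt_one_add_sq a)
  have hpb : (0:ℝ) < Real.sqrt (1 + b ^ 2) := lt_of_lt_of_le one_pos (one_le_sqrt_one_add_sq b)
  have hcos : Real.cos (Real.arctan b - Real.arctan a) =
      (1 + a * b) / (Real.sqrt (1 + a ^ 2) * Real.sqrt (1 + b ^ 2)) := by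
    rw [Real.cos_sub, Real.cos_arctan, Real.sin_arctan, Real.cos_arctan, Real.sin_arctan]
    field_simp
  have habs : |Real.arctan b - Real.arctan a| ≤ Real.pi := by
    have h1 := Real.arctan_lt_pi_div_two b
    have h2 := Real.neg_pi_div_two_lt_arctan b
    have h3 := Real.arctan_lt_pi_div_two a
    have h4 := Real.neg_pi_div_two_lt_arctan a
    rw [abs_le]
    constructor <;> nlinarith
  rw [← hcos, ← Real.cos_abs, Real.arccos_cos (abs_nonneg _) habs]

lemma arctan_mvt (a b : ℝ) : ∃ c, min a b ≤ c ∧ c ≤ max a b ∧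
    Real.arctan b - Real.arctan a = (b - a) / (1 + c ^ 2) := by
  have H : ∀ x y : ℝ, x < y → ∃ c, x ≤ c ∧ c ≤ y ∧
      Real.arctan y - Real.arctan x = (y - x) / (1 + c ^ 2) := by
    intro x y hxy
    obtain ⟨c, hc, hceq⟩ := exists_deriv_eq_slope Real.arctan hxy
      Real.continuous_arctan.continuousOn Real.differentiable_arctan.differentiableOn
    rw [Real.deriv_arctan] at hceq
    simp only at hceq
    have hc2 : (0:ℝ) < 1 + c ^ 2 := by positivity
    have hyx : y - x ≠ 0 := sub_ne_zero.mpr hxy.ne'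
    refine ⟨c, hc.1.le, hc.2.le, ?_⟩
    rw [eq_div_iff hc2.ne']
    field_simp at hceq
    linarith
  rcases lt_trichotomy a b with hab | rfl | hab
  · obtain ⟨c, h1, h2, h3⟩ := H a b hab
    exact ⟨c, le_trans (min_le_left _ _) h1, le_trans h2 (le_max_right _ _), h3⟩
  · exact ⟨a, min_le_left _ _, le_max_left _ _, by simp⟩
  · obtain ⟨c, h1, h2, h3⟩ := H b a hab
    refine ⟨c, le_trans (min_le_right _ _) h1, le_trans h2 (le_max_left _ _), ?_⟩
    have : Real.arctan b - Real.arctan a = -(Real.arctan a - Real.arctan b) := by ring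
    rw [this, h3]
    ring

lemma abs_sub_le_max {a b c : ℝ} (s : ℝ) (h1 : min a b ≤ c) (h2 : c ≤ max a b) :
    |c - s| ≤ max |a - s| |b - s| := by
  rw [abs_sub_le_iff]
  rcases le_total a b with h | h
  · rw [min_eq_left h] at h1; rw [max_eq_right h] at h2
    constructor
    · calc c - s ≤ b - s := by linarith
        _ ≤ |b - s| := le_abs_self _
        _ ≤ _ := le_max_right _ _
    · calc s - c ≤ s - a := by linarith
        _ = -(a - s) := by ring
        _ ≤ |a - s| := neg_le_abs _
        _ ≤ _ := le_max_left _ _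
  · rw [min_eq_right h] at h1; rw [max_eq_left h] at h2
    constructor
    · calc c - s ≤ a - s := by linarith
        _ ≤ |a - s| := le_abs_self _
        _ ≤ _ := le_max_left _ _
    · calc s - c ≤ s - b := by linarith
        _ = -(b - s) := by ring
        _ ≤ |b - s| := neg_le_abs _
        _ ≤ _ := le_max_right _ _

/-- rescaled per-segment bending integrand -/
def phiFun : ℝ × ℝ × ℝ × ℝ → ℝ := fun p =>
  2 * p.2.2.2 ^ 2 * (Real.sqrt (1 + p.1 ^ 2) ^ 3 + Real.sqrt (1 + p.2.1 ^ 2) ^ 3) /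
    (Real.sqrt (1 + p.1 ^ 2) * Real.sqrt (1 + p.2.1 ^ 2) *
      (Real.sqrt (1 + p.1 ^ 2) + Real.sqrt (1 + p.2.1 ^ 2)) ^ 2 * (1 + p.2.2.1 ^ 2) ^ 2)

lemma phiFun_continuous : Continuous phiFun := by
  apply Continuous.div
  · fun_prop
  · fun_prop
  · intro p
    have h1 : (0:ℝ) < Real.sqrt (1 + p.1 ^ 2) :=
      lt_of_lt_of_le one_pos (one_le_sqrt_one_add_sq _)
    have h2 : (0:ℝ) < Real.sqrt (1 + p.2.1 ^ 2) :=
      lt_of_lt_of_le one_pos (one_le_sqrt_one_add_sq _)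
    have h3 : (0:ℝ) < 1 + p.2.2.1 ^ 2 := by positivity
    exact ne_of_gt (by positivity)

lemma phiFun_diag (s E : ℝ) : phiFun (s, s, s, E) = E ^ 2 / (1 + s ^ 2) ^ ((5:ℝ)/2) := by
  have h0 : (0:ℝ) ≤ 1 + s ^ 2 := by positivity
  have hp : (0:ℝ) < Real.sqrt (1 + s ^ 2) := lt_of_lt_of_le one_pos (one_le_sqrt_one_add_sq s)
  simp only [phiFun]
  set p := Real.sqrt (1 + s ^ 2) with hpdef
  have hsq : p ^ 2 = 1 + s ^ 2 := Real.sq_sqrt h0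
  have hr : (1 + s ^ 2) ^ ((5:ℝ)/2) = p ^ 5 := by
    rw [← hsq, ← Real.rpow_natCast p 2, ← Real.rpow_natCast p 5, ← Real.rpow_mul hp.le]
    norm_num
  rw [hr, ← hsq]
  field_simp
  ring

lemma term_eq (h a b c D : ℝ) (hh : 0 < h) (hba : b - a = h * D)
    (harc : Real.arctan b - Real.arctan a = (b - a) / (1 + c ^ 2)) :
    Real.arccos ((1 + a * b) / (Real.sqrt (1 + a ^ 2) * Real.sqrt (1 + b ^ 2))) ^ 2 *
      (((h / 2 * Real.sqrt (1 + a ^ 2)) ^ 3 + (h / 2 * Real.sqrt (1 + b ^ 2)) ^ 3) /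
        (h / 2 * Real.sqrt (1 + a ^ 2) * (h / 2 * Real.sqrt (1 + b ^ 2)) *
          (h / 2 * Real.sqrt (1 + a ^ 2) + h / 2 * Real.sqrt (1 + b ^ 2)) ^ 2)) =
      h * phiFun (a, b, c, D) := by
  have hpa : (0:ℝ) < Real.sqrt (1 + a ^ 2) := lt_of_lt_of_le one_pos (one_le_sqrt_one_add_sq a)
  have hpb : (0:ℝ) < Real.sqrt (1 + b ^ 2) := lt_of_lt_of_le one_pos (one_le_sqrt_one_add_sq b)
  have hc2 : (0:ℝ) < 1 + c ^ 2 := by positivity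
  rw [arccos_eq, sq_abs, harc, hba]
  simp only [phiFun]
  field_simp

lemma sum_Icc_int_eq (N : ℕ) (F : ℤ → ℝ) :
    ∑ j ∈ Finset.Icc (1 : ℤ) (N : ℤ), F j = ∑ i ∈ Finset.range N, F ((i : ℤ) + 1) := by
  refine Finset.sum_nbij' (fun j => (j - 1).toNat) (fun i => (i : ℤ) + 1) ?_ ?_ ?_ ?_ ?_ <;>
      intro k hk <;>
      simp only [Finset.mem_Icc, Finset.mem_range] at *
  · omega
  · omega
  · omega
  · omega
  · congr 1
    omega

/-- Consistency of the polygonal discrete bending energy: the bending energy of the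
interpolating polygon `Π_h v` converges to `∫₀¹ v''²/(1+v'²)^{5/2}`. -/
theorem stmt9 (v : ℝ → ℝ) (hv : ContDiff ℝ 2 v) (hper : ∀ x, v (x + 1) = v x) :
    Tendsto (fun N : ℕ =>
        ∑ j ∈ Finset.Icc (1 : ℤ) (N : ℤ),
          θq N (fun k : ℤ => v (xj N k)) j ^ 2 *
            ((lq N (fun k : ℤ => v (xj N k)) j ^ 3 +
                lq N (fun k : ℤ => v (xj N k)) (j + 1) ^ 3) /
              (lq N (fun k : ℤ => v (xj N k)) j * lq N (fun k : ℤ => v (xj N k)) (j + 1) *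
                (lq N (fun k : ℤ => v (xj N k)) j +
                  lq N (fun k : ℤ => v (xj N k)) (j + 1)) ^ 2)))
      atTop
      (nhds (∫ x in Set.Ioo (0 : ℝ) 1,
        deriv (deriv v) x ^ 2 / (1 + deriv v x ^ 2) ^ ((5 : ℝ) / 2))) := by
  obtain ⟨hvd, hd1, hdc, hd2c⟩ := contdiff_pieces v hv
  set G : ℝ → ℝ := fun x => deriv (deriv v) x ^ 2 / (1 + deriv v x ^ 2) ^ ((5:ℝ)/2) with hG
  have hGc : Continuous G := by
    apply Continuous.div (by fun_prop)
      (Continuous.rpow_const (by fun_prop) (fun x => Or.inr (by norm_num)))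
      (fun x => ne_of_gt (Real.rpow_pos_of_pos (by positivity) _))
  obtain ⟨M₁, hM₁⟩ :=
    (isCompact_Icc (a := (-1:ℝ)) (b := 2)).exists_bound_of_continuousOn hdc.continuousOn
  obtain ⟨M₂, hM₂⟩ :=
    (isCompact_Icc (a := (-1:ℝ)) (b := 2)).exists_bound_of_continuousOn hd2c.continuousOn
  set M : ℝ := max M₁ M₂ with hM
  have hM₁M : M₁ ≤ M := le_max_left _ _
  have hM₂M : M₂ ≤ M := le_max_right _ _
  set K : Set (ℝ × ℝ × ℝ × ℝ) :=
    Set.Icc (-M) M ×ˢ Set.Icc (-M) M ×ˢ Set.Icc (-M) M ×ˢ Set.Icc (-M) M with hK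
  have hKuc : UniformContinuousOn phiFun K :=
    (isCompact_Icc.prod (isCompact_Icc.prod
      (isCompact_Icc.prod isCompact_Icc))).uniformContinuousOn_of_continuous
      phiFun_continuous.continuousOn
  rw [Metric.uniformContinuousOn_iff] at hKuc
  have hucd : UniformContinuousOn (deriv v) (Set.Icc (-1:ℝ) 2) :=
    isCompact_Icc.uniformContinuousOn_of_continuous hdc.continuousOn
  have hucd2 : UniformContinuousOn (deriv (deriv v)) (Set.Icc (-1:ℝ) 2) :=
    isCompact_Icc.uniformContinuousOn_of_continuous hd2c.continuousOn
  have hucG : UniformContinuousOn G (Set.Icc (0:ℝ) 1) :=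
    isCompact_Icc.uniformContinuousOn_of_continuous hGc.continuousOn
  rw [Metric.uniformContinuousOn_iff] at hucd hucd2 hucG
  rw [Metric.tendsto_atTop]
  intro ε hε
  obtain ⟨δ₁, hδ₁, hΦ⟩ := hKuc (ε/4) (by positivity)
  obtain ⟨δ₂, hδ₂, hd'⟩ := hucd δ₁ hδ₁
  obtain ⟨δ₂', hδ₂', hd''⟩ := hucd2 δ₁ hδ₁
  obtain ⟨δ₃, hδ₃, hGuc⟩ := hucG (ε/4) (by positivity)
  set δ : ℝ := min (min δ₂ δ₂') δ₃ with hδdef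
  have hδ : 0 < δ := lt_min (lt_min hδ₂ hδ₂') hδ₃
  have hδa : δ ≤ δ₂ := le_trans (min_le_left _ _) (min_le_left _ _)
  have hδb : δ ≤ δ₂' := le_trans (min_le_left _ _) (min_le_right _ _)
  have hδc : δ ≤ δ₃ := min_le_right _ _
  obtain ⟨N₀, hN₀⟩ := exists_nat_gt (1/δ)
  refine ⟨max N₀ 1, fun N hN => ?_⟩
  have hN1 : 1 ≤ N := le_trans (le_max_right _ _) hN
  have hNpos : (0:ℝ) < (N:ℝ) := by exact_mod_cast Nat.lt_of_lt_of_le Nat.zero_lt_one hN1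
  set h : ℝ := 1 / (N:ℝ) with hhdef
  have hh : 0 < h := by rw [hhdef]; positivity
  have hhδ : h < δ := by
    rw [hhdef, div_lt_iff₀ hNpos]
    have h2 : (N₀:ℝ) ≤ N := by exact_mod_cast le_trans (le_max_left _ _) hN
    have h3 : (1:ℝ)/δ < N := lt_of_lt_of_le hN₀ h2
    rw [div_lt_iff₀ hδ] at h3
    linarith
  have hh1 : h ≤ 1 := by
    rw [hhdef, div_le_one hNpos]
    exact_mod_cast hN1
  set w : ℤ → ℝ := fun k : ℤ => v (xj N k) with hw
  set A : ℕ → ℝ := fun i => (i : ℝ) * h with hA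
  have hint : ∀ k, IntervalIntegrable G volume (A k) (A (k+1)) :=
    fun k => hGc.intervalIntegrable _ _
  have hI : ∫ x in Set.Ioo (0:ℝ) 1, G x
      = ∑ i ∈ Finset.range N, ∫ x in (A i)..(A (i+1)), G x := by
    rw [intervalIntegral.sum_integral_adjacent_intervals (fun k _ => hint k)]
    have hA0 : A 0 = 0 := by simp [hA]
    have hAN : A N = 1 := by rw [hA]; rw [hhdef]; field_simp
    rw [hA0, hAN, intervalIntegral.integral_of_le zero_le_one,
      MeasureTheory.integral_Ioc_eq_integral_Ioo]
  have key : ∀ i ∈ Finset.range N,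
      |θq N w ((i:ℤ)+1) ^ 2 *
          ((lq N w ((i:ℤ)+1) ^ 3 + lq N w ((i:ℤ)+1+1) ^ 3) /
            (lq N w ((i:ℤ)+1) * lq N w ((i:ℤ)+1+1) *
              (lq N w ((i:ℤ)+1) + lq N w ((i:ℤ)+1+1)) ^ 2)) -
        ∫ x in (A i)..(A (i+1)), G x| ≤ ε/2 * h := by
    intro i hi
    rw [Finset.mem_range] at hi
    have hi' : ((i:ℝ)+1) ≤ N := by exact_mod_cast hi
    have hi0 : (0:ℝ) ≤ (i:ℝ) := Nat.cast_nonneg i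
    set j : ℤ := (i:ℤ) + 1 with hj
    have hxj : xj N j = A (i+1) := by
      simp only [xj, hA, hj, hhdef]; push_cast; ring
    have hxjm : xj N (j-1) = A i := by
      simp only [xj, hA, hj, hhdef]; push_cast; ring
    have hxmh : xj N (j-1) = xj N j - h := by
      simp only [xj, hj, hhdef]; push_cast; ring
    have hxph : xj N (j+1) = xj N j + h := by
      simp only [xj, hj, hhdef]; push_cast; ring
    have hAi0 : 0 ≤ A i := by
      rw [hA]; positivity
    have hAi1 : A (i+1) ≤ 1 := by
      rw [hA]; push_cast; rw [hhdef, mul_one_div, div_le_one hNpos]; exact hi'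
    have hAisucc : A (i+1) = A i + h := by rw [hA]; push_cast; ring
    have hxj0 : 0 ≤ xj N j := by rw [hxj]; linarith [hAi0, hh.le]
    have hxj1 : xj N j ≤ 1 := by rw [hxj]; exact hAi1
    have hxjIcc : xj N j ∈ Set.Icc (-1:ℝ) 2 := ⟨by linarith, by linarith⟩
    have hxjIcc01 : xj N j ∈ Set.Icc (0:ℝ) 1 := ⟨hxj0, hxj1⟩
    obtain ⟨ξa, hξa, hξaeq⟩ := exists_deriv_eq_slope v
      (show xj N (j-1) < xj N j from by rw [hxmh]; linarith)
      hvd.continuous.continuousOn hvd.differentiableOn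
    obtain ⟨ξb, hξb, hξbeq⟩ := exists_deriv_eq_slope v
      (show xj N j < xj N (j+1) from by rw [hxph]; linarith)
      hvd.continuous.continuousOn hvd.differentiableOn
    obtain ⟨η, hη, hηeq⟩ := secondDiff_mvt v hv (xj N j) h hh
    have hAval : dq N w j = deriv v ξa := by
      simp only [dq, hw]
      rw [hξaeq, show xj N j - xj N (j-1) = h from by rw [hxmh]; ring, hhdef]
    have hBval : dq N w (j+1) = deriv v ξb := by
      simp only [dq, hw]
      rw [show j+1-1 = j from by ring, hξbeq,
        show xj N (j+1) - xj N j = h from by rw [hxph]; ring, hhdef]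
    have hBA : dq N w (j+1) - dq N w j = h * deriv (deriv v) η := by
      rw [← hηeq]
      simp only [dq, hw]
      rw [show j+1-1 = j from by ring, hxph, hxmh, ← hhdef]
      field_simp
      ring
    obtain ⟨c, hc1, hc2, harc⟩ := arctan_mvt (dq N w j) (dq N w (j+1))
    have hterm : θq N w j ^ 2 *
        ((lq N w j ^ 3 + lq N w (j+1) ^ 3) /
          (lq N w j * lq N w (j+1) * (lq N w j + lq N w (j+1)) ^ 2)) =
        h * phiFun (dq N w j, dq N w (j+1), c, deriv (deriv v) η) := by
      have := term_eq h (dq N w j) (dq N w (j+1)) c (deriv (deriv v) η) hh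
        (by linarith [hBA]) harc
      simp only [θq, lq, ← hhdef]
      exact this
    have hGx : G (xj N j) = phiFun (deriv v (xj N j), deriv v (xj N j),
        deriv v (xj N j), deriv (deriv v) (xj N j)) := by
      simp only [hG]; exact (phiFun_diag _ _).symm
    have hξaI : ξa ∈ Set.Icc (-1:ℝ) 2 := by
      have h1 := hξa.1; have h2 := hξa.2
      rw [hxmh] at h1
      constructor <;> [linarith; linarith]
    have hξbI : ξb ∈ Set.Icc (-1:ℝ) 2 := by
      have h1 := hξb.1; have h2 := hξb.2
      rw [hxph] at h2
      constructor <;> [linarith; linarith]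
    have hηI : η ∈ Set.Icc (-1:ℝ) 2 := by
      have h1 := hη.1; have h2 := hη.2
      constructor <;> [linarith; linarith]
    have haM : |dq N w j| ≤ M := by
      rw [hAval, ← Real.norm_eq_abs]; exact le_trans (hM₁ ξa hξaI) hM₁M
    have hbM : |dq N w (j+1)| ≤ M := by
      rw [hBval, ← Real.norm_eq_abs]; exact le_trans (hM₁ ξb hξbI) hM₁M
    have hcM : |c| ≤ M := by
      have := abs_sub_le_max (0:ℝ) hc1 hc2
      simp only [sub_zero] at this
      exact le_trans this (max_le haM hbM)
    have hDM : |deriv (deriv v) η| ≤ M := by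
      rw [← Real.norm_eq_abs]; exact le_trans (hM₂ η hηI) hM₂M
    have hsM : |deriv v (xj N j)| ≤ M := by
      rw [← Real.norm_eq_abs]; exact le_trans (hM₁ _ hxjIcc) hM₁M
    have hD0M : |deriv (deriv v) (xj N j)| ≤ M := by
      rw [← Real.norm_eq_abs]; exact le_trans (hM₂ _ hxjIcc) hM₂M
    have hpK : (dq N w j, dq N w (j+1), c, deriv (deriv v) η) ∈ K := by
      rw [hK]
      exact ⟨Set.mem_Icc.mpr (abs_le.mp haM), Set.mem_Icc.mpr (abs_le.mp hbM),
        Set.mem_Icc.mpr (abs_le.mp hcM), Set.mem_Icc.mpr (abs_le.mp hDM)⟩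
    have hp0K : (deriv v (xj N j), deriv v (xj N j), deriv v (xj N j),
        deriv (deriv v) (xj N j)) ∈ K := by
      rw [hK]
      exact ⟨Set.mem_Icc.mpr (abs_le.mp hsM), Set.mem_Icc.mpr (abs_le.mp hsM),
        Set.mem_Icc.mpr (abs_le.mp hsM), Set.mem_Icc.mpr (abs_le.mp hD0M)⟩
    have hda : |dq N w j - deriv v (xj N j)| < δ₁ := by
      rw [hAval, ← Real.dist_eq]
      apply hd' ξa hξaI (xj N j) hxjIcc
      rw [Real.dist_eq, abs_lt]
      have h1 := hξa.1; have h2 := hξa.2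
      rw [hxmh] at h1
      constructor <;> [linarith; linarith]
    have hdb : |dq N w (j+1) - deriv v (xj N j)| < δ₁ := by
      rw [hBval, ← Real.dist_eq]
      apply hd' ξb hξbI (xj N j) hxjIcc
      rw [Real.dist_eq, abs_lt]
      have h1 := hξb.1; have h2 := hξb.2
      rw [hxph] at h2
      constructor <;> [linarith; linarith]
    have hdD : |deriv (deriv v) η - deriv (deriv v) (xj N j)| < δ₁ := by
      rw [← Real.dist_eq]
      apply hd'' η hηI (xj N j) hxjIcc
      rw [Real.dist_eq, abs_lt]
      have h1 := hη.1; have h2 := hη.2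
      constructor <;> [linarith; linarith]
    have hdcc : |c - deriv v (xj N j)| < δ₁ :=
      lt_of_le_of_lt (abs_sub_le_max (deriv v (xj N j)) hc1 hc2) (max_lt hda hdb)
    have hdist : dist
        ((dq N w j, dq N w (j+1), c, deriv (deriv v) η) : ℝ × ℝ × ℝ × ℝ)
        (deriv v (xj N j), deriv v (xj N j), deriv v (xj N j),
          deriv (deriv v) (xj N j)) < δ₁ := by
      simp only [Prod.dist_eq, Real.dist_eq]
      exact max_lt hda (max_lt hdb (max_lt hdcc hdD))
    have hΦd := hΦ _ hpK _ hp0K hdist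
    rw [Real.dist_eq] at hΦd
    have partA : |θq N w j ^ 2 *
        ((lq N w j ^ 3 + lq N w (j+1) ^ 3) /
          (lq N w j * lq N w (j+1) * (lq N w j + lq N w (j+1)) ^ 2)) -
        h * G (xj N j)| ≤ ε/4 * h := by
      rw [hterm, hGx, ← mul_sub, abs_mul, abs_of_pos hh]
      calc h * |phiFun _ - phiFun _| ≤ h * (ε/4) :=
            mul_le_mul_of_nonneg_left hΦd.le hh.le
        _ = ε/4 * h := mul_comm _ _
    have partB : |(∫ x in (A i)..(A (i+1)), G x) - h * G (xj N j)| ≤ ε/4 * h := by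
      have hle : A i ≤ A (i+1) := by rw [hAisucc]; linarith
      have heq : (∫ x in (A i)..(A (i+1)), G x) - h * G (xj N j)
          = ∫ x in (A i)..(A (i+1)), (G x - G (xj N j)) := by
        rw [intervalIntegral.integral_sub (hint i) intervalIntegrable_const,
          intervalIntegral.integral_const, smul_eq_mul]
        congr 2
        rw [hAisucc]; ring
      rw [heq]
      have hbound : ∀ x ∈ Set.uIoc (A i) (A (i+1)), ‖G x - G (xj N j)‖ ≤ ε/4 := by
        intro x hx
        rw [Set.uIoc_of_le hle, Set.mem_Ioc] at hx
        rw [Real.norm_eq_abs]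
        have hx01 : x ∈ Set.Icc (0:ℝ) 1 := ⟨by linarith [hx.1, hAi0], by linarith [hx.2, hAi1]⟩
        have hxd : dist x (xj N j) < δ₃ := by
          rw [Real.dist_eq, abs_lt]
          have := hx.1
          rw [hAisucc] at hx
          constructor
          · rw [hxj]; linarith [hx.1, hhδ, hδc]
          · rw [hxj]; linarith [hx.2, hh, hδc, hhδ]
        exact (hGuc x hx01 (xj N j) hxjIcc01 hxd).le
      calc ‖∫ x in (A i)..(A (i+1)), (G x - G (xj N j))‖
          ≤ ε/4 * |A (i+1) - A i| :=
            intervalIntegral.norm_integral_le_of_norm_le_const hbound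
        _ = ε/4 * h := by rw [hAisucc, abs_of_nonneg (by linarith : (0:ℝ) ≤ A i + h - A i)]; ring_nf
    have hsplit : θq N w j ^ 2 *
        ((lq N w j ^ 3 + lq N w (j+1) ^ 3) /
          (lq N w j * lq N w (j+1) * (lq N w j + lq N w (j+1)) ^ 2)) -
        (∫ x in (A i)..(A (i+1)), G x)
        = (θq N w j ^ 2 *
        ((lq N w j ^ 3 + lq N w (j+1) ^ 3) /
          (lq N w j * lq N w (j+1) * (lq N w j + lq N w (j+1)) ^ 2)) - h * G (xj N j))
          - ((∫ x in (A i)..(A (i+1)), G x) - h * G (xj N j)) := by ring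
    rw [hj] at *
    rw [hsplit]
    calc |_ - _| ≤ |_| + |_| := abs_sub _ _
      _ ≤ ε/4 * h + ε/4 * h := add_le_add partA partB
      _ = ε/2 * h := by ring
  rw [Real.dist_eq, hI]
  have hsum : ∑ j ∈ Finset.Icc (1 : ℤ) (N:ℤ),
        θq N w j ^ 2 *
          ((lq N w j ^ 3 + lq N w (j + 1) ^ 3) /
            (lq N w j * lq N w (j + 1) *
              (lq N w j + lq N w (j + 1)) ^ 2))
      - ∑ i ∈ Finset.range N, ∫ x in (A i)..(A (i+1)), G x
      = ∑ i ∈ Finset.range N,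
        (θq N w ((i:ℤ)+1) ^ 2 *
          ((lq N w ((i:ℤ)+1) ^ 3 + lq N w ((i:ℤ)+1+1) ^ 3) /
            (lq N w ((i:ℤ)+1) * lq N w ((i:ℤ)+1+1) *
              (lq N w ((i:ℤ)+1) + lq N w ((i:ℤ)+1+1)) ^ 2))
          - ∫ x in (A i)..(A (i+1)), G x) := by
    rw [sum_Icc_int_eq N (fun j => θq N w j ^ 2 *
          ((lq N w j ^ 3 + lq N w (j + 1) ^ 3) /
            (lq N w j * lq N w (j + 1) *
              (lq N w j + lq N w (j + 1)) ^ 2))), Finset.sum_sub_distrib]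
  rw [hsum]
  calc |∑ i ∈ Finset.range N, _| ≤ ∑ i ∈ Finset.range N, _ :=
        Finset.abs_sum_le_sum_abs _ _
    _ ≤ ∑ _i ∈ Finset.range N, ε/2 * h := Finset.sum_le_sum key
    _ = N * (ε/2 * h) := by rw [Finset.sum_const, Finset.card_range, nsmul_eq_mul]
    _ = ε/2 := by rw [hhdef]; field_simp
    _ < ε := by linarith


end
end

section
/- Lower semicontinuity of the bending energy under H¹ convergence: Let v and vₙ (n ∈ ℕ) be twice continuously differentiable 1-periodic functions ℝ → ℝ with ∫₀¹ (vₙ(x) − v(x))² dx → 0 and ∫₀¹ (vₙ'(x) − v'(x))² dx → 0 as n → ∞. Then ∫₀¹ v''(x)²/(1 + v'(x)²)^{5/2} dx ≤ liminf_{n→∞} ∫₀¹ vₙ''(x)²/(1 + vₙ'(x)²)^{5/2} dx. -/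
open MeasureTheory Filter

noncomputable def GG : ℝ → ℝ := fun p => ∫ t in (0:ℝ)..p, (1 + t ^ 2) ^ (-(5:ℝ)/4)

lemma contW : Continuous (fun t : ℝ => (1 + t ^ 2) ^ (-(5:ℝ)/4)) := by
  apply Continuous.rpow_const (by continuity)
  intro t; left; positivity

lemma Wle1 (t : ℝ) : (1 + t ^ 2 : ℝ) ^ (-(5:ℝ)/4) ≤ 1 :=
  Real.rpow_le_one_of_one_le_of_nonpos (by nlinarith [sq_nonneg t]) (by norm_num)

lemma GG_hasDerivAt (p : ℝ) : HasDerivAt GG ((1 + p ^ 2) ^ (-(5:ℝ)/4)) p :=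
  intervalIntegral.integral_hasDerivAt_right (contW.intervalIntegrable _ _)
    (contW.stronglyMeasurable.stronglyMeasurableAtFilter) contW.continuousAt

lemma GG_lip (a b : ℝ) : |GG a - GG b| ≤ |a - b| := by
  have h : GG a - GG b = ∫ t in b..a, (1 + t ^ 2) ^ (-(5:ℝ)/4) := by
    unfold GG
    exact intervalIntegral.integral_interval_sub_left (contW.intervalIntegrable (μ := volume) 0 a)
      (contW.intervalIntegrable (μ := volume) 0 b)
  rw [h]
  have := intervalIntegral.norm_integral_le_of_norm_le_const
    (C := 1) (f := fun t : ℝ => (1 + t ^ 2) ^ (-(5:ℝ)/4)) (a := b) (b := a) ?_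
  · simpa [Real.norm_eq_abs, abs_sub_comm] using this
  · intro x _
    rw [Real.norm_eq_abs, abs_of_nonneg (Real.rpow_nonneg (by positivity) _)]
    exact Wle1 x

lemma sq_ident (p q : ℝ) :
    ((1 + p ^ 2) ^ (-(5:ℝ)/4) * q) ^ 2 = q ^ 2 / (1 + p ^ 2) ^ ((5:ℝ)/2) := by
  have h : (0:ℝ) < 1 + p ^ 2 := by positivity
  have h2 : (-(5:ℝ)/4) * (2:ℕ) = -(5/2) := by push_cast; ring
  rw [mul_pow, ← Real.rpow_natCast ((1 + p ^ 2) ^ (-(5:ℝ)/4)) 2, ← Real.rpow_mul h.le,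
    h2, Real.rpow_neg h.le, div_eq_mul_inv, mul_comm]
  ring

lemma periodic_deriv' (f : ℝ → ℝ) (hf : ∀ x, f (x + 1) = f x) (x : ℝ) :
    deriv f (x + 1) = deriv f x := by
  calc deriv f (x + 1) = deriv (fun y => f (y + 1)) x := (deriv_comp_add_const f 1 x).symm
  _ = deriv f x := by simp only [hf]

/-- helper to conclude from ε-approximations in EReal -/
lemma ereal_le_of_forall_sub (E : ℝ) (M : EReal)
    (h : ∀ ε : ℝ, 0 < ε → ((E - ε : ℝ) : EReal) ≤ M) : (E : EReal) ≤ M := by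
  induction M using EReal.rec with
  | bot =>
    exfalso
    have := h 1 one_pos
    simp only [le_bot_iff] at this
    exact EReal.coe_ne_bot _ this
  | coe r =>
    rw [EReal.coe_le_coe_iff]
    exact le_of_forall_sub_le fun ε hε => EReal.coe_le_coe_iff.mp (h ε hε)
  | top => exact le_top

set_option maxHeartbeats 1000000

/-- Lower semicontinuity of the bending energy under H¹ convergence. -/
theorem stmt10 (v : ℝ → ℝ) (vn : ℕ → ℝ → ℝ)
    (hv : ContDiff ℝ 2 v) (hvn : ∀ n, ContDiff ℝ 2 (vn n))
    (hper : ∀ x, v (x + 1) = v x) (hvnper : ∀ n x, vn n (x + 1) = vn n x)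
    (hL2 : Tendsto (fun n => ∫ x in Set.Ioo (0 : ℝ) 1, (vn n x - v x) ^ 2) atTop (nhds 0))
    (hL2' : Tendsto (fun n => ∫ x in Set.Ioo (0 : ℝ) 1, (deriv (vn n) x - deriv v x) ^ 2)
      atTop (nhds 0)) :
    ((∫ x in Set.Ioo (0 : ℝ) 1,
        deriv (deriv v) x ^ 2 / (1 + deriv v x ^ 2) ^ ((5 : ℝ) / 2) : ℝ) : EReal) ≤
      liminf (fun n => ((∫ x in Set.Ioo (0 : ℝ) 1,
        deriv (deriv (vn n)) x ^ 2 / (1 + deriv (vn n) x ^ 2) ^ ((5 : ℝ) / 2) : ℝ) : EReal))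
        atTop := by
  clear hL2
  -- convert Ioo integrals to interval integrals
  have hconv : ∀ f : ℝ → ℝ, (∫ x in Set.Ioo (0:ℝ) 1, f x) = ∫ x in (0:ℝ)..1, f x := by
    intro f
    rw [intervalIntegral.integral_of_le (by norm_num : (0:ℝ) ≤ 1), integral_Ioc_eq_integral_Ioo]
  -- smoothness facts
  have hv2 : ContDiff ℝ 1 (deriv v) := by
    have h2 : ContDiff ℝ (1 + 1) v := by exact_mod_cast hv
    exact (contDiff_succ_iff_deriv.mp h2).2.2
  have hdv : Differentiable ℝ v := (contDiff_succ_iff_deriv.mp (by exact_mod_cast hv :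
    ContDiff ℝ (1 + 1) v)).1
  have hddv : Differentiable ℝ (deriv v) := (contDiff_one_iff_deriv.mp hv2).1
  have hcddv : Continuous (deriv (deriv v)) := (contDiff_one_iff_deriv.mp hv2).2
  have hcdv : Continuous (deriv v) := hv2.continuous
  have hvn2 : ∀ n, ContDiff ℝ 1 (deriv (vn n)) := fun n => by
    have h2 : ContDiff ℝ (1 + 1) (vn n) := by exact_mod_cast hvn n
    exact (contDiff_succ_iff_deriv.mp h2).2.2
  have hddvn : ∀ n, Differentiable ℝ (deriv (vn n)) :=
    fun n => (contDiff_one_iff_deriv.mp (hvn2 n)).1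
  have hcddvn : ∀ n, Continuous (deriv (deriv (vn n))) :=
    fun n => (contDiff_one_iff_deriv.mp (hvn2 n)).2
  have hcdvn : ∀ n, Continuous (deriv (vn n)) := fun n => (hvn2 n).continuous
  -- periodicity of derivatives
  have hdvper : ∀ x, deriv v (x + 1) = deriv v x := periodic_deriv' v hper
  have hdv1 : deriv v 1 = deriv v 0 := by simpa using hdvper 0
  have hddv1 : deriv (deriv v) 1 = deriv (deriv v) 0 := by
    simpa using periodic_deriv' (deriv v) hdvper 0
  have hdvn1 : ∀ n, deriv (vn n) 1 = deriv (vn n) 0 := fun n => by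
    simpa using periodic_deriv' (vn n) (hvnper n) 0
  -- the reduced integrands
  set dg : ℝ → ℝ := fun x => (1 + deriv v x ^ 2) ^ (-(5:ℝ)/4) * deriv (deriv v) x with hdgdef
  set dgn : ℕ → ℝ → ℝ :=
    fun n x => (1 + deriv (vn n) x ^ 2) ^ (-(5:ℝ)/4) * deriv (deriv (vn n)) x with hdgndef
  have cont_dg : Continuous dg := (contW.comp hcdv).mul hcddv
  have cont_dgn : ∀ n, Continuous (dgn n) := fun n => (contW.comp (hcdvn n)).mul (hcddvn n)
  have hGGdiff : Differentiable ℝ GG := fun p => (GG_hasDerivAt p).differentiableAt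
  have contGG : Continuous GG := hGGdiff.continuous
  have cont_g : Continuous (fun x => GG (deriv v x)) := contGG.comp hcdv
  have cont_gn : ∀ n, Continuous (fun x => GG (deriv (vn n) x)) :=
    fun n => contGG.comp (hcdvn n)
  have hg' : ∀ x, HasDerivAt (fun y => GG (deriv v y)) (dg x) x := fun x => by
    exact
      (GG_hasDerivAt (deriv v x)).comp x ((hddv x).hasDerivAt)
  have hgn' : ∀ n x, HasDerivAt (fun y => GG (deriv (vn n) y)) (dgn n x) x := fun n x => by
    exact
      (GG_hasDerivAt (deriv (vn n) x)).comp x ((hddvn n x).hasDerivAt)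
  -- rewrite the energies
  have hE : (∫ x in Set.Ioo (0:ℝ) 1,
      deriv (deriv v) x ^ 2 / (1 + deriv v x ^ 2) ^ ((5:ℝ)/2)) = ∫ x in (0:ℝ)..1, dg x ^ 2 := by
    rw [hconv]
    exact intervalIntegral.integral_congr fun x _ => (sq_ident _ _).symm
  have hEn : ∀ n, (∫ x in Set.Ioo (0:ℝ) 1,
      deriv (deriv (vn n)) x ^ 2 / (1 + deriv (vn n) x ^ 2) ^ ((5:ℝ)/2))
        = ∫ x in (0:ℝ)..1, dgn n x ^ 2 := fun n => by
    rw [hconv]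
    exact intervalIntegral.integral_congr fun x _ => (sq_ident _ _).symm
  rw [hE]
  simp only [hEn]
  -- interval-integral version of the L² convergence of derivatives
  have hL2'' : Tendsto (fun n => ∫ x in (0:ℝ)..1, (deriv (vn n) x - deriv v x) ^ 2)
      atTop (nhds 0) := by
    simpa only [hconv] using hL2'
  apply ereal_le_of_forall_sub
  intro ε hε
  -- choose a near-optimal test function q
  have hδ : 0 < Real.sqrt ε / 3 := by positivity
  set δ := Real.sqrt ε / 3 with hδdef
  obtain ⟨p, hp⟩ := exists_polynomial_near_of_continuousOn 0 1 dg cont_dg.continuousOn δ hδ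
  set q : ℝ → ℝ := fun x => p.eval x - (p.eval 1 - p.eval 0) * x with hqdef
  set qd : ℝ → ℝ := fun x => (Polynomial.derivative p).eval x - (p.eval 1 - p.eval 0) with hqddef
  have hq' : ∀ x, HasDerivAt q (qd x) x := by
    intro x
    have h1 : HasDerivAt (fun y : ℝ => (p.eval 1 - p.eval 0) * y) (p.eval 1 - p.eval 0) x := by
      simpa using (hasDerivAt_id x).const_mul (p.eval 1 - p.eval 0)
    exact (p.hasDerivAt x).sub h1
  have cont_q : Continuous q := (p.continuous).sub (continuous_const.mul continuous_id)
  have cont_qd : Continuous qd := ((Polynomial.derivative p).continuous).sub continuous_const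
  have hq10 : q 1 = q 0 := by simp [hqdef]
  have hdg10 : dg 1 = dg 0 := by rw [hdgdef]; simp only; rw [hdv1, hddv1]
  -- closeness of q to dg
  have hq_close : ∀ x ∈ Set.Icc (0:ℝ) 1, |q x - dg x| ≤ 3 * δ := by
    intro x hx
    have h1 := hp x hx
    have h0' := hp 0 (by norm_num)
    have h1' := hp 1 (by norm_num)
    have hxx : |x| ≤ 1 := abs_le.mpr ⟨by linarith [hx.1], hx.2⟩
    have key : q x - dg x =
        (p.eval x - dg x) - ((p.eval 1 - dg 1) - (p.eval 0 - dg 0)) * x := by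
      simp only [hqdef]
      rw [hdg10]; ring
    calc |q x - dg x|
        = |(p.eval x - dg x) - ((p.eval 1 - dg 1) - (p.eval 0 - dg 0)) * x| := by rw [key]
      _ ≤ |p.eval x - dg x| + |((p.eval 1 - dg 1) - (p.eval 0 - dg 0)) * x| := abs_sub _ _
      _ = |p.eval x - dg x| + |(p.eval 1 - dg 1) - (p.eval 0 - dg 0)| * |x| := by rw [abs_mul]
      _ ≤ δ + (|p.eval 1 - dg 1| + |p.eval 0 - dg 0|) * 1 :=
          add_le_add h1.le (mul_le_mul (abs_sub _ _) hxx (abs_nonneg x) (by positivity))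
      _ ≤ 3 * δ := by nlinarith
  have hq_sq : ∀ x ∈ Set.Icc (0:ℝ) 1, (dg x - q x) ^ 2 ≤ ε := by
    intro x hx
    have h := hq_close x hx
    have hb := abs_le.mp h
    have h3 : (3 * δ : ℝ) ^ 2 = ε := by
      rw [hδdef, mul_div_cancel₀ _ (by norm_num : (3:ℝ) ≠ 0)]
      exact Real.sq_sqrt hε.le
    nlinarith
  -- key quantities
  set A : ℕ → ℝ := fun n => ∫ x in (0:ℝ)..1, q x * dgn n x with hAdef
  set B : ℕ → ℝ := fun n => ∫ x in (0:ℝ)..1, qd x * GG (deriv (vn n) x) with hBdef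
  set Bv : ℝ := ∫ x in (0:ℝ)..1, qd x * GG (deriv v x) with hBvdef
  set Q : ℝ := ∫ x in (0:ℝ)..1, q x ^ 2 with hQdef
  -- energy lower bound for each n
  have hEnA : ∀ n, 2 * A n - Q ≤ ∫ x in (0:ℝ)..1, dgn n x ^ 2 := by
    intro n
    have h1 : (∫ x in (0:ℝ)..1, (2 * (q x * dgn n x) - q x ^ 2)) = 2 * A n - Q := by
      rw [intervalIntegral.integral_sub (f := fun x => 2 * (q x * dgn n x)) (g := fun x => q x ^ 2)
          ((continuous_const.mul (cont_q.mul (cont_dgn n))).intervalIntegrable _ _)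
          ((cont_q.pow 2).intervalIntegrable _ _),
        intervalIntegral.integral_const_mul]
    rw [← h1]
    apply intervalIntegral.integral_mono_on (by norm_num)
      (((continuous_const.mul (cont_q.mul (cont_dgn n))).sub (cont_q.pow 2)).intervalIntegrable _ _)
      (((cont_dgn n).pow 2).intervalIntegrable _ _)
    intro x _
    show 2 * (q x * dgn n x) - q x ^ 2 ≤ dgn n x ^ 2
    nlinarith [sq_nonneg (dgn n x - q x)]
  -- integration by parts
  have hAB : ∀ n, A n = -(B n) := by
    intro n
    have hibp := intervalIntegral.integral_mul_deriv_eq_deriv_mul (a := (0:ℝ)) (b := 1)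
      (u := q) (v := fun x => GG (deriv (vn n) x)) (u' := qd) (v' := dgn n)
      (fun x _ => hq' x) (fun x _ => hgn' n x)
      (cont_qd.intervalIntegrable _ _) ((cont_dgn n).intervalIntegrable _ _)
    have hgn10 : GG (deriv (vn n) 1) = GG (deriv (vn n) 0) := by rw [hdvn1 n]
    have hBn : B n = ∫ x in (0:ℝ)..1, qd x * GG (deriv (vn n) x) := by rw [hBdef]
    rw [hAdef]; simp only
    rw [hibp]
    simp only [hq10, hgn10, ← hBn]
    ring
  have hAv : (∫ x in (0:ℝ)..1, q x * dg x) = -Bv := by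
    have hibp := intervalIntegral.integral_mul_deriv_eq_deriv_mul (a := (0:ℝ)) (b := 1)
      (u := q) (v := fun x => GG (deriv v x)) (u' := qd) (v' := dg)
      (fun x _ => hq' x) (fun x _ => hg' x)
      (cont_qd.intervalIntegrable _ _) (cont_dg.intervalIntegrable _ _)
    have hg10 : GG (deriv v 1) = GG (deriv v 0) := by rw [hdv1]
    rw [hibp]
    simp only [hq10, hg10, ← hBvdef]
    ring
  -- B n → Bv
  have hBtend : Tendsto B atTop (nhds Bv) := by
    obtain ⟨M0, hM0⟩ := (isCompact_Icc (a := (0:ℝ)) (b := 1)).exists_bound_of_continuousOn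
      cont_qd.continuousOn
    set M := max M0 0 with hMdef
    have hM : ∀ x ∈ Set.Icc (0:ℝ) 1, |qd x| ≤ M := fun x hx =>
      le_trans (by simpa using hM0 x hx) (le_max_left _ _)
    have hMnn : (0:ℝ) ≤ M := le_max_right _ _
    rw [Metric.tendsto_atTop]
    intro ε' hε'
    set θ := ε' / (2 * (M + 1)) with hθdef
    have hθ : 0 < θ := by positivity
    rw [Metric.tendsto_atTop] at hL2''
    obtain ⟨N, hN⟩ := hL2'' (θ ^ 2) (by positivity)
    refine ⟨N, fun n hn => ?_⟩
    have hfn : (∫ x in (0:ℝ)..1, (deriv (vn n) x - deriv v x) ^ 2) < θ ^ 2 := by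
      have h := hN n hn
      rw [Real.dist_eq, sub_zero] at h
      exact lt_of_le_of_lt (le_abs_self _) h
    have e1 : B n - Bv = ∫ x in (0:ℝ)..1,
        (qd x * GG (deriv (vn n) x) - qd x * GG (deriv v x)) := by
      rw [hBdef, hBvdef]
      exact (intervalIntegral.integral_sub ((cont_qd.mul (cont_gn n)).intervalIntegrable _ _)
        ((cont_qd.mul cont_g).intervalIntegrable _ _)).symm
    have e2 : |B n - Bv| ≤ ∫ x in (0:ℝ)..1,
        |qd x * GG (deriv (vn n) x) - qd x * GG (deriv v x)| := by
      rw [e1]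
      exact intervalIntegral.abs_integral_le_integral_abs (by norm_num)
    have e3 : (∫ x in (0:ℝ)..1, |qd x * GG (deriv (vn n) x) - qd x * GG (deriv v x)|)
        ≤ ∫ x in (0:ℝ)..1,
          M * (θ / 2 + (deriv (vn n) x - deriv v x) ^ 2 / (2 * θ)) := by
      apply intervalIntegral.integral_mono_on (by norm_num)
        ((((cont_qd.mul (cont_gn n)).sub (cont_qd.mul cont_g)).abs).intervalIntegrable _ _)
        ((continuous_const.mul (continuous_const.add
          ((((hcdvn n).sub hcdv).pow 2).div_const _))).intervalIntegrable _ _)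
      intro x hx
      have l1 : |qd x * GG (deriv (vn n) x) - qd x * GG (deriv v x)|
          = |qd x| * |GG (deriv (vn n) x) - GG (deriv v x)| := by
        rw [← abs_mul, mul_sub]
      have l2 : |GG (deriv (vn n) x) - GG (deriv v x)| ≤ |deriv (vn n) x - deriv v x| :=
        GG_lip _ _
      have l3 : |deriv (vn n) x - deriv v x|
          ≤ θ / 2 + (deriv (vn n) x - deriv v x) ^ 2 / (2 * θ) := by
        rw [div_add_div _ _ (by norm_num : (2:ℝ) ≠ 0) (by positivity : 2 * θ ≠ 0)]
        rw [le_div_iff₀ (by positivity)]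
        nlinarith [sq_nonneg (|deriv (vn n) x - deriv v x| - θ),
          sq_abs (deriv (vn n) x - deriv v x), abs_nonneg (deriv (vn n) x - deriv v x)]
      calc |qd x * GG (deriv (vn n) x) - qd x * GG (deriv v x)|
          = |qd x| * |GG (deriv (vn n) x) - GG (deriv v x)| := l1
        _ ≤ M * (θ / 2 + (deriv (vn n) x - deriv v x) ^ 2 / (2 * θ)) :=
            mul_le_mul (hM x hx) (l2.trans l3) (abs_nonneg _) hMnn
    have e4 : (∫ x in (0:ℝ)..1,
        M * (θ / 2 + (deriv (vn n) x - deriv v x) ^ 2 / (2 * θ)))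
        = M * (θ / 2 + (∫ x in (0:ℝ)..1, (deriv (vn n) x - deriv v x) ^ 2) / (2 * θ)) := by
      rw [intervalIntegral.integral_const_mul]
      congr 1
      rw [intervalIntegral.integral_add (f := fun _ => θ / 2)
        (g := fun x => (deriv (vn n) x - deriv v x) ^ 2 / (2 * θ))
        (intervalIntegrable_const (c := θ / 2))
        (((((hcdvn n).sub hcdv).pow 2).div_const _).intervalIntegrable _ _),
        intervalIntegral.integral_div]
      simp
    have e5 : M * (θ / 2 + (∫ x in (0:ℝ)..1, (deriv (vn n) x - deriv v x) ^ 2) / (2 * θ))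
        ≤ M * θ := by
      have h6 : (∫ x in (0:ℝ)..1, (deriv (vn n) x - deriv v x) ^ 2) / (2 * θ) ≤ θ / 2 := by
        rw [div_le_iff₀ (by positivity)]
        nlinarith [hfn]
      exact mul_le_mul_of_nonneg_left (by linarith) hMnn
    have hθe : θ * (2 * (M + 1)) = ε' := by
      rw [hθdef]; field_simp
    have e6 : M * θ < ε' := by nlinarith [mul_nonneg hMnn hθ.le, hθ]
    rw [Real.dist_eq]
    calc |B n - Bv| ≤ _ := e2
      _ ≤ _ := e3
      _ = _ := e4
      _ ≤ M * θ := e5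
      _ < ε' := e6
  -- limit of the lower bounds
  have hhtend : Tendsto (fun n => 2 * A n - Q) atTop (nhds (2 * (-Bv) - Q)) := by
    have h0 : Tendsto (fun n => 2 * (-(B n)) - Q) atTop (nhds (2 * (-Bv) - Q)) :=
      (hBtend.neg.const_mul 2).sub_const Q
    exact h0.congr fun n => by rw [← hAB n]
  -- liminf chain
  have hmono : liminf (fun n => ((2 * A n - Q : ℝ) : EReal)) atTop
      ≤ liminf (fun n => ((∫ x in (0:ℝ)..1, dgn n x ^ 2 : ℝ) : EReal)) atTop :=
    liminf_le_liminf (Eventually.of_forall fun n => EReal.coe_le_coe_iff.mpr (hEnA n))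
  have hlim : liminf (fun n => ((2 * A n - Q : ℝ) : EReal)) atTop
      = ((2 * (-Bv) - Q : ℝ) : EReal) :=
    (EReal.tendsto_coe.mpr hhtend).liminf_eq
  -- final comparison
  have hfin : (∫ x in (0:ℝ)..1, dg x ^ 2) - ε ≤ 2 * (-Bv) - Q := by
    have hexp : (∫ x in (0:ℝ)..1, (dg x - q x) ^ 2)
        = (∫ x in (0:ℝ)..1, dg x ^ 2) - 2 * (∫ x in (0:ℝ)..1, q x * dg x) + Q := by
      simp only [show ∀ x, (dg x - q x) ^ 2
        = (dg x ^ 2 - 2 * (q x * dg x)) + q x ^ 2 from fun x => by ring]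
      rw [intervalIntegral.integral_add (f := fun x => dg x ^ 2 - 2 * (q x * dg x))
          (g := fun x => q x ^ 2)
          (((cont_dg.pow 2).sub (continuous_const.mul (cont_q.mul cont_dg))).intervalIntegrable _ _)
          ((cont_q.pow 2).intervalIntegrable _ _),
        intervalIntegral.integral_sub (f := fun x => dg x ^ 2) (g := fun x => 2 * (q x * dg x))
          ((cont_dg.pow 2).intervalIntegrable _ _)
          ((continuous_const.mul (cont_q.mul cont_dg)).intervalIntegrable _ _),
        intervalIntegral.integral_const_mul]
    have hbnd : (∫ x in (0:ℝ)..1, (dg x - q x) ^ 2) ≤ ε := by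
      have h7 := intervalIntegral.integral_mono_on (μ := volume) (by norm_num : (0:ℝ) ≤ 1)
        (((cont_dg.sub cont_q).pow 2).intervalIntegrable 0 1)
        (intervalIntegrable_const (c := ε)) hq_sq
      simpa using h7
    rw [hAv] at hexp
    linarith
  calc (((∫ x in (0:ℝ)..1, dg x ^ 2) - ε : ℝ) : EReal)
      ≤ ((2 * (-Bv) - Q : ℝ) : EReal) := EReal.coe_le_coe_iff.mpr hfin
    _ = liminf (fun n => ((2 * A n - Q : ℝ) : EReal)) atTop := hlim.symm
    _ ≤ _ := hmono
end

section
/- Discrete coercivity of the bending energy under a slope bound: Let N ≥ 1 be an integer, h = 1/N, let v = (v_j) be a discrete curve, and let S > 0 be such that |d_j| ≤ S for all j. Then Σ_{j=1}^N θ_j²·(l_j³ + l_{j+1}³)/(l_j·l_{j+1}·(l_j + l_{j+1})²) ≥ (1 + S²)^{−5/2} · Σ_{j=1}^N D_j² · h. -/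
open Filter MeasureTheory

noncomputable section

set_option maxHeartbeats 1000000

lemma keylem (h a b S : ℝ) (hh : 0 < h) (ha : |a| ≤ S) (hb : |b| ≤ S) :
    (Real.sqrt (1 + S ^ 2) ^ 5)⁻¹ * (((b - a) / h) ^ 2 * h) ≤
      Real.arccos ((1 + a * b) / (Real.sqrt (1 + a ^ 2) * Real.sqrt (1 + b ^ 2))) ^ 2 *
        (((h / 2 * Real.sqrt (1 + a ^ 2)) ^ 3 + (h / 2 * Real.sqrt (1 + b ^ 2)) ^ 3) /
          (h / 2 * Real.sqrt (1 + a ^ 2) * (h / 2 * Real.sqrt (1 + b ^ 2)) *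
            (h / 2 * Real.sqrt (1 + a ^ 2) + h / 2 * Real.sqrt (1 + b ^ 2)) ^ 2)) := by
  set A := Real.sqrt (1 + a ^ 2) with hAdef
  set B := Real.sqrt (1 + b ^ 2) with hBdef
  set M := Real.sqrt (1 + S ^ 2) with hMdef
  have hA2 : A ^ 2 = 1 + a ^ 2 := Real.sq_sqrt (by positivity)
  have hB2 : B ^ 2 = 1 + b ^ 2 := Real.sq_sqrt (by positivity)
  have hA1 : 1 ≤ A := by
    have := Real.sqrt_le_sqrt (show (1:ℝ) ≤ 1 + a ^ 2 by nlinarith [sq_nonneg a])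
    rwa [Real.sqrt_one] at this
  have hB1 : 1 ≤ B := by
    have := Real.sqrt_le_sqrt (show (1:ℝ) ≤ 1 + b ^ 2 by nlinarith [sq_nonneg b])
    rwa [Real.sqrt_one] at this
  have hA0 : 0 < A := by linarith
  have hB0 : 0 < B := by linarith
  have haS : a ^ 2 ≤ S ^ 2 := by nlinarith [abs_nonneg a, sq_abs a]
  have hbS : b ^ 2 ≤ S ^ 2 := by nlinarith [abs_nonneg b, sq_abs b]
  have hAM : A ≤ M := Real.sqrt_le_sqrt (by linarith)
  have hBM : B ≤ M := Real.sqrt_le_sqrt (by linarith)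
  have hM1 : 1 ≤ M := le_trans hA1 hAM
  have hM0 : 0 < M := by linarith
  set θ := Real.arccos ((1 + a * b) / (A * B)) with hθdef
  have hsin : Real.sin θ = |b - a| / (A * B) := by
    rw [hθdef, Real.sin_arccos]
    have h1 : 1 - ((1 + a * b) / (A * B)) ^ 2 = ((b - a) / (A * B)) ^ 2 := by
      rw [div_pow, div_pow, mul_pow, hA2, hB2]
      field_simp
      ring
    rw [h1, Real.sqrt_sq_eq_abs, abs_div, abs_of_pos (mul_pos hA0 hB0)]
  have hθ0 : 0 ≤ θ := Real.arccos_nonneg _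
  have hθsin : Real.sin θ ≤ θ := Real.sin_le hθ0
  have hθ2 : ((b - a) / (A * B)) ^ 2 ≤ θ ^ 2 := by
    have h1 : |b - a| / (A * B) ≤ θ := by rw [← hsin]; exact hθsin
    have h2 : ((b - a) / (A * B)) ^ 2 = (|b - a| / (A * B)) ^ 2 := by
      rw [div_pow, div_pow, sq_abs]
    rw [h2]
    exact pow_le_pow_left₀ (by positivity) h1 2
  have core : (M ^ 5)⁻¹ ≤ 2 * (A ^ 3 + B ^ 3) / (A ^ 3 * B ^ 3 * (A + B) ^ 2) := by
    have step0 : A ^ 2 * B ^ 2 * (A + B) ≤ 2 * M ^ 5 := by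
      have : A ^ 2 * B ^ 2 * (A + B) ≤ M ^ 2 * M ^ 2 * (M + M) := by gcongr
      nlinarith [this]
    have step1 : (M ^ 5)⁻¹ ≤ 2 / (A ^ 2 * B ^ 2 * (A + B)) := by
      rw [inv_eq_one_div, div_le_div_iff₀ (by positivity) (by positivity)]
      nlinarith [step0]
    have step2 : 2 / (A ^ 2 * B ^ 2 * (A + B)) ≤
        2 * (A ^ 3 + B ^ 3) / (A ^ 3 * B ^ 3 * (A + B) ^ 2) := by
      rw [div_le_div_iff₀ (by positivity) (by positivity)]
      nlinarith [mul_nonneg (mul_nonneg (mul_nonneg (sq_nonneg A) (sq_nonneg B))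
        (sq_nonneg (A+B))) (sq_nonneg (A-B))]
    linarith
  have hXeq : ((h / 2 * A) ^ 3 + (h / 2 * B) ^ 3) /
      (h / 2 * A * (h / 2 * B) * (h / 2 * A + h / 2 * B) ^ 2) =
      2 * (A ^ 3 + B ^ 3) / (h * (A ^ 3 * B ^ 3 * (A + B) ^ 2)) * (A ^ 2 * B ^ 2) := by
    field_simp
  calc (M ^ 5)⁻¹ * (((b - a) / h) ^ 2 * h)
      = ((b - a) ^ 2 / h) * (M ^ 5)⁻¹ := by field_simp
    _ ≤ ((b - a) ^ 2 / h) * (2 * (A ^ 3 + B ^ 3) / (A ^ 3 * B ^ 3 * (A + B) ^ 2)) := by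
        apply mul_le_mul_of_nonneg_left core (by positivity)
    _ = ((b - a) / (A * B)) ^ 2 *
          (2 * (A ^ 3 + B ^ 3) / (h * (A ^ 3 * B ^ 3 * (A + B) ^ 2)) * (A ^ 2 * B ^ 2)) := by
        field_simp
    _ ≤ θ ^ 2 *
          (2 * (A ^ 3 + B ^ 3) / (h * (A ^ 3 * B ^ 3 * (A + B) ^ 2)) * (A ^ 2 * B ^ 2)) := by
        apply mul_le_mul_of_nonneg_right hθ2 (by positivity)
    _ = _ := by rw [hXeq]


/-- Discrete coercivity of the bending energy under a slope bound. -/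
theorem stmt11 (N : ℕ) (hN : 1 ≤ N) (v : ℤ → ℝ) (hper : ∀ j, v (j + N) = v j)
    (S : ℝ) (hS : 0 < S) (hd : ∀ j, |dq N v j| ≤ S) :
    (1 + S ^ 2) ^ (-(5 : ℝ) / 2) *
        ∑ j ∈ Finset.Icc (1 : ℤ) (N : ℤ), Dq N v j ^ 2 * ((1 : ℝ) / N) ≤
      ∑ j ∈ Finset.Icc (1 : ℤ) (N : ℤ),
        θq N v j ^ 2 * ((lq N v j ^ 3 + lq N v (j + 1) ^ 3) /
          (lq N v j * lq N v (j + 1) * (lq N v j + lq N v (j + 1)) ^ 2)) := by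
  have hNpos : (0:ℝ) < N := by exact_mod_cast Nat.lt_of_lt_of_le Nat.zero_lt_one hN
  have hh : (0:ℝ) < 1 / N := by positivity
  have hrpow : (1 + S ^ 2) ^ (-(5 : ℝ) / 2) = (Real.sqrt (1 + S ^ 2) ^ 5)⁻¹ := by
    rw [Real.sqrt_eq_rpow, ← Real.rpow_natCast ((1 + S ^ 2) ^ ((1:ℝ)/2)) 5,
      ← Real.rpow_mul (by positivity), ← Real.rpow_neg_one,
      ← Real.rpow_mul (by positivity)]
    norm_num
  rw [hrpow, Finset.mul_sum]
  apply Finset.sum_le_sum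
  intro j _
  have hDq : Dq N v j = (dq N v (j + 1) - dq N v j) / (1 / N) := by
    unfold Dq dq
    rw [show j + 1 - 1 = j by ring]
    field_simp
    ring
  rw [hDq]
  simp only [θq, lq]
  exact keylem (1 / N) (dq N v j) (dq N v (j + 1)) S hh (hd j) (hd (j + 1))

end
end
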